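/- arXiv:2307.14297 — 12 statements merged into one kernel-verified Lean document; each statement's English description precedes it below -/
import Mathlib

section
/- Let A ∈ ℝ^{n×n}, B_u ∈ ℝ^{n×m}, S ∈ ℝ^{n×m}, let R ∈ ℝ^{m×m} be symmetric positive definite, and let X ∈ ℝ^{n×n} be symmetric positive semidefinite with H := R + B_uᵀXB_u invertible. Define K_x := H⁻¹(AᵀXB_u + S)ᵀ. Then I + B_uR⁻¹B_uᵀX is invertible and A − B_uK_x = (I + B_uR⁻¹B_uᵀX)⁻¹(A − B_uR⁻¹Sᵀ). Consequently, if A − B_uR⁻¹Sᵀ is nonsingular then A − B_uK_x is nonsingular. -/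
open Matrix

noncomputable section

/-- The closed-loop matrix `A − Bu Kx` factors as
`(I + Bu R⁻¹ Buᵀ X)⁻¹ (A − Bu R⁻¹ Sᵀ)`, hence is nonsingular whenever
`A − Bu R⁻¹ Sᵀ` is. -/
theorem closed_loop_factorization
    (n m : ℕ)
    (A : Matrix (Fin n) (Fin n) ℝ) (Bu : Matrix (Fin n) (Fin m) ℝ)
    (S : Matrix (Fin n) (Fin m) ℝ) (R : Matrix (Fin m) (Fin m) ℝ)
    (hR : R.PosDef)
    (X : Matrix (Fin n) (Fin n) ℝ) (hX : X.PosSemidef)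
    (H : Matrix (Fin m) (Fin m) ℝ) (hH : H = R + Buᵀ * X * Bu) (hHinv : IsUnit H)
    (Kx : Matrix (Fin m) (Fin n) ℝ) (hKx : Kx = H⁻¹ * (Aᵀ * X * Bu + S)ᵀ) :
    IsUnit ((1 : Matrix (Fin n) (Fin n) ℝ) + Bu * R⁻¹ * Buᵀ * X) ∧
    A - Bu * Kx =
      ((1 : Matrix (Fin n) (Fin n) ℝ) + Bu * R⁻¹ * Buᵀ * X)⁻¹ * (A - Bu * R⁻¹ * Sᵀ) ∧
    (IsUnit (A - Bu * R⁻¹ * Sᵀ) → IsUnit (A - Bu * Kx)) := by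
  -- basic facts
  have hXsym : Xᵀ = X := by
    have := hX.1
    simpa [Matrix.IsHermitian, Matrix.conjTranspose_eq_transpose_of_trivial] using this
  have hRu : IsUnit R := by
    have : R.det ≠ 0 := ne_of_gt hR.det_pos
    exact (Matrix.isUnit_iff_isUnit_det R).mpr (isUnit_iff_ne_zero.mpr this)
  have hRi : R⁻¹ * R = 1 := Matrix.nonsing_inv_mul R ((Matrix.isUnit_iff_isUnit_det R).mp hRu)
  have hHi : H * H⁻¹ = 1 := Matrix.mul_nonsing_inv H ((Matrix.isUnit_iff_isUnit_det H).mp hHinv)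
  have hHK : H * Kx = Buᵀ * X * A + Sᵀ := by
    rw [hKx, ← Matrix.mul_assoc, hHi, Matrix.one_mul, Matrix.transpose_add,
      Matrix.transpose_mul, Matrix.transpose_mul, Matrix.transpose_transpose, hXsym,
      Matrix.mul_assoc]
  set M : Matrix (Fin n) (Fin n) ℝ := 1 + Bu * R⁻¹ * Buᵀ * X with hM
  have key : M * (A - Bu * Kx) = A - Bu * R⁻¹ * Sᵀ := by
    have h3 : Buᵀ * X * Bu = H - R := by rw [hH, add_sub_cancel_left]
    have e1 : Bu * R⁻¹ * Buᵀ * X * (Bu * Kx)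
        = Bu * R⁻¹ * (Buᵀ * X * A) + Bu * R⁻¹ * Sᵀ - Bu * Kx := by
      have : Bu * R⁻¹ * Buᵀ * X * (Bu * Kx) = Bu * R⁻¹ * ((Buᵀ * X * Bu) * Kx) := by
        simp only [Matrix.mul_assoc]
      rw [this, h3, Matrix.sub_mul, hHK, Matrix.mul_sub, Matrix.mul_add,
        Matrix.mul_assoc Bu R⁻¹ (R * Kx), ← Matrix.mul_assoc R⁻¹ R Kx, hRi, Matrix.one_mul]
    rw [hM, Matrix.add_mul, Matrix.one_mul, Matrix.mul_sub, e1]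
    simp only [Matrix.mul_assoc]
    abel
  have hMu : IsUnit M := by
    rw [Matrix.isUnit_iff_isUnit_det]
    have hcomm : M.det = ((1 : Matrix (Fin m) (Fin m) ℝ) + (R⁻¹ * Buᵀ * X) * Bu).det := by
      rw [hM]
      have : (1 : Matrix (Fin n) (Fin n) ℝ) + Bu * R⁻¹ * Buᵀ * X
          = 1 + Bu * (R⁻¹ * Buᵀ * X) := by simp only [Matrix.mul_assoc]
      rw [this, Matrix.det_one_add_mul_comm]
    have h2 : (1 : Matrix (Fin m) (Fin m) ℝ) + (R⁻¹ * Buᵀ * X) * Bu = R⁻¹ * H := by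
      rw [hH, Matrix.mul_add, hRi]
      simp only [Matrix.mul_assoc]
    rw [hcomm, h2, Matrix.det_mul]
    exact ((Matrix.isUnit_nonsing_inv_det R ((Matrix.isUnit_iff_isUnit_det R).mp hRu)).mul
      ((Matrix.isUnit_iff_isUnit_det H).mp hHinv))
  have hfact : A - Bu * Kx = M⁻¹ * (A - Bu * R⁻¹ * Sᵀ) := by
    rw [← key, ← Matrix.mul_assoc, Matrix.nonsing_inv_mul M
      ((Matrix.isUnit_iff_isUnit_det M).mp hMu), Matrix.one_mul]
  refine ⟨hMu, hfact, fun hA => ?_⟩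
  rw [hfact]
  have hMinv : IsUnit M⁻¹ := by
    rw [Matrix.isUnit_iff_isUnit_det]
    exact Matrix.isUnit_nonsing_inv_det M ((Matrix.isUnit_iff_isUnit_det M).mp hMu)
  exact hMinv.mul hA
end
end

section
/- Let A ∈ ℝ^{n×n}, B_u ∈ ℝ^{n×m}, and symmetric Q ∈ ℝ^{n×n}, S ∈ ℝ^{n×m}, R ∈ ℝ^{m×m} be given, and let X be a symmetric matrix with H := R + B_uᵀXB_u invertible that satisfies the DARE 0 = X − AᵀXA − Q + (AᵀXB_u + S)H⁻¹(AᵀXB_u + S)ᵀ. Define K_x := H⁻¹(AᵀXB_u + S)ᵀ. Then the following block-matrix identity holds in ℝ^{(n+m)×(n+m)}: [[Q, S],[Sᵀ, R]] = [K_xᵀ; I_m] H [K_x, I_m] + [[X, 0],[0, 0]] − [Aᵀ; B_uᵀ] X [A, B_u]. -/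
open Matrix

noncomputable section

/-- Completion-of-squares block identity implied by the DARE. -/
theorem dare_block_identity
    (n m : ℕ)
    (A : Matrix (Fin n) (Fin n) ℝ) (Bu : Matrix (Fin n) (Fin m) ℝ)
    (Q : Matrix (Fin n) (Fin n) ℝ) (S : Matrix (Fin n) (Fin m) ℝ)
    (R : Matrix (Fin m) (Fin m) ℝ)
    (hQ : Q.IsSymm) (hR : R.IsSymm)
    (X : Matrix (Fin n) (Fin n) ℝ) (hX : X.IsSymm)
    (H : Matrix (Fin m) (Fin m) ℝ) (hH : H = R + Buᵀ * X * Bu) (hHinv : IsUnit H)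
    (hDARE : 0 = X - Aᵀ * X * A - Q +
      (Aᵀ * X * Bu + S) * H⁻¹ * (Aᵀ * X * Bu + S)ᵀ)
    (Kx : Matrix (Fin m) (Fin n) ℝ) (hKx : Kx = H⁻¹ * (Aᵀ * X * Bu + S)ᵀ) :
    Matrix.fromBlocks Q S Sᵀ R =
      Matrix.fromRows Kxᵀ (1 : Matrix (Fin m) (Fin m) ℝ) * H *
        Matrix.fromCols Kx (1 : Matrix (Fin m) (Fin m) ℝ) +
      Matrix.fromBlocks X 0 0 0 -
      Matrix.fromRows Aᵀ Buᵀ * X * Matrix.fromCols A Bu := by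
  have hHdet : IsUnit H.det := (Matrix.isUnit_iff_isUnit_det H).mp hHinv
  have hHH : H * H⁻¹ = 1 := Matrix.mul_nonsing_inv H hHdet
  have hHH' : H⁻¹ * H = 1 := Matrix.nonsing_inv_mul H hHdet
  have hHs : Hᵀ = H := by
    rw [hH]; simp [Matrix.transpose_add, Matrix.transpose_mul, hX.eq, hR.eq,
      Matrix.mul_assoc]
  have hHis : (H⁻¹)ᵀ = H⁻¹ := by rw [Matrix.transpose_nonsing_inv, hHs]
  have hKxT : Kxᵀ = (Aᵀ * X * Bu + S) * H⁻¹ := by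
    rw [hKx]; simp [Matrix.transpose_mul, hHis]
  rw [Matrix.fromRows_mul, Matrix.fromRows_mul_fromCols,
    Matrix.fromRows_mul, Matrix.fromRows_mul_fromCols,
    Matrix.fromBlocks_add, sub_eq_add_neg, Matrix.fromBlocks_neg,
    Matrix.fromBlocks_add, Matrix.fromBlocks_inj]
  refine ⟨?_, ?_, ?_, ?_⟩
  · -- Q block
    have := hDARE
    have hKHK : Kxᵀ * H * Kx = (Aᵀ * X * Bu + S) * H⁻¹ * (Aᵀ * X * Bu + S)ᵀ := by
      rw [hKxT, hKx]
      calc (Aᵀ * X * Bu + S) * H⁻¹ * H * (H⁻¹ * (Aᵀ * X * Bu + S)ᵀ)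
          = (Aᵀ * X * Bu + S) * (H⁻¹ * H) * H⁻¹ * (Aᵀ * X * Bu + S)ᵀ := by
            simp only [Matrix.mul_assoc]
        _ = (Aᵀ * X * Bu + S) * H⁻¹ * (Aᵀ * X * Bu + S)ᵀ := by
            rw [hHH']; simp [Matrix.mul_assoc]
    rw [hKHK]
    linear_combination (norm := abel) hDARE
  · -- S block
    have : Kxᵀ * H = Aᵀ * X * Bu + S := by
      rw [hKxT, Matrix.mul_assoc, hHH', Matrix.mul_one]
    simp only [Matrix.mul_one, add_zero, this]; abel
  · -- Sᵀ block
    have h1 : (1 : Matrix (Fin m) (Fin m) ℝ) * H * Kx = (Aᵀ * X * Bu + S)ᵀ := by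
      rw [Matrix.one_mul, hKx, ← Matrix.mul_assoc, hHH, Matrix.one_mul]
    simp only [add_zero] at *
    rw [h1]
    have h2 : Buᵀ * X * A = (Aᵀ * X * Bu)ᵀ := by
      simp [Matrix.transpose_mul, hX.eq, Matrix.mul_assoc]
    rw [h2, Matrix.transpose_add]; abel
  · -- R block
    simp only [Matrix.one_mul, Matrix.mul_one, add_zero, hH]; abel
end
end

section
/- Let A ∈ ℝ^{n×n}, B_u ∈ ℝ^{n×m}, B_d ∈ ℝ^{n×q}, symmetric Q ∈ ℝ^{n×n}, S ∈ ℝ^{n×m}, symmetric R ∈ ℝ^{m×m}, and let X be a symmetric matrix with H := R + B_uᵀXB_u invertible satisfying the DARE 0 = X − AᵀXA − Q + (AᵀXB_u + S)H⁻¹(AᵀXB_u + S)ᵀ. Define K_x := H⁻¹(AᵀXB_u + S)ᵀ, K_v := H⁻¹B_uᵀ, K_d := H⁻¹B_uᵀXB_d. Let x, x₊, v, v₊ ∈ ℝⁿ, u ∈ ℝᵐ, d ∈ ℝ^q satisfy x₊ = Ax + B_uu + B_dd and v = (A − B_uK_x)ᵀ(v₊ + XB_dd), and set u° := −K_xx −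 K_vv₊ − K_dd. Then xᵀQx + 2xᵀSu + uᵀRu = (u − u°)ᵀH(u − u°) − (K_dd + K_vv₊)ᵀH(K_dd + K_vv₊) + dᵀB_dᵀXB_dd + 2v₊ᵀB_dd + (xᵀXx − x₊ᵀXx₊) + 2(vᵀx − v₊ᵀx₊). -/
open Matrix

noncomputable section

private lemma flip_dp {k l : ℕ} (N : Matrix (Fin k) (Fin l) ℝ) (a : Fin k → ℝ) (b : Fin l → ℝ) :
    a ⬝ᵥ N *ᵥ b = b ⬝ᵥ Nᵀ *ᵥ a := by
  rw [dotProduct_mulVec, dotProduct_comm, mulVec_transpose]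

private lemma flip_dp' {k l : ℕ} {N : Matrix (Fin k) (Fin l) ℝ} {N' : Matrix (Fin l) (Fin k) ℝ}
    (h : Nᵀ = N') (a : Fin k → ℝ) (b : Fin l → ℝ) :
    a ⬝ᵥ N *ᵥ b = b ⬝ᵥ N' *ᵥ a := by
  rw [flip_dp, h]

private lemma key1 {k l p : ℕ} (E : Matrix (Fin k) (Fin l) ℝ) (G : Matrix (Fin k) (Fin p) ℝ)
    (a : Fin l → ℝ) (b : Fin p → ℝ) :
    (E *ᵥ a) ⬝ᵥ (G *ᵥ b) = a ⬝ᵥ (Eᵀ * G) *ᵥ b := by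
  rw [dotProduct_comm, flip_dp, mulVec_mulVec]

private lemma key2 {k l p r : ℕ} (E : Matrix (Fin k) (Fin l) ℝ) (N : Matrix (Fin k) (Fin p) ℝ)
    (F : Matrix (Fin p) (Fin r) ℝ) (a : Fin l → ℝ) (b : Fin r → ℝ) :
    (E *ᵥ a) ⬝ᵥ N *ᵥ (F *ᵥ b) = a ⬝ᵥ (Eᵀ * N * F) *ᵥ b := by
  rw [mulVec_mulVec, key1, Matrix.mul_assoc]

/-- Per-step completion-of-squares identity for the optimal non-causal
controller (Equation (13) of the paper). -/
theorem per_step_cost_identity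
    (n m q : ℕ)
    (A : Matrix (Fin n) (Fin n) ℝ) (Bu : Matrix (Fin n) (Fin m) ℝ)
    (Bd : Matrix (Fin n) (Fin q) ℝ)
    (Q : Matrix (Fin n) (Fin n) ℝ) (hQ : Q.IsSymm)
    (S : Matrix (Fin n) (Fin m) ℝ)
    (R : Matrix (Fin m) (Fin m) ℝ) (hR : R.IsSymm)
    (X : Matrix (Fin n) (Fin n) ℝ) (hX : X.IsSymm)
    (H : Matrix (Fin m) (Fin m) ℝ) (hH : H = R + Buᵀ * X * Bu) (hHinv : IsUnit H)
    (hDARE : 0 = X - Aᵀ * X * A - Q +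
      (Aᵀ * X * Bu + S) * H⁻¹ * (Aᵀ * X * Bu + S)ᵀ)
    (Kx : Matrix (Fin m) (Fin n) ℝ) (hKx : Kx = H⁻¹ * (Aᵀ * X * Bu + S)ᵀ)
    (Kv : Matrix (Fin m) (Fin n) ℝ) (hKv : Kv = H⁻¹ * Buᵀ)
    (Kd : Matrix (Fin m) (Fin q) ℝ) (hKd : Kd = H⁻¹ * Buᵀ * X * Bd)
    (x xp v vp : Fin n → ℝ) (u : Fin m → ℝ) (d : Fin q → ℝ)
    (hx : xp = A.mulVec x + Bu.mulVec u + Bd.mulVec d)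
    (hv : v = ((A - Bu * Kx)ᵀ).mulVec (vp + X.mulVec (Bd.mulVec d)))
    (uo : Fin m → ℝ)
    (huo : uo = -(Kx.mulVec x) - Kv.mulVec vp - Kd.mulVec d) :
    x ⬝ᵥ Q.mulVec x + 2 * (x ⬝ᵥ S.mulVec u) + u ⬝ᵥ R.mulVec u =
      (u - uo) ⬝ᵥ H.mulVec (u - uo)
      - (Kd.mulVec d + Kv.mulVec vp) ⬝ᵥ H.mulVec (Kd.mulVec d + Kv.mulVec vp)
      + d ⬝ᵥ (Bdᵀ * X * Bd).mulVec d
      + 2 * (vp ⬝ᵥ Bd.mulVec d)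
      + (x ⬝ᵥ X.mulVec x - xp ⬝ᵥ X.mulVec xp)
      + 2 * (v ⬝ᵥ x - vp ⬝ᵥ xp) := by
  -- basic facts about H
  have hdet : IsUnit H.det := (Matrix.isUnit_iff_isUnit_det H).mp hHinv
  have hHi : H * H⁻¹ = 1 := Matrix.mul_nonsing_inv H hdet
  have hHs : Hᵀ = H := by
    rw [hH]
    simp [Matrix.transpose_add, Matrix.transpose_mul, hR.eq, hX.eq, Matrix.mul_assoc]
  have hHis : H⁻¹ᵀ = H⁻¹ := by rw [Matrix.transpose_nonsing_inv, hHs]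
  have hHKx : H * Kx = (Aᵀ * X * Bu + S)ᵀ := by
    rw [hKx, ← Matrix.mul_assoc, hHi, Matrix.one_mul]
  have hHKv : H * Kv = Buᵀ := by
    rw [hKv, ← Matrix.mul_assoc, hHi, Matrix.one_mul]
  have hHKd : H * Kd = Buᵀ * X * Bd := by
    rw [hKd]
    simp only [← Matrix.mul_assoc]
    rw [hHi, Matrix.one_mul]
  have hKxtH : Kxᵀ * H = Aᵀ * X * Bu + S := by
    rw [← hHs, ← Matrix.transpose_mul, hHKx, Matrix.transpose_transpose]
  have hQeq : Q = X - Aᵀ * X * A + (Aᵀ * X * Bu + S) * H⁻¹ * (Aᵀ * X * Bu + S)ᵀ := by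
    calc Q = Q + (X - Aᵀ * X * A - Q + (Aᵀ * X * Bu + S) * H⁻¹ * (Aᵀ * X * Bu + S)ᵀ) := by
          rw [← hDARE, add_zero]
      _ = _ := by abel
  -- completion of squares
  have hu0 : u - uo = (u + Kx *ᵥ x) + (Kv *ᵥ vp + Kd *ᵥ d) := by
    rw [huo]; abel
  have hsymm : ∀ a b : Fin m → ℝ, a ⬝ᵥ H *ᵥ b = b ⬝ᵥ H *ᵥ a := fun a b => by
    rw [flip_dp, hHs]
  have hquad0 : ∀ p r : Fin m → ℝ, (p + r) ⬝ᵥ H *ᵥ (p + r) - r ⬝ᵥ H *ᵥ r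
      = p ⬝ᵥ H *ᵥ p + 2 * (p ⬝ᵥ H *ᵥ r) := by
    intro p r
    rw [mulVec_add, dotProduct_add, add_dotProduct, add_dotProduct, hsymm r p]
    ring
  have hquad : (u - uo) ⬝ᵥ H *ᵥ (u - uo)
      - (Kd *ᵥ d + Kv *ᵥ vp) ⬝ᵥ H *ᵥ (Kd *ᵥ d + Kv *ᵥ vp)
      = (u + Kx *ᵥ x) ⬝ᵥ H *ᵥ (u + Kx *ᵥ x)
        + 2 * ((u + Kx *ᵥ x) ⬝ᵥ H *ᵥ (Kv *ᵥ vp + Kd *ᵥ d)) := by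
    rw [hu0, add_comm (Kd *ᵥ d) (Kv *ᵥ vp)]
    exact hquad0 _ _
  have hHa : H *ᵥ (u + Kx *ᵥ x) = H *ᵥ u + (Aᵀ * X * Bu + S)ᵀ *ᵥ x := by
    rw [mulVec_add, mulVec_mulVec, hHKx]
  have hHb : H *ᵥ (Kv *ᵥ vp + Kd *ᵥ d) = Buᵀ *ᵥ vp + (Buᵀ * X * Bd) *ᵥ d := by
    rw [mulVec_add, mulVec_mulVec, mulVec_mulVec, hHKv, hHKd]
  -- pieces of a ⬝ᵥ H a
  have c1 : u ⬝ᵥ H *ᵥ u = u ⬝ᵥ R *ᵥ u + u ⬝ᵥ (Buᵀ * X * Bu) *ᵥ u := by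
    rw [hH, Matrix.add_mulVec, dotProduct_add]
  have c2 : (Kx *ᵥ x) ⬝ᵥ (H *ᵥ u) = x ⬝ᵥ (Aᵀ * X * Bu) *ᵥ u + x ⬝ᵥ S *ᵥ u := by
    rw [key1, hKxtH, Matrix.add_mulVec, dotProduct_add]
  have c3 : u ⬝ᵥ (Aᵀ * X * Bu + S)ᵀ *ᵥ x = x ⬝ᵥ (Aᵀ * X * Bu) *ᵥ u + x ⬝ᵥ S *ᵥ u := by
    rw [flip_dp, Matrix.transpose_transpose, Matrix.add_mulVec, dotProduct_add]
  have c4 : (Kx *ᵥ x) ⬝ᵥ ((Aᵀ * X * Bu + S)ᵀ *ᵥ x)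
      = x ⬝ᵥ ((Aᵀ * X * Bu + S) * H⁻¹ * (Aᵀ * X * Bu + S)ᵀ) *ᵥ x := by
    rw [key1]
    congr 1
    rw [hKx, Matrix.transpose_mul, Matrix.transpose_transpose, hHis, Matrix.mul_assoc]
  have h_aHa : (u + Kx *ᵥ x) ⬝ᵥ H *ᵥ (u + Kx *ᵥ x) = u ⬝ᵥ R *ᵥ u + u ⬝ᵥ (Buᵀ * X * Bu) *ᵥ u
      + 2 * (x ⬝ᵥ (Aᵀ * X * Bu) *ᵥ u) + 2 * (x ⬝ᵥ S *ᵥ u)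
      + x ⬝ᵥ ((Aᵀ * X * Bu + S) * H⁻¹ * (Aᵀ * X * Bu + S)ᵀ) *ᵥ x := by
    calc (u + Kx *ᵥ x) ⬝ᵥ H *ᵥ (u + Kx *ᵥ x)
        = (u + Kx *ᵥ x) ⬝ᵥ (H *ᵥ u + (Aᵀ * X * Bu + S)ᵀ *ᵥ x) := by rw [hHa]
      _ = _ := by
          rw [dotProduct_add, add_dotProduct, add_dotProduct, c1, c2, c3, c4]; ring
  -- pieces of a ⬝ᵥ H b
  have d1 : u ⬝ᵥ Buᵀ *ᵥ vp = vp ⬝ᵥ Bu *ᵥ u :=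
    flip_dp' (Matrix.transpose_transpose Bu) u vp
  have d2 : u ⬝ᵥ (Buᵀ * X * Bd) *ᵥ d = d ⬝ᵥ (Bdᵀ * X * Bu) *ᵥ u := by
    refine flip_dp' ?_ u d
    simp [Matrix.transpose_mul, hX.eq, Matrix.mul_assoc]
  have d3 : (Kx *ᵥ x) ⬝ᵥ (Buᵀ *ᵥ vp) = vp ⬝ᵥ (Bu * Kx) *ᵥ x := by
    rw [dotProduct_comm, key1, Matrix.transpose_transpose]
  have d4 : (Kx *ᵥ x) ⬝ᵥ ((Buᵀ * X * Bd) *ᵥ d) = d ⬝ᵥ (Bdᵀ * X * Bu * Kx) *ᵥ x := by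
    rw [dotProduct_comm, key1]
    congr 1
    simp [Matrix.transpose_mul, hX.eq, Matrix.mul_assoc]
  have h_aHb : (u + Kx *ᵥ x) ⬝ᵥ H *ᵥ (Kv *ᵥ vp + Kd *ᵥ d) = vp ⬝ᵥ Bu *ᵥ u + d ⬝ᵥ (Bdᵀ * X * Bu) *ᵥ u
      + vp ⬝ᵥ (Bu * Kx) *ᵥ x + d ⬝ᵥ (Bdᵀ * X * Bu * Kx) *ᵥ x := by
    calc (u + Kx *ᵥ x) ⬝ᵥ H *ᵥ (Kv *ᵥ vp + Kd *ᵥ d)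
        = (u + Kx *ᵥ x) ⬝ᵥ (Buᵀ *ᵥ vp + (Buᵀ * X * Bd) *ᵥ d) := by rw [hHb]
      _ = _ := by
          rw [dotProduct_add, add_dotProduct, add_dotProduct, d1, d2, d3, d4]; ring
  -- bridges for transposed atoms
  have b1 : u ⬝ᵥ (Buᵀ * X * A) *ᵥ x = x ⬝ᵥ (Aᵀ * X * Bu) *ᵥ u := by
    refine flip_dp' ?_ u x
    simp [Matrix.transpose_mul, hX.eq, Matrix.mul_assoc]
  have b2 : d ⬝ᵥ (Bdᵀ * X * A) *ᵥ x = x ⬝ᵥ (Aᵀ * X * Bd) *ᵥ d := by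
    refine flip_dp' ?_ d x
    simp [Matrix.transpose_mul, hX.eq, Matrix.mul_assoc]
  -- expansion of xp ⬝ᵥ X xp
  have h_xp : xp ⬝ᵥ X *ᵥ xp = x ⬝ᵥ (Aᵀ * X * A) *ᵥ x + u ⬝ᵥ (Buᵀ * X * Bu) *ᵥ u
      + d ⬝ᵥ (Bdᵀ * X * Bd) *ᵥ d + 2 * (x ⬝ᵥ (Aᵀ * X * Bu) *ᵥ u)
      + 2 * (x ⬝ᵥ (Aᵀ * X * Bd) *ᵥ d) + 2 * (d ⬝ᵥ (Bdᵀ * X * Bu) *ᵥ u) := by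
    rw [hx]
    simp only [mulVec_add, dotProduct_add, add_dotProduct, key2]
    rw [b1, b2, d2]
    ring
  -- expansion of v ⬝ᵥ x
  have h_vx : v ⬝ᵥ x = vp ⬝ᵥ A *ᵥ x - vp ⬝ᵥ (Bu * Kx) *ᵥ x
      + x ⬝ᵥ (Aᵀ * X * Bd) *ᵥ d - d ⬝ᵥ (Bdᵀ * X * Bu * Kx) *ᵥ x := by
    rw [hv, dotProduct_comm, flip_dp, Matrix.transpose_transpose]
    rw [Matrix.sub_mulVec, add_dotProduct, dotProduct_sub, dotProduct_sub]
    rw [mulVec_mulVec]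
    rw [key1 (X * Bd) A d x, key1 (X * Bd) (Bu * Kx) d x]
    rw [show (X * Bd)ᵀ * A = Bdᵀ * X * A by
      simp [Matrix.transpose_mul, hX.eq, Matrix.mul_assoc]]
    rw [show (X * Bd)ᵀ * (Bu * Kx) = Bdᵀ * X * Bu * Kx by
      simp [Matrix.transpose_mul, hX.eq, Matrix.mul_assoc]]
    rw [b2]
    ring
  have h_vpxp : vp ⬝ᵥ xp = vp ⬝ᵥ A *ᵥ x + vp ⬝ᵥ Bu *ᵥ u + vp ⬝ᵥ Bd *ᵥ d := by
    rw [hx, dotProduct_add, dotProduct_add]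
  have hQx : x ⬝ᵥ Q *ᵥ x = x ⬝ᵥ X *ᵥ x - x ⬝ᵥ (Aᵀ * X * A) *ᵥ x
      + x ⬝ᵥ ((Aᵀ * X * Bu + S) * H⁻¹ * (Aᵀ * X * Bu + S)ᵀ) *ᵥ x := by
    rw [hQeq, Matrix.add_mulVec, Matrix.sub_mulVec, dotProduct_add, dotProduct_sub]
  linarith [hquad, h_aHa, h_aHb, h_xp, h_vx, h_vpxp, hQx]
end
end

section
/- Let A ∈ ℝ^{n×n}, B_u ∈ ℝ^{n×m}, B_d ∈ ℝ^{n×q}, symmetric Q ∈ ℝ^{n×n}, S ∈ ℝ^{n×m}, symmetric R ∈ ℝ^{m×m}, and let X be a symmetric matrix with H := R + B_uᵀXB_u invertible satisfying the DARE 0 = X − AᵀXA − Q + (AᵀXB_u + S)H⁻¹(AᵀXB_u + S)ᵀ. Define K_x := H⁻¹(AᵀXB_u + S)ᵀ, K_v := H⁻¹B_uᵀ, K_d := H⁻¹B_uᵀXB_d. Let x : ℤ → ℝⁿ, u : ℤ → ℝᵐ, d : ℤ → ℝ^q, v : ℤ → ℝⁿ be square-summable sequences (i.e. the sums over t ∈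 ℤ of ‖x_t‖², ‖u_t‖², ‖d_t‖², ‖v_t‖² are finite) satisfying x_{t+1} = Ax_t + B_uu_t + B_dd_t and v_t = (A − B_uK_x)ᵀ(v_{t+1} + XB_dd_t) for all t ∈ ℤ. Set u°_t := −K_xx_t − K_vv_{t+1} − K_dd_t. Then the families t ↦ x_tᵀQx_t + 2x_tᵀSu_t + u_tᵀRu_t and t ↦ (u_t − u°_t)ᵀH(u_t − u°_t) − (K_dd_t + K_vv_{t+1})ᵀH(K_dd_t + K_vv_{t+1}) + d_tᵀB_dᵀXB_dd_t + 2v_{t+1}ᵀB_dd_t are summable over ℤ with equal sums. -/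
open Matrix

noncomputable section


lemma summable_comp_sq {ι : Type*} {k : ℕ} (f : ι → Fin k → ℝ)
    (hf : Summable fun t => f t ⬝ᵥ f t) (i : Fin k) :
    Summable fun t => f t i * f t i := by
  refine hf.of_nonneg_of_le (fun t => mul_self_nonneg _) (fun t => ?_)
  simpa [dotProduct] using
    Finset.single_le_sum (f := fun j => f t j * f t j)
      (fun j _ => mul_self_nonneg _) (Finset.mem_univ i)

lemma summable_bilin {ι : Type*} {k l : ℕ} (M : Matrix (Fin k) (Fin l) ℝ)
    (f : ι → Fin k → ℝ) (g : ι → Fin l → ℝ)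
    (hf : Summable fun t => f t ⬝ᵥ f t) (hg : Summable fun t => g t ⬝ᵥ g t) :
    Summable fun t => f t ⬝ᵥ M *ᵥ g t := by
  have key : ∀ (i : Fin k) (j : Fin l), Summable fun t => f t i * g t j := by
    intro i j
    have h1 := summable_comp_sq f hf i
    have h2 := summable_comp_sq g hg j
    refine Summable.of_abs ((h1.add h2).of_nonneg_of_le (fun t => abs_nonneg _) (fun t => ?_))
    nlinarith [sq_nonneg (|f t i| - |g t j|), abs_mul (f t i) (g t j),
      abs_mul_abs_self (f t i), abs_mul_abs_self (g t j), abs_nonneg (f t i), abs_nonneg (g t j)]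
  have hrw : (fun t => f t ⬝ᵥ M *ᵥ g t) = fun t => ∑ i, ∑ j, M i j * (f t i * g t j) := by
    funext t
    simp only [dotProduct, mulVec, Finset.mul_sum]
    exact Finset.sum_congr rfl fun i _ => Finset.sum_congr rfl fun j _ => by ring
  rw [hrw]
  exact summable_sum fun i _ => summable_sum fun j _ => (key i j).mul_left _


lemma dpFlip {k l : ℕ} (M : Matrix (Fin k) (Fin l) ℝ) (p : Fin l → ℝ) (r : Fin k → ℝ) :
    (M *ᵥ p) ⬝ᵥ r = p ⬝ᵥ Mᵀ *ᵥ r := by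
  rw [dotProduct_mulVec, vecMul_transpose, dotProduct_comm]

lemma core {n m q : ℕ}
    (A : Matrix (Fin n) (Fin n) ℝ) (Bu : Matrix (Fin n) (Fin m) ℝ)
    (Bd : Matrix (Fin n) (Fin q) ℝ)
    (Q : Matrix (Fin n) (Fin n) ℝ) (hQ : Q.IsSymm)
    (S : Matrix (Fin n) (Fin m) ℝ)
    (R : Matrix (Fin m) (Fin m) ℝ) (hR : R.IsSymm)
    (X : Matrix (Fin n) (Fin n) ℝ) (hX : X.IsSymm)
    (H : Matrix (Fin m) (Fin m) ℝ) (hH : H = R + Buᵀ * X * Bu) (hHinv : IsUnit H)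
    (hDARE : 0 = X - Aᵀ * X * A - Q +
      (Aᵀ * X * Bu + S) * H⁻¹ * (Aᵀ * X * Bu + S)ᵀ)
    (Kx : Matrix (Fin m) (Fin n) ℝ) (hKx : Kx = H⁻¹ * (Aᵀ * X * Bu + S)ᵀ)
    (Kv : Matrix (Fin m) (Fin n) ℝ) (hKv : Kv = H⁻¹ * Buᵀ)
    (Kd : Matrix (Fin m) (Fin q) ℝ) (hKd : Kd = H⁻¹ * Buᵀ * X * Bd)
    (a : Fin n → ℝ) (b : Fin m → ℝ) (c : Fin q → ℝ) (w : Fin n → ℝ) :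
    a ⬝ᵥ Q *ᵥ a + 2 * (a ⬝ᵥ S *ᵥ b) + b ⬝ᵥ R *ᵥ b
    = (b + (Kx *ᵥ a + Kv *ᵥ w + Kd *ᵥ c)) ⬝ᵥ H *ᵥ (b + (Kx *ᵥ a + Kv *ᵥ w + Kd *ᵥ c))
      - (Kd *ᵥ c + Kv *ᵥ w) ⬝ᵥ H *ᵥ (Kd *ᵥ c + Kv *ᵥ w)
      + c ⬝ᵥ (Bdᵀ * X * Bd) *ᵥ c + 2 * (w ⬝ᵥ Bd *ᵥ c)
      + (a ⬝ᵥ X *ᵥ a + 2 * ((((A - Bu * Kx)ᵀ) *ᵥ (w + X *ᵥ (Bd *ᵥ c))) ⬝ᵥ a))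
      - ((A *ᵥ a + Bu *ᵥ b + Bd *ᵥ c) ⬝ᵥ X *ᵥ (A *ᵥ a + Bu *ᵥ b + Bd *ᵥ c)
         + 2 * (w ⬝ᵥ (A *ᵥ a + Bu *ᵥ b + Bd *ᵥ c))) := by
  have hdet : IsUnit H.det := (isUnit_iff_isUnit_det H).mp hHinv
  have hHHi : H * H⁻¹ = 1 := mul_nonsing_inv H hdet
  have hHiH : H⁻¹ * H = 1 := nonsing_inv_mul H hdet
  have hHs : Hᵀ = H := by
    rw [hH]; simp [transpose_add, transpose_mul, hR.eq, hX.eq, Matrix.mul_assoc]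
  have hHis : H⁻¹ᵀ = H⁻¹ := by rw [transpose_nonsing_inv, hHs]
  subst hKx hKv hKd
  simp only [transpose_sub, transpose_mul, transpose_transpose, hHis, hX.eq,
    sub_mulVec, add_mulVec, mulVec_add, mulVec_mulVec, add_dotProduct, sub_dotProduct,
    dotProduct_add, dotProduct_sub, dpFlip, transpose_add]
  have c2 : ∀ (k:ℕ) (Z : Matrix (Fin m) (Fin k) ℝ), H⁻¹ * (H * Z) = Z := by
    intro k Z; rw [← Matrix.mul_assoc, hHiH, Matrix.one_mul]
  have c1 : ∀ (k:ℕ) (Z : Matrix (Fin m) (Fin k) ℝ), H * (H⁻¹ * Z) = Z := by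
    intro k Z; rw [← Matrix.mul_assoc, hHHi, Matrix.one_mul]
  simp only [Matrix.mul_assoc, c1, c2, hHiH, hHHi, Matrix.mul_one, Matrix.one_mul,
    Matrix.add_mul, Matrix.mul_add, Matrix.sub_mul, Matrix.mul_sub, sub_mulVec, mulVec_sub,
    dotProduct_sub, sub_dotProduct, add_mulVec, mulVec_add, dotProduct_add, add_dotProduct]
  have flip2' : ∀ {k l : ℕ} (M : Matrix (Fin k) (Fin l) ℝ) (p : Fin l → ℝ) (r : Fin k → ℝ),
      r ⬝ᵥ M *ᵥ p = p ⬝ᵥ Mᵀ *ᵥ r := by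
    intro k l M p r
    rw [← dpFlip, dotProduct_comm]
  have F1 : b ⬝ᵥ (Buᵀ * (X * A)) *ᵥ a = a ⬝ᵥ (Aᵀ * (X * Bu)) *ᵥ b := by
    rw [flip2']; simp only [transpose_mul, transpose_transpose, hX.eq, hHis, Matrix.mul_assoc]
  have F2 : b ⬝ᵥ Sᵀ *ᵥ a = a ⬝ᵥ S *ᵥ b := by
    rw [flip2']; simp only [transpose_transpose]
  have F3 : w ⬝ᵥ Bu *ᵥ b = b ⬝ᵥ Buᵀ *ᵥ w := by
    rw [flip2']
  have F4 : c ⬝ᵥ (Bdᵀ * (X * Bu)) *ᵥ b = b ⬝ᵥ (Buᵀ * (X * Bd)) *ᵥ c := by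
    rw [flip2']; simp only [transpose_mul, transpose_transpose, hX.eq, hHis, Matrix.mul_assoc]
  have F5 : w ⬝ᵥ (Bu * (H⁻¹ * (Buᵀ * (X * A)))) *ᵥ a
      = a ⬝ᵥ (Aᵀ * (X * (Bu * (H⁻¹ * Buᵀ)))) *ᵥ w := by
    rw [flip2']; simp only [transpose_mul, transpose_transpose, hX.eq, hHis, Matrix.mul_assoc]
  have F6 : w ⬝ᵥ (Bu * (H⁻¹ * Sᵀ)) *ᵥ a = a ⬝ᵥ (S * (H⁻¹ * Buᵀ)) *ᵥ w := by
    rw [flip2']; simp only [transpose_mul, transpose_transpose, hX.eq, hHis, Matrix.mul_assoc]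
  have F7 : c ⬝ᵥ (Bdᵀ * (X * (Bu * (H⁻¹ * (Buᵀ * (X * A)))))) *ᵥ a
      = a ⬝ᵥ (Aᵀ * (X * (Bu * (H⁻¹ * (Buᵀ * (X * Bd)))))) *ᵥ c := by
    rw [flip2']; simp only [transpose_mul, transpose_transpose, hX.eq, hHis, Matrix.mul_assoc]
  have F8 : c ⬝ᵥ (Bdᵀ * (X * (Bu * (H⁻¹ * Sᵀ)))) *ᵥ a
      = a ⬝ᵥ (S * (H⁻¹ * (Buᵀ * (X * Bd)))) *ᵥ c := by
    rw [flip2']; simp only [transpose_mul, transpose_transpose, hX.eq, hHis, Matrix.mul_assoc]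
  have F9 : w ⬝ᵥ (Bu * (H⁻¹ * (Buᵀ * (X * Bd)))) *ᵥ c
      = c ⬝ᵥ (Bdᵀ * (X * (Bu * (H⁻¹ * Buᵀ)))) *ᵥ w := by
    rw [flip2']; simp only [transpose_mul, transpose_transpose, hX.eq, hHis, Matrix.mul_assoc]
  have F10 : c ⬝ᵥ (Bdᵀ * (X * A)) *ᵥ a = a ⬝ᵥ (Aᵀ * (X * Bd)) *ᵥ c := by
    rw [flip2']; simp only [transpose_mul, transpose_transpose, hX.eq, hHis, Matrix.mul_assoc]
  have HB : b ⬝ᵥ H *ᵥ b = b ⬝ᵥ R *ᵥ b + b ⬝ᵥ (Buᵀ * (X * Bu)) *ᵥ b := by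
    rw [hH]; simp only [add_mulVec, dotProduct_add, Matrix.mul_assoc]
  have hM : (Aᵀ * X * Bu + S) * H⁻¹ * (Aᵀ * X * Bu + S)ᵀ = Aᵀ * X * A + Q - X := by
    have h : X - Aᵀ * X * A - Q + (Aᵀ * X * Bu + S) * H⁻¹ * (Aᵀ * X * Bu + S)ᵀ = 0 :=
      hDARE.symm
    have h2 := eq_neg_of_add_eq_zero_right h
    rw [h2]; abel
  have hm2 : Aᵀ * (X * (Bu * (H⁻¹ * (Buᵀ * (X * A))))) + S * (H⁻¹ * (Buᵀ * (X * A)))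
      + (Aᵀ * (X * (Bu * (H⁻¹ * Sᵀ))) + S * (H⁻¹ * Sᵀ)) = Aᵀ * (X * A) + Q - X := by
    have h := hM
    simp only [transpose_add, transpose_mul, transpose_transpose, hX.eq,
      Matrix.add_mul, Matrix.mul_add, Matrix.mul_assoc] at h
    abel_nf at h ⊢
    exact h
  have DA := congrArg (fun M => a ⬝ᵥ M *ᵥ a) hm2
  simp only [add_mulVec, sub_mulVec, dotProduct_add, dotProduct_sub] at DA
  linarith [F1, F2, F3, F4, F5, F6, F7, F8, F9, F10, HB, DA]

set_option maxHeartbeats 1600000 in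
/-- Summed completion-of-squares identity over two-sided square-summable
trajectories (the telescoping terms vanish). -/
theorem summed_cost_identity
    (n m q : ℕ)
    (A : Matrix (Fin n) (Fin n) ℝ) (Bu : Matrix (Fin n) (Fin m) ℝ)
    (Bd : Matrix (Fin n) (Fin q) ℝ)
    (Q : Matrix (Fin n) (Fin n) ℝ) (hQ : Q.IsSymm)
    (S : Matrix (Fin n) (Fin m) ℝ)
    (R : Matrix (Fin m) (Fin m) ℝ) (hR : R.IsSymm)
    (X : Matrix (Fin n) (Fin n) ℝ) (hX : X.IsSymm)
    (H : Matrix (Fin m) (Fin m) ℝ) (hH : H = R + Buᵀ * X * Bu) (hHinv : IsUnit H)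
    (hDARE : 0 = X - Aᵀ * X * A - Q +
      (Aᵀ * X * Bu + S) * H⁻¹ * (Aᵀ * X * Bu + S)ᵀ)
    (Kx : Matrix (Fin m) (Fin n) ℝ) (hKx : Kx = H⁻¹ * (Aᵀ * X * Bu + S)ᵀ)
    (Kv : Matrix (Fin m) (Fin n) ℝ) (hKv : Kv = H⁻¹ * Buᵀ)
    (Kd : Matrix (Fin m) (Fin q) ℝ) (hKd : Kd = H⁻¹ * Buᵀ * X * Bd)
    (x : ℤ → Fin n → ℝ) (u : ℤ → Fin m → ℝ) (d : ℤ → Fin q → ℝ) (v : ℤ → Fin n → ℝ)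
    (hxsq : Summable fun t : ℤ => x t ⬝ᵥ x t)
    (husq : Summable fun t : ℤ => u t ⬝ᵥ u t)
    (hdsq : Summable fun t : ℤ => d t ⬝ᵥ d t)
    (hvsq : Summable fun t : ℤ => v t ⬝ᵥ v t)
    (hxdyn : ∀ t : ℤ, x (t + 1) = A.mulVec (x t) + Bu.mulVec (u t) + Bd.mulVec (d t))
    (hvdyn : ∀ t : ℤ, v t = ((A - Bu * Kx)ᵀ).mulVec (v (t + 1) + X.mulVec (Bd.mulVec (d t))))
    (uo : ℤ → Fin m → ℝ)
    (huo : ∀ t : ℤ, uo t = -(Kx.mulVec (x t)) - Kv.mulVec (v (t + 1)) - Kd.mulVec (d t)) :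
    Summable (fun t : ℤ =>
      x t ⬝ᵥ Q.mulVec (x t) + 2 * (x t ⬝ᵥ S.mulVec (u t)) + u t ⬝ᵥ R.mulVec (u t)) ∧
    Summable (fun t : ℤ =>
      (u t - uo t) ⬝ᵥ H.mulVec (u t - uo t)
      - (Kd.mulVec (d t) + Kv.mulVec (v (t + 1))) ⬝ᵥ
          H.mulVec (Kd.mulVec (d t) + Kv.mulVec (v (t + 1)))
      + d t ⬝ᵥ (Bdᵀ * X * Bd).mulVec (d t)
      + 2 * (v (t + 1) ⬝ᵥ Bd.mulVec (d t))) ∧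
    (∑' t : ℤ,
      (x t ⬝ᵥ Q.mulVec (x t) + 2 * (x t ⬝ᵥ S.mulVec (u t)) + u t ⬝ᵥ R.mulVec (u t))) =
    (∑' t : ℤ,
      ((u t - uo t) ⬝ᵥ H.mulVec (u t - uo t)
      - (Kd.mulVec (d t) + Kv.mulVec (v (t + 1))) ⬝ᵥ
          H.mulVec (Kd.mulVec (d t) + Kv.mulVec (v (t + 1)))
      + d t ⬝ᵥ (Bdᵀ * X * Bd).mulVec (d t)
      + 2 * (v (t + 1) ⬝ᵥ Bd.mulVec (d t)))) := by
  classical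
  set L : ℤ → ℝ := fun t =>
    x t ⬝ᵥ Q.mulVec (x t) + 2 * (x t ⬝ᵥ S.mulVec (u t)) + u t ⬝ᵥ R.mulVec (u t) with hL
  set Rr : ℤ → ℝ := fun t =>
    (u t - uo t) ⬝ᵥ H.mulVec (u t - uo t)
      - (Kd.mulVec (d t) + Kv.mulVec (v (t + 1))) ⬝ᵥ
          H.mulVec (Kd.mulVec (d t) + Kv.mulVec (v (t + 1)))
      + d t ⬝ᵥ (Bdᵀ * X * Bd).mulVec (d t)
      + 2 * (v (t + 1) ⬝ᵥ Bd.mulVec (d t)) with hRr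
  set φ : ℤ → ℝ := fun t => x t ⬝ᵥ X.mulVec (x t) + 2 * (v t ⬝ᵥ x t) with hφ
  -- pointwise identity
  have pointwise : ∀ t : ℤ, L t = Rr t + (φ t - φ (t + 1)) := by
    intro t
    have hc := core A Bu Bd Q hQ S R hR X hX H hH hHinv hDARE Kx hKx Kv hKv Kd hKd
      (x t) (u t) (d t) (v (t + 1))
    have hub : u t - uo t = u t + (Kx *ᵥ x t + Kv *ᵥ v (t + 1) + Kd *ᵥ d t) := by
      rw [huo t]; abel
    simp only [hL, hRr, hφ, hub, hvdyn t, hxdyn t]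
    linarith [hc]
  -- summability
  have hLsum : Summable L := by
    refine ((summable_bilin Q x x hxsq hxsq).add
      ((summable_bilin S x u hxsq husq).mul_left 2)).add (summable_bilin R u u husq husq)
  have hvx : Summable fun t : ℤ => v t ⬝ᵥ x t := by
    have := summable_bilin (1 : Matrix (Fin n) (Fin n) ℝ) v x hvsq hxsq
    simpa [one_mulVec] using this
  have hφsum : Summable φ := (summable_bilin X x x hxsq hxsq).add (hvx.mul_left 2)
  have hφsum' : Summable fun t : ℤ => φ (t + 1) :=
    ((Equiv.addRight (1 : ℤ)).summable_iff).mpr hφsum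
  have hRsum : Summable Rr := by
    have : Rr = fun t => L t - (φ t - φ (t + 1)) := by
      funext t; rw [pointwise t]; ring
    rw [this]
    exact hLsum.sub (hφsum.sub hφsum')
  refine ⟨hLsum, hRsum, ?_⟩
  have htel : ∑' t : ℤ, φ (t + 1) = ∑' t : ℤ, φ t :=
    (Equiv.addRight (1 : ℤ)).tsum_eq φ
  calc ∑' t : ℤ, L t = ∑' t : ℤ, (Rr t + (φ t - φ (t + 1))) := tsum_congr pointwise
    _ = (∑' t : ℤ, Rr t) + ∑' t : ℤ, (φ t - φ (t + 1)) :=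
        Summable.tsum_add hRsum (hφsum.sub hφsum')
    _ = (∑' t : ℤ, Rr t) + ((∑' t : ℤ, φ t) - ∑' t : ℤ, φ (t + 1)) := by
        rw [Summable.tsum_sub hφsum hφsum']
    _ = ∑' t : ℤ, Rr t := by rw [htel, sub_self, add_zero]
end
end

section
/- (Optimality of the non-causal controller.) Let A ∈ ℝ^{n×n}, B_u ∈ ℝ^{n×m}, B_d ∈ ℝ^{n×q}, C_e ∈ ℝ^{p×n}, D_eu ∈ ℝ^{p×m}, Q := C_eᵀC_e, S := C_eᵀD_eu, R := D_euᵀD_eu, and let X be a symmetric positive semidefinite matrix with H := R + B_uᵀXB_u positive definite satisfying the DARE 0 = X − AᵀXA − Q + (AᵀXB_u + S)H⁻¹(AᵀXB_u + S)ᵀ, with gain K_x := H⁻¹(AᵀXB_u + S)ᵀ, and set K_v := H⁻¹B_uᵀ, K_d := H⁻¹B_uᵀXB_d. Let d : ℤ → ℝ^q and v : ℤ → ℝⁿ be square-summable with v_t = (A − B_uK_x)ᵀ(v_{t+1} + XB_dd_t) for all t. Suppose x, x° : ℤ → ℝⁿ and u, u° : ℤ → ℝᵐ are square-summable sequences with x_{t+1}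 = Ax_t + B_uu_t + B_dd_t, x°_{t+1} = Ax°_t + B_uu°_t + B_dd_t, and u°_t = −K_xx°_t − K_vv_{t+1} − K_dd_t for all t ∈ ℤ. Then Σ_{t∈ℤ} ‖C_ex_t + D_euu_t‖² ≥ Σ_{t∈ℤ} ‖C_ex°_t + D_euu°_t‖². -/
open Matrix

noncomputable section

/-! ### Auxiliary lemmas -/

private lemma dp_flip {k l : Type*} [Fintype k] [Fintype l]
    (M : Matrix k l ℝ) (a : l → ℝ) (c : k → ℝ) :
    (M *ᵥ a) ⬝ᵥ c = a ⬝ᵥ (Mᵀ *ᵥ c) := by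
  rw [dotProduct_comm, dotProduct_mulVec, dotProduct_comm, mulVec_transpose]

private lemma dp_swap {k l : Type*} [Fintype k] [Fintype l]
    (M : Matrix k l ℝ) (a : k → ℝ) (b : l → ℝ) :
    a ⬝ᵥ (M *ᵥ b) = b ⬝ᵥ (Mᵀ *ᵥ a) := by
  rw [← dp_flip, dotProduct_comm]

private lemma dp_self_nonneg {k : Type*} [Fintype k] (a : k → ℝ) : 0 ≤ a ⬝ᵥ a :=
  Finset.sum_nonneg fun _ _ => mul_self_nonneg _

private lemma abs_dp_le {k : Type*} [Fintype k] (a b : k → ℝ) :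
    |a ⬝ᵥ b| ≤ (a ⬝ᵥ a + b ⬝ᵥ b) / 2 := by
  have h1 := dp_self_nonneg (a - b)
  have h2 := dp_self_nonneg (a + b)
  simp only [dotProduct_sub, dotProduct_add, sub_dotProduct, add_dotProduct] at h1 h2
  rw [abs_le]
  constructor <;> [nlinarith [dotProduct_comm a b]; nlinarith [dotProduct_comm a b]]

private lemma summable_dot {k : Type*} [Fintype k] (y z : ℤ → k → ℝ)
    (hy : Summable fun t => y t ⬝ᵥ y t) (hz : Summable fun t => z t ⬝ᵥ z t) :
    Summable fun t => y t ⬝ᵥ z t := by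
  apply Summable.of_abs
  apply Summable.of_nonneg_of_le (fun t => abs_nonneg _) (fun t => abs_dp_le (y t) (z t))
  exact (hy.add hz).div_const 2

private lemma mulVec_dp_le {k l : Type*} [Fintype k] [Fintype l]
    (M : Matrix k l ℝ) (z : l → ℝ) :
    (M *ᵥ z) ⬝ᵥ (M *ᵥ z) ≤ (∑ i, ∑ j, (M i j) ^ 2) * (z ⬝ᵥ z) := by
  unfold dotProduct Matrix.mulVec
  rw [Finset.sum_mul]
  apply Finset.sum_le_sum
  intro i _
  have := Finset.sum_mul_sq_le_sq_mul_sq Finset.univ (fun j => M i j) z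
  calc (∑ j, M i j * z j) * (∑ j, M i j * z j) = (∑ j, M i j * z j) ^ 2 := by ring
    _ ≤ (∑ j, (M i j) ^ 2) * ∑ j, (z j) ^ 2 := this
    _ = (∑ j, (M i j) ^ 2) * (z ⬝ᵥ z) := by
        unfold dotProduct; congr 1; apply Finset.sum_congr rfl; intros; ring

private lemma summable_mulVec {k l : Type*} [Fintype k] [Fintype l]
    (M : Matrix k l ℝ) (z : ℤ → l → ℝ)
    (hz : Summable fun t => z t ⬝ᵥ z t) :
    Summable fun t => (M *ᵥ z t) ⬝ᵥ (M *ᵥ z t) := by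
  apply Summable.of_nonneg_of_le (fun t => dp_self_nonneg _) (fun t => mulVec_dp_le M (z t))
  exact hz.mul_left _

private lemma summable_quad {k l o : Type*} [Fintype k] [Fintype l] [Fintype o]
    (M : Matrix k l ℝ) (N : Matrix k o ℝ) (y : ℤ → l → ℝ) (z : ℤ → o → ℝ)
    (hy : Summable fun t => y t ⬝ᵥ y t) (hz : Summable fun t => z t ⬝ᵥ z t) :
    Summable fun t => (M *ᵥ y t + N *ᵥ z t) ⬝ᵥ (M *ᵥ y t + N *ᵥ z t) := by
  have hMy := summable_mulVec M y hy
  have hNz := summable_mulVec N z hz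
  have : (fun t => (M *ᵥ y t + N *ᵥ z t) ⬝ᵥ (M *ᵥ y t + N *ᵥ z t))
      = fun t => (M *ᵥ y t) ⬝ᵥ (M *ᵥ y t) + 2 * ((M *ᵥ y t) ⬝ᵥ (N *ᵥ z t))
          + (N *ᵥ z t) ⬝ᵥ (N *ᵥ z t) := by
    funext t
    simp only [dotProduct_add, add_dotProduct]
    rw [dotProduct_comm (N *ᵥ z t) (M *ᵥ y t)]
    ring
  rw [this]
  exact (hMy.add ((summable_dot _ _ hMy hNz).mul_left 2)).add hNz

section KeyIdentity

variable {n m q p : ℕ}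
  (A : Matrix (Fin n) (Fin n) ℝ) (Bu : Matrix (Fin n) (Fin m) ℝ)
  (Bd : Matrix (Fin n) (Fin q) ℝ)
  (Ce : Matrix (Fin p) (Fin n) ℝ) (Deu : Matrix (Fin p) (Fin m) ℝ)
  (X : Matrix (Fin n) (Fin n) ℝ) (H : Matrix (Fin m) (Fin m) ℝ)
  (Kx : Matrix (Fin m) (Fin n) ℝ) (Kv : Matrix (Fin m) (Fin n) ℝ)
  (Kd : Matrix (Fin m) (Fin q) ℝ)

/-- Completion of squares for the homogeneous part. -/
private lemma part1
    (hXs : Xᵀ = X) (hHs : Hᵀ = H)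
    (hHdef : H = Deuᵀ * Deu + Buᵀ * (X * Bu))
    (hHKx : H * Kx = Buᵀ * (X * A) + Deuᵀ * Ce)
    (hQD : Ceᵀ * Ce = X - Aᵀ * (X * A) + (Aᵀ * (X * Bu) + Ceᵀ * Deu) * Kx)
    (D : Fin n → ℝ) (du : Fin m → ℝ) :
    (Ce *ᵥ D + Deu *ᵥ du) ⬝ᵥ (Ce *ᵥ D + Deu *ᵥ du) =
    (du + Kx *ᵥ D) ⬝ᵥ (H *ᵥ (du + Kx *ᵥ D)) + D ⬝ᵥ (X *ᵥ D)
      - (A *ᵥ D + Bu *ᵥ du) ⬝ᵥ (X *ᵥ (A *ᵥ D + Bu *ᵥ du)) := by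
  have hKxH : Kxᵀ * H = Aᵀ * (X * Bu) + Ceᵀ * Deu := by
    rw [← hHs, ← Matrix.transpose_mul, hHKx]
    simp [Matrix.transpose_add, Matrix.transpose_mul, hXs, Matrix.mul_assoc]
  have hKHK : Kxᵀ * (H * Kx) = Aᵀ * (X * A) + Ceᵀ * Ce - X := by
    rw [← Matrix.mul_assoc, hKxH, hQD]
    abel
  simp only [Matrix.mulVec_add, Matrix.add_mulVec, Matrix.mulVec_sub, Matrix.sub_mulVec,
    Matrix.neg_mulVec, Matrix.mulVec_neg, Matrix.mulVec_mulVec,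
    dotProduct_add, add_dotProduct, dotProduct_sub, sub_dotProduct,
    dotProduct_neg, neg_dotProduct, dp_flip,
    Matrix.transpose_mul, Matrix.transpose_transpose, Matrix.transpose_add,
    Matrix.transpose_sub, Matrix.mul_assoc, Matrix.mul_add, Matrix.add_mul,
    Matrix.mul_sub, Matrix.sub_mul, hXs, hHs]
  have h1 : du ⬝ᵥ H *ᵥ du = du ⬝ᵥ (Deuᵀ * Deu) *ᵥ du + du ⬝ᵥ (Buᵀ * (X * Bu)) *ᵥ du := by
    rw [hHdef]; simp [Matrix.add_mulVec]
  have h2 : du ⬝ᵥ (H * Kx) *ᵥ D = du ⬝ᵥ (Buᵀ * (X * A)) *ᵥ D + du ⬝ᵥ (Deuᵀ * Ce) *ᵥ D := by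
    rw [hHKx]; simp [Matrix.add_mulVec]
  have h3 : D ⬝ᵥ (Kxᵀ * H) *ᵥ du = D ⬝ᵥ (Aᵀ * (X * Bu)) *ᵥ du + D ⬝ᵥ (Ceᵀ * Deu) *ᵥ du := by
    rw [hKxH]; simp [Matrix.add_mulVec]
  have h4 : D ⬝ᵥ (Kxᵀ * (H * Kx)) *ᵥ D
      = D ⬝ᵥ (Aᵀ * (X * A)) *ᵥ D + D ⬝ᵥ (Ceᵀ * Ce) *ᵥ D - D ⬝ᵥ X *ᵥ D := by
    rw [hKHK]; simp [Matrix.add_mulVec, Matrix.sub_mulVec]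
  have h5 : du ⬝ᵥ (Deuᵀ * Ce) *ᵥ D = D ⬝ᵥ (Ceᵀ * Deu) *ᵥ du := by
    rw [dp_swap]; simp [Matrix.transpose_mul]
  have h6 : du ⬝ᵥ (Buᵀ * (X * A)) *ᵥ D = D ⬝ᵥ (Aᵀ * (X * Bu)) *ᵥ du := by
    rw [dp_swap]; simp [Matrix.transpose_mul, hXs, Matrix.mul_assoc]
  linarith

/-- The cross term telescopes. -/
private lemma part2
    (hXs : Xᵀ = X) (hHs : Hᵀ = H)
    (hHdef : H = Deuᵀ * Deu + Buᵀ * (X * Bu))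
    (hHKx : H * Kx = Buᵀ * (X * A) + Deuᵀ * Ce)
    (hHKv : H * Kv = Buᵀ)
    (hHKd : H * Kd = Buᵀ * (X * Bd))
    (hQD : Ceᵀ * Ce = X - Aᵀ * (X * A) + (Aᵀ * (X * Bu) + Ceᵀ * Deu) * Kx)
    (xo D : Fin n → ℝ) (du : Fin m → ℝ) (dd : Fin q → ℝ) (vp : Fin n → ℝ) :
    (Ce *ᵥ xo + Deu *ᵥ (-(Kx *ᵥ xo) - Kv *ᵥ vp - Kd *ᵥ dd)) ⬝ᵥ (Ce *ᵥ D + Deu *ᵥ du) =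
    (X *ᵥ xo + (A - Bu * Kx)ᵀ *ᵥ (vp + X *ᵥ (Bd *ᵥ dd))) ⬝ᵥ D
    - (X *ᵥ (A *ᵥ xo + Bu *ᵥ (-(Kx *ᵥ xo) - Kv *ᵥ vp - Kd *ᵥ dd) + Bd *ᵥ dd) + vp)
        ⬝ᵥ (A *ᵥ D + Bu *ᵥ du) := by
  have hKxH : Kxᵀ * H = Aᵀ * (X * Bu) + Ceᵀ * Deu := by
    rw [← hHs, ← Matrix.transpose_mul, hHKx]
    simp [Matrix.transpose_add, Matrix.transpose_mul, hXs, Matrix.mul_assoc]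
  have hKvH : Kvᵀ * H = Bu := by
    rw [← hHs, ← Matrix.transpose_mul, hHKv, Matrix.transpose_transpose]
  have hKdH : Kdᵀ * H = Bdᵀ * (X * Bu) := by
    rw [← hHs, ← Matrix.transpose_mul, hHKd]
    simp [Matrix.transpose_mul, hXs, Matrix.mul_assoc]
  have m1 : Kxᵀ * (Buᵀ * (X * A)) + Kxᵀ * (Deuᵀ * Ce) = Aᵀ * (X * A) + Ceᵀ * Ce - X := by
    rw [← Matrix.mul_add, ← hHKx, ← Matrix.mul_assoc, hKxH, hQD]; abel
  have m2 : Kvᵀ * (Buᵀ * (X * A)) + Kvᵀ * (Deuᵀ * Ce) = Bu * Kx := by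
    rw [← Matrix.mul_add, ← hHKx, ← Matrix.mul_assoc, hKvH]
  have m3 : Kdᵀ * (Buᵀ * (X * A)) + Kdᵀ * (Deuᵀ * Ce) = Bdᵀ * (X * (Bu * Kx)) := by
    rw [← Matrix.mul_add, ← hHKx, ← Matrix.mul_assoc, hKdH]
    simp [Matrix.mul_assoc]
  have m4 : Kxᵀ * (Deuᵀ * Deu) + Kxᵀ * (Buᵀ * (X * Bu)) = Aᵀ * (X * Bu) + Ceᵀ * Deu := by
    rw [← Matrix.mul_add, ← hHdef, hKxH]
  have m5 : Kvᵀ * (Deuᵀ * Deu) + Kvᵀ * (Buᵀ * (X * Bu)) = Bu := by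
    rw [← Matrix.mul_add, ← hHdef, hKvH]
  have m6 : Kdᵀ * (Deuᵀ * Deu) + Kdᵀ * (Buᵀ * (X * Bu)) = Bdᵀ * (X * Bu) := by
    rw [← Matrix.mul_add, ← hHdef, hKdH]
  have hx1 := congrArg (fun M => xo ⬝ᵥ M *ᵥ D) m1
  have hv1 := congrArg (fun M => vp ⬝ᵥ M *ᵥ D) m2
  have hd1 := congrArg (fun M => dd ⬝ᵥ M *ᵥ D) m3
  have hx2 := congrArg (fun M => xo ⬝ᵥ M *ᵥ du) m4
  have hv2 := congrArg (fun M => vp ⬝ᵥ M *ᵥ du) m5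
  have hd2 := congrArg (fun M => dd ⬝ᵥ M *ᵥ du) m6
  simp only [Matrix.add_mulVec, Matrix.sub_mulVec, dotProduct_add, dotProduct_sub]
    at hx1 hv1 hd1 hx2 hv2 hd2
  simp only [Matrix.mulVec_add, Matrix.add_mulVec, Matrix.mulVec_sub, Matrix.sub_mulVec,
    Matrix.neg_mulVec, Matrix.mulVec_neg, Matrix.mulVec_mulVec,
    dotProduct_add, add_dotProduct, dotProduct_sub, sub_dotProduct,
    dotProduct_neg, neg_dotProduct, dp_flip,
    Matrix.transpose_mul, Matrix.transpose_transpose, Matrix.transpose_add,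
    Matrix.transpose_sub, Matrix.mul_assoc, Matrix.mul_add, Matrix.add_mul,
    Matrix.mul_sub, Matrix.sub_mul, hXs, hHs]
  linarith

/-- The pointwise key identity. -/
private lemma key
    (hXs : Xᵀ = X) (hHs : Hᵀ = H)
    (hHdef : H = Deuᵀ * Deu + Buᵀ * (X * Bu))
    (hHKx : H * Kx = Buᵀ * (X * A) + Deuᵀ * Ce)
    (hHKv : H * Kv = Buᵀ)
    (hHKd : H * Kd = Buᵀ * (X * Bd))
    (hQD : Ceᵀ * Ce = X - Aᵀ * (X * A) + (Aᵀ * (X * Bu) + Ceᵀ * Deu) * Kx)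
    (xo D : Fin n → ℝ) (du : Fin m → ℝ) (dd : Fin q → ℝ) (vp : Fin n → ℝ) :
    (Ce *ᵥ (xo + D) + Deu *ᵥ ((-(Kx *ᵥ xo) - Kv *ᵥ vp - Kd *ᵥ dd) + du)) ⬝ᵥ
      (Ce *ᵥ (xo + D) + Deu *ᵥ ((-(Kx *ᵥ xo) - Kv *ᵥ vp - Kd *ᵥ dd) + du)) =
    (Ce *ᵥ xo + Deu *ᵥ (-(Kx *ᵥ xo) - Kv *ᵥ vp - Kd *ᵥ dd)) ⬝ᵥ
      (Ce *ᵥ xo + Deu *ᵥ (-(Kx *ᵥ xo) - Kv *ᵥ vp - Kd *ᵥ dd))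
    + (du + Kx *ᵥ D) ⬝ᵥ (H *ᵥ (du + Kx *ᵥ D))
    + (D ⬝ᵥ (X *ᵥ D)
        + 2 * ((X *ᵥ xo + (A - Bu * Kx)ᵀ *ᵥ (vp + X *ᵥ (Bd *ᵥ dd))) ⬝ᵥ D))
    - ((A *ᵥ D + Bu *ᵥ du) ⬝ᵥ (X *ᵥ (A *ᵥ D + Bu *ᵥ du))
        + 2 * ((X *ᵥ (A *ᵥ xo + Bu *ᵥ (-(Kx *ᵥ xo) - Kv *ᵥ vp - Kd *ᵥ dd) + Bd *ᵥ dd) + vp)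
            ⬝ᵥ (A *ᵥ D + Bu *ᵥ du))) := by
  have h1 := part1 A Bu Ce Deu X H Kx hXs hHs hHdef hHKx hQD D du
  have h2 := part2 A Bu Bd Ce Deu X H Kx Kv Kd hXs hHs hHdef hHKx hHKv hHKd hQD xo D du dd vp
  have e : Ce *ᵥ (xo + D) + Deu *ᵥ ((-(Kx *ᵥ xo) - Kv *ᵥ vp - Kd *ᵥ dd) + du)
      = (Ce *ᵥ xo + Deu *ᵥ (-(Kx *ᵥ xo) - Kv *ᵥ vp - Kd *ᵥ dd)) + (Ce *ᵥ D + Deu *ᵥ du) := by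
    simp only [Matrix.mulVec_add]
    abel
  rw [e]
  have expand : ∀ a c : Fin p → ℝ, (a + c) ⬝ᵥ (a + c) = a ⬝ᵥ a + 2 * (a ⬝ᵥ c) + c ⬝ᵥ c := by
    intro a c
    simp only [dotProduct_add, add_dotProduct]
    rw [dotProduct_comm c a]
    ring
  rw [expand]
  linarith

end KeyIdentity

set_option maxHeartbeats 1000000 in
/-- Optimality of the non-causal controller (Theorem 1 of the paper):
the cost of any stabilizing trajectory is at least that of the trajectory
produced by the optimal non-causal controller. -/
theorem noncausal_controller_optimal
    (n m q p : ℕ)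
    (A : Matrix (Fin n) (Fin n) ℝ) (Bu : Matrix (Fin n) (Fin m) ℝ)
    (Bd : Matrix (Fin n) (Fin q) ℝ)
    (Ce : Matrix (Fin p) (Fin n) ℝ) (Deu : Matrix (Fin p) (Fin m) ℝ)
    (Q : Matrix (Fin n) (Fin n) ℝ) (S : Matrix (Fin n) (Fin m) ℝ)
    (R : Matrix (Fin m) (Fin m) ℝ)
    (hQ : Q = Ceᵀ * Ce) (hS : S = Ceᵀ * Deu) (hR : R = Deuᵀ * Deu)
    (X : Matrix (Fin n) (Fin n) ℝ) (hX : X.PosSemidef)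
    (H : Matrix (Fin m) (Fin m) ℝ) (hH : H = R + Buᵀ * X * Bu) (hHpd : H.PosDef)
    (hDARE : 0 = X - Aᵀ * X * A - Q +
      (Aᵀ * X * Bu + S) * H⁻¹ * (Aᵀ * X * Bu + S)ᵀ)
    (Kx : Matrix (Fin m) (Fin n) ℝ) (hKx : Kx = H⁻¹ * (Aᵀ * X * Bu + S)ᵀ)
    (Kv : Matrix (Fin m) (Fin n) ℝ) (hKv : Kv = H⁻¹ * Buᵀ)
    (Kd : Matrix (Fin m) (Fin q) ℝ) (hKd : Kd = H⁻¹ * Buᵀ * X * Bd)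
    (d : ℤ → Fin q → ℝ) (v : ℤ → Fin n → ℝ)
    (hdsq : Summable fun t : ℤ => d t ⬝ᵥ d t)
    (hvsq : Summable fun t : ℤ => v t ⬝ᵥ v t)
    (hvdyn : ∀ t : ℤ, v t = ((A - Bu * Kx)ᵀ).mulVec (v (t + 1) + X.mulVec (Bd.mulVec (d t))))
    (x xo : ℤ → Fin n → ℝ) (u uo : ℤ → Fin m → ℝ)
    (hxsq : Summable fun t : ℤ => x t ⬝ᵥ x t)
    (hxosq : Summable fun t : ℤ => xo t ⬝ᵥ xo t)
    (husq : Summable fun t : ℤ => u t ⬝ᵥ u t)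
    (huosq : Summable fun t : ℤ => uo t ⬝ᵥ uo t)
    (hxdyn : ∀ t : ℤ, x (t + 1) = A.mulVec (x t) + Bu.mulVec (u t) + Bd.mulVec (d t))
    (hxodyn : ∀ t : ℤ, xo (t + 1) = A.mulVec (xo t) + Bu.mulVec (uo t) + Bd.mulVec (d t))
    (huo : ∀ t : ℤ, uo t = -(Kx.mulVec (xo t)) - Kv.mulVec (v (t + 1)) - Kd.mulVec (d t)) :
    (∑' t : ℤ, (Ce.mulVec (xo t) + Deu.mulVec (uo t)) ⬝ᵥ
        (Ce.mulVec (xo t) + Deu.mulVec (uo t))) ≤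
    (∑' t : ℤ, (Ce.mulVec (x t) + Deu.mulVec (u t)) ⬝ᵥ
        (Ce.mulVec (x t) + Deu.mulVec (u t))) := by
  -- matrix facts
  have hXs : Xᵀ = X := by
    have h := hX.1
    rwa [Matrix.IsHermitian, Matrix.conjTranspose_eq_transpose_of_trivial] at h
  have hHs : Hᵀ = H := by
    rw [hH, hR]
    simp [Matrix.transpose_add, Matrix.transpose_mul, hXs, Matrix.mul_assoc]
  have hdet : IsUnit H.det := by
    rw [← Matrix.isUnit_iff_isUnit_det]
    exact hHpd.isUnit
  have hHiH : H * H⁻¹ = 1 := Matrix.mul_nonsing_inv H hdet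
  have hHdef : H = Deuᵀ * Deu + Buᵀ * (X * Bu) := by
    rw [hH, hR, Matrix.mul_assoc]
  have hHKx : H * Kx = Buᵀ * (X * A) + Deuᵀ * Ce := by
    rw [hKx, ← Matrix.mul_assoc, hHiH, Matrix.one_mul, hS]
    simp [Matrix.transpose_add, Matrix.transpose_mul, hXs, Matrix.mul_assoc]
  have hHKv : H * Kv = Buᵀ := by
    rw [hKv, ← Matrix.mul_assoc, hHiH, Matrix.one_mul]
  have hHKd : H * Kd = Buᵀ * (X * Bd) := by
    rw [hKd]
    simp only [Matrix.mul_assoc]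
    rw [← Matrix.mul_assoc H H⁻¹, hHiH, Matrix.one_mul]
  have hQD : Ceᵀ * Ce = X - Aᵀ * (X * A) + (Aᵀ * (X * Bu) + Ceᵀ * Deu) * Kx := by
    have hKx' : Kx = H⁻¹ * (Aᵀ * X * Bu + Ceᵀ * Deu)ᵀ := by rw [hKx, hS]
    have h := hDARE
    rw [hQ, hS,
      Matrix.mul_assoc (Aᵀ * X * Bu + Ceᵀ * Deu) H⁻¹ ((Aᵀ * X * Bu + Ceᵀ * Deu)ᵀ),
      ← hKx'] at h
    have h2 : Ceᵀ * Ce - (X - Aᵀ * X * A + (Aᵀ * X * Bu + Ceᵀ * Deu) * Kx)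
        = -(X - Aᵀ * X * A - Ceᵀ * Ce + (Aᵀ * X * Bu + Ceᵀ * Deu) * Kx) := by abel
    have h3 : Ceᵀ * Ce = X - Aᵀ * X * A + (Aᵀ * X * Bu + Ceᵀ * Deu) * Kx := by
      rw [← sub_eq_zero, h2, ← h, neg_zero]
    rw [h3]
    simp [Matrix.mul_assoc]
  -- pointwise identity
  have hkey : ∀ t : ℤ,
      (Ce *ᵥ x t + Deu *ᵥ u t) ⬝ᵥ (Ce *ᵥ x t + Deu *ᵥ u t) =
      (Ce *ᵥ xo t + Deu *ᵥ uo t) ⬝ᵥ (Ce *ᵥ xo t + Deu *ᵥ uo t)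
      + ((u t - uo t) + Kx *ᵥ (x t - xo t)) ⬝ᵥ (H *ᵥ ((u t - uo t) + Kx *ᵥ (x t - xo t)))
      + ((x t - xo t) ⬝ᵥ (X *ᵥ (x t - xo t)) + 2 * ((X *ᵥ xo t + v t) ⬝ᵥ (x t - xo t)))
      - ((x (t + 1) - xo (t + 1)) ⬝ᵥ (X *ᵥ (x (t + 1) - xo (t + 1)))
          + 2 * ((X *ᵥ xo (t + 1) + v (t + 1)) ⬝ᵥ (x (t + 1) - xo (t + 1)))) := by
    intro t
    have h := key A Bu Bd Ce Deu X H Kx Kv Kd hXs hHs hHdef hHKx hHKv hHKd hQD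
      (xo t) (x t - xo t) (u t - uo t) (d t) (v (t + 1))
    rw [← huo t, ← hvdyn t, ← hxodyn t] at h
    rw [show xo t + (x t - xo t) = x t by abel] at h
    rw [show uo t + (u t - uo t) = u t by abel] at h
    rw [show A *ᵥ (x t - xo t) + Bu *ᵥ (u t - uo t) = x (t + 1) - xo (t + 1) by
      rw [hxdyn t, hxodyn t, Matrix.mulVec_sub, Matrix.mulVec_sub]; abel] at h
    linarith
  -- summability
  have SF : Summable fun t : ℤ => (Ce *ᵥ x t + Deu *ᵥ u t) ⬝ᵥ (Ce *ᵥ x t + Deu *ᵥ u t) :=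
    summable_quad Ce Deu x u hxsq husq
  have SFo : Summable fun t : ℤ => (Ce *ᵥ xo t + Deu *ᵥ uo t) ⬝ᵥ (Ce *ᵥ xo t + Deu *ᵥ uo t) :=
    summable_quad Ce Deu xo uo hxosq huosq
  have SD : Summable fun t : ℤ => (x t - xo t) ⬝ᵥ (x t - xo t) := by
    have Sxxo := summable_dot x xo hxsq hxosq
    have e : (fun t : ℤ => (x t - xo t) ⬝ᵥ (x t - xo t))
        = fun t => x t ⬝ᵥ x t - 2 * (x t ⬝ᵥ xo t) + xo t ⬝ᵥ xo t := by
      funext t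
      simp only [dotProduct_sub, sub_dotProduct]
      rw [dotProduct_comm (xo t) (x t)]
      ring
    rw [e]
    exact (hxsq.sub (Sxxo.mul_left 2)).add hxosq
  have Sw : Summable fun t : ℤ => (X *ᵥ xo t + v t) ⬝ᵥ (X *ᵥ xo t + v t) := by
    have := summable_quad X (1 : Matrix (Fin n) (Fin n) ℝ) xo v hxosq hvsq
    simpa [Matrix.one_mulVec] using this
  have Smm : Summable fun t : ℤ =>
      (x t - xo t) ⬝ᵥ (X *ᵥ (x t - xo t)) + 2 * ((X *ᵥ xo t + v t) ⬝ᵥ (x t - xo t)) := by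
    exact (summable_dot _ _ SD (summable_mulVec X _ SD)).add
      ((summable_dot _ _ Sw SD).mul_left 2)
  set mm : ℤ → ℝ := fun t =>
      (x t - xo t) ⬝ᵥ (X *ᵥ (x t - xo t)) + 2 * ((X *ᵥ xo t + v t) ⬝ᵥ (x t - xo t)) with hmm
  have Smm1 : Summable fun t : ℤ => mm (t + 1) :=
    ((Equiv.addRight (1 : ℤ)).summable_iff).mpr Smm
  have Sht : Summable fun t : ℤ =>
      ((u t - uo t) + Kx *ᵥ (x t - xo t)) ⬝ᵥ (H *ᵥ ((u t - uo t) + Kx *ᵥ (x t - xo t))) := by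
    have e : (fun t : ℤ =>
        ((u t - uo t) + Kx *ᵥ (x t - xo t)) ⬝ᵥ (H *ᵥ ((u t - uo t) + Kx *ᵥ (x t - xo t))))
        = fun t => (Ce *ᵥ x t + Deu *ᵥ u t) ⬝ᵥ (Ce *ᵥ x t + Deu *ᵥ u t)
          - (Ce *ᵥ xo t + Deu *ᵥ uo t) ⬝ᵥ (Ce *ᵥ xo t + Deu *ᵥ uo t)
          - mm t + mm (t + 1) := by
      funext t
      have := hkey t
      simp only [hmm]
      linarith
    rw [e]
    exact ((SF.sub SFo).sub Smm).add Smm1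
  -- sum of telescoping terms vanishes
  have htel : ∑' t : ℤ, (mm t - mm (t + 1)) = 0 := by
    rw [Smm.tsum_sub Smm1, sub_eq_zero]
    exact ((Equiv.addRight (1 : ℤ)).tsum_eq mm).symm
  -- put everything together
  have hsplit : ∑' t : ℤ, (Ce *ᵥ x t + Deu *ᵥ u t) ⬝ᵥ (Ce *ᵥ x t + Deu *ᵥ u t)
      = (∑' t : ℤ, (Ce *ᵥ xo t + Deu *ᵥ uo t) ⬝ᵥ (Ce *ᵥ xo t + Deu *ᵥ uo t))
        + (∑' t : ℤ, ((u t - uo t) + Kx *ᵥ (x t - xo t)) ⬝ᵥ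
            (H *ᵥ ((u t - uo t) + Kx *ᵥ (x t - xo t))))
        + ∑' t : ℤ, (mm t - mm (t + 1)) := by
    rw [← SFo.tsum_add Sht, ← (SFo.add Sht).tsum_add (Smm.sub Smm1)]
    apply tsum_congr
    intro t
    have := hkey t
    simp only [hmm]
    linarith
  have hpos : 0 ≤ ∑' t : ℤ, ((u t - uo t) + Kx *ᵥ (x t - xo t)) ⬝ᵥ
      (H *ᵥ ((u t - uo t) + Kx *ᵥ (x t - xo t))) := by
    apply tsum_nonneg
    intro t
    have := hHpd.posSemidef.dotProduct_mulVec_nonneg ((u t - uo t) + Kx *ᵥ (x t - xo t))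
    simpa using this
  rw [hsplit, htel]
  linarith

end
end

section
/- (Adjoint property of the para-Hermitian conjugate.) Let Â ∈ ℝ^{n×n}, B̂ ∈ ℝ^{n×q}, Ĉ ∈ ℝ^{p×n}, D̂ ∈ ℝ^{p×q}. Let x̂, x̄ : ℤ → ℝⁿ, d : ℤ → ℝ^q, ē : ℤ → ℝ^p be square-summable sequences satisfying, for all t ∈ ℤ: x̂_{t+1} = Âx̂_t + B̂d_t (dynamics of P̂) and Âᵀx̄_{t+1} = x̄_t − Ĉᵀē_t (dynamics of the para-Hermitian conjugate P̂∼). Define ê_t := Ĉx̂_t + D̂d_t and d̄_t := B̂ᵀx̄_{t+1} + D̂ᵀē_t. Then the families t ↦ ê_tᵀē_t and t ↦ d_tᵀd̄_t are summable over ℤ with equal sums: Σ_{t∈ℤ} ê_tᵀē_t = Σ_{t∈ℤ} d_tᵀd̄_t. -/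
open Matrix

noncomputable section

lemma dot_self_nonneg' {m : ℕ} (v : Fin m → ℝ) : 0 ≤ v ⬝ᵥ v :=
  Finset.sum_nonneg fun i _ => mul_self_nonneg _

lemma abs_dot_le' {m : ℕ} (a b : Fin m → ℝ) :
    |a ⬝ᵥ b| ≤ (a ⬝ᵥ a + b ⬝ᵥ b) / 2 := by
  have h1 : |a ⬝ᵥ b| ≤ ∑ i, |a i * b i| := Finset.abs_sum_le_sum_abs _ _
  have h2 : ∀ i : Fin m, |a i * b i| ≤ (a i * a i + b i * b i) / 2 := by
    intro i
    rw [abs_mul]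
    nlinarith [abs_nonneg (a i), abs_nonneg (b i), sq_abs (a i), sq_abs (b i),
      sq_nonneg (|a i| - |b i|)]
  calc |a ⬝ᵥ b| ≤ ∑ i, |a i * b i| := h1
    _ ≤ ∑ i, (a i * a i + b i * b i) / 2 := Finset.sum_le_sum fun i _ => h2 i
    _ = (a ⬝ᵥ a + b ⬝ᵥ b) / 2 := by
        rw [dotProduct, dotProduct, ← Finset.sum_add_distrib, ← Finset.sum_div]

lemma summable_dot' {m : ℕ} (f g : ℤ → Fin m → ℝ)
    (hf : Summable fun t => f t ⬝ᵥ f t) (hg : Summable fun t => g t ⬝ᵥ g t) :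
    Summable fun t => f t ⬝ᵥ g t := by
  apply Summable.of_abs
  exact Summable.of_nonneg_of_le (fun _ => abs_nonneg _)
    (fun t => abs_dot_le' (f t) (g t)) ((hf.add hg).div_const 2)

lemma summable_mulVec' {m k : ℕ} (M : Matrix (Fin k) (Fin m) ℝ) (f : ℤ → Fin m → ℝ)
    (hf : Summable fun t => f t ⬝ᵥ f t) :
    Summable fun t => M.mulVec (f t) ⬝ᵥ M.mulVec (f t) := by
  set C : ℝ := ∑ i : Fin k, ∑ j : Fin m, (M i j) ^ 2 with hC
  apply Summable.of_nonneg_of_le (fun t => dot_self_nonneg' _) _ (hf.mul_left C)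
  intro t
  have key : ∀ i : Fin k, (M.mulVec (f t) i) ^ 2 ≤ (∑ j, (M i j) ^ 2) * (f t ⬝ᵥ f t) := by
    intro i
    have h := Finset.sum_mul_sq_le_sq_mul_sq Finset.univ (fun j => M i j) (fun j => f t j)
    simp only [Matrix.mulVec, dotProduct]
    calc (∑ j, M i j * f t j) ^ 2 ≤ (∑ j, (M i j) ^ 2) * ∑ j, (f t j) ^ 2 := h
      _ = (∑ j, (M i j) ^ 2) * (f t ⬝ᵥ f t) := by
          rw [dotProduct]; congr 1; exact Finset.sum_congr rfl fun j _ => sq (f t j) ▸ (sq (f t j))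
  calc M.mulVec (f t) ⬝ᵥ M.mulVec (f t) = ∑ i, (M.mulVec (f t) i) ^ 2 := by
        simp [dotProduct, sq]
    _ ≤ ∑ i, (∑ j, (M i j) ^ 2) * (f t ⬝ᵥ f t) := Finset.sum_le_sum fun i _ => key i
    _ = C * (f t ⬝ᵥ f t) := by rw [hC, Finset.sum_mul]


/-- Adjoint property of the para-Hermitian conjugate (Lemma A.1 of the paper):
`⟨P̂ d, ē⟩ = ⟨d, P̂∼ ē⟩` for square-summable two-sided signals. -/
theorem para_hermitian_adjoint
    (n p q : ℕ)
    (Ah : Matrix (Fin n) (Fin n) ℝ) (Bh : Matrix (Fin n) (Fin q) ℝ)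
    (Ch : Matrix (Fin p) (Fin n) ℝ) (Dh : Matrix (Fin p) (Fin q) ℝ)
    (xh xb : ℤ → Fin n → ℝ) (d : ℤ → Fin q → ℝ) (eb : ℤ → Fin p → ℝ)
    (hxh : Summable fun t : ℤ => xh t ⬝ᵥ xh t)
    (hxb : Summable fun t : ℤ => xb t ⬝ᵥ xb t)
    (hd : Summable fun t : ℤ => d t ⬝ᵥ d t)
    (heb : Summable fun t : ℤ => eb t ⬝ᵥ eb t)
    (hP : ∀ t : ℤ, xh (t + 1) = Ah.mulVec (xh t) + Bh.mulVec (d t))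
    (hPtil : ∀ t : ℤ, (Ahᵀ).mulVec (xb (t + 1)) = xb t - (Chᵀ).mulVec (eb t))
    (eh : ℤ → Fin p → ℝ)
    (heh : ∀ t : ℤ, eh t = Ch.mulVec (xh t) + Dh.mulVec (d t))
    (db : ℤ → Fin q → ℝ)
    (hdb : ∀ t : ℤ, db t = (Bhᵀ).mulVec (xb (t + 1)) + (Dhᵀ).mulVec (eb t)) :
    Summable (fun t : ℤ => eh t ⬝ᵥ eb t) ∧
    Summable (fun t : ℤ => d t ⬝ᵥ db t) ∧
    (∑' t : ℤ, eh t ⬝ᵥ eb t) = (∑' t : ℤ, d t ⬝ᵥ db t) := by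
  -- shifted state is square-summable
  have hxb1 : Summable fun t : ℤ => xb (t + 1) ⬝ᵥ xb (t + 1) :=
    ((Equiv.addRight (1 : ℤ)).summable_iff (f := fun t : ℤ => xb t ⬝ᵥ xb t)).2 hxb
  -- summability of eh ⬝ eb
  have heheb : Summable fun t : ℤ => eh t ⬝ᵥ eb t := by
    have h1 := summable_dot' _ _ (summable_mulVec' Ch xh hxh) heb
    have h2 := summable_dot' _ _ (summable_mulVec' Dh d hd) heb
    have := h1.add h2
    apply this.congr
    intro t
    simp [heh t, add_dotProduct]
  -- summability of d ⬝ db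
  have hddb : Summable fun t : ℤ => d t ⬝ᵥ db t := by
    have h1 := summable_dot' _ _ hd (summable_mulVec' Bhᵀ (fun t => xb (t + 1)) hxb1)
    have h2 := summable_dot' _ _ hd (summable_mulVec' Dhᵀ eb heb)
    have := h1.add h2
    apply this.congr
    intro t
    simp [hdb t, dotProduct_add]
  refine ⟨heheb, hddb, ?_⟩
  -- pointwise telescoping identity
  have key : ∀ t : ℤ, eh t ⬝ᵥ eb t - d t ⬝ᵥ db t =
      xh t ⬝ᵥ xb t - xh (t + 1) ⬝ᵥ xb (t + 1) := by
    intro t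
    have hxbt : xb t = (Ahᵀ).mulVec (xb (t + 1)) + (Chᵀ).mulVec (eb t) := by
      rw [hPtil t]; ring_nf
    have mvdot : ∀ {a b : ℕ} (M : Matrix (Fin a) (Fin b) ℝ) (x : Fin b → ℝ)
        (y : Fin a → ℝ), (M.mulVec x) ⬝ᵥ y = x ⬝ᵥ ((Mᵀ).mulVec y) := by
      intro a b M x y
      rw [Matrix.dotProduct_mulVec, Matrix.vecMul_transpose]
    rw [heh t, hdb t, hP t, hxbt, add_dotProduct, add_dotProduct,
      dotProduct_add, dotProduct_add, mvdot Ch, mvdot Dh, mvdot Ah, mvdot Bh]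
    ring
  -- the sequence s t = xh t ⬝ xb t is summable
  have hs : Summable fun t : ℤ => xh t ⬝ᵥ xb t := summable_dot' _ _ hxh hxb
  have hs1 : Summable fun t : ℤ => xh (t + 1) ⬝ᵥ xb (t + 1) :=
    ((Equiv.addRight (1 : ℤ)).summable_iff (f := fun t : ℤ => xh t ⬝ᵥ xb t)).2 hs
  have hsum1 : (∑' t : ℤ, xh (t + 1) ⬝ᵥ xb (t + 1)) = ∑' t : ℤ, xh t ⬝ᵥ xb t :=
    (Equiv.addRight (1 : ℤ)).tsum_eq (fun t : ℤ => xh t ⬝ᵥ xb t)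
  have hdiff : (∑' t : ℤ, (eh t ⬝ᵥ eb t - d t ⬝ᵥ db t)) = 0 := by
    calc (∑' t : ℤ, (eh t ⬝ᵥ eb t - d t ⬝ᵥ db t))
        = ∑' t : ℤ, (xh t ⬝ᵥ xb t - xh (t + 1) ⬝ᵥ xb (t + 1)) := by
          exact tsum_congr key
      _ = (∑' t : ℤ, xh t ⬝ᵥ xb t) - ∑' t : ℤ, xh (t + 1) ⬝ᵥ xb (t + 1) :=
          Summable.tsum_sub hs hs1
      _ = 0 := by rw [hsum1, sub_self]
  have h2 : (∑' t : ℤ, (eh t ⬝ᵥ eb t - d t ⬝ᵥ db t)) =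
      (∑' t : ℤ, eh t ⬝ᵥ eb t) - ∑' t : ℤ, d t ⬝ᵥ db t := Summable.tsum_sub heheb hddb
  rw [h2] at hdiff
  linarith
end
end

section
/- Let Â ∈ ℝ^{n×n}, B̂ ∈ ℝ^{n×q}, and symmetric Q̂ ∈ ℝ^{n×n}, Ŝ ∈ ℝ^{n×q}, R̂ ∈ ℝ^{q×q} be given, and let X̂ be a symmetric matrix with Ĥ := R̂ + B̂ᵀX̂B̂ invertible satisfying the DARE 0 = X̂ − ÂᵀX̂Â − Q̂ + (ÂᵀX̂B̂ + Ŝ)Ĥ⁻¹(ÂᵀX̂B̂ + Ŝ)ᵀ, with gain K̂_x := Ĥ⁻¹(ÂᵀX̂B̂ + Ŝ)ᵀ. Let x̂ : ℤ → ℝⁿ and d : ℤ → ℝ^q be square-summable sequences satisfying x̂_{t+1} = Âx̂_t + B̂d_t for all t ∈ ℤ. Then the families t ↦ x̂_tᵀQ̂x̂_t + 2x̂_tᵀŜd_t + d_tᵀR̂d_t and t ↦ (K̂_xx̂_t + d_t)ᵀĤ(K̂_xx̂_t + d_t) are summable over ℤ with equal sums. -/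
open Matrix

noncomputable section

private lemma dotProduct_mulVec_flip {m p : Type*} [Fintype m] [Fintype p]
    (K : Matrix m p ℝ) (u : p → ℝ) (z : m → ℝ) :
    K.mulVec u ⬝ᵥ z = u ⬝ᵥ Kᵀ.mulVec z := by
  rw [dotProduct_comm, Matrix.dotProduct_mulVec, dotProduct_comm, ← Matrix.mulVec_transpose]

private lemma summable_bilin_s8 {m p : ℕ} (M : Matrix (Fin m) (Fin p) ℝ)
    (v : ℤ → Fin m → ℝ) (w : ℤ → Fin p → ℝ)
    (hv : Summable fun t => v t ⬝ᵥ v t) (hw : Summable fun t => w t ⬝ᵥ w t) :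
    Summable fun t => v t ⬝ᵥ M.mulVec (w t) := by
  have hij : ∀ (i : Fin m) (j : Fin p), Summable fun t => v t i * w t j := by
    intro i j
    have hvi : Summable fun t => v t i ^ 2 := by
      refine hv.of_nonneg_of_le (fun t => sq_nonneg _) (fun t => ?_)
      have : v t i ^ 2 = v t i * v t i := by ring
      rw [this]
      exact Finset.single_le_sum (f := fun k => v t k * v t k)
        (fun k _ => mul_self_nonneg _) (Finset.mem_univ i)
    have hwj : Summable fun t => w t j ^ 2 := by
      refine hw.of_nonneg_of_le (fun t => sq_nonneg _) (fun t => ?_)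
      have : w t j ^ 2 = w t j * w t j := by ring
      rw [this]
      exact Finset.single_le_sum (f := fun k => w t k * w t k)
        (fun k _ => mul_self_nonneg _) (Finset.mem_univ j)
    refine Summable.of_abs ?_
    refine Summable.of_nonneg_of_le (fun t => abs_nonneg _) (fun t => ?_)
      (((hvi.add hwj).div_const 2))
    rw [abs_mul]
    nlinarith [sq_nonneg (|v t i| - |w t j|), sq_abs (v t i), sq_abs (w t j),
      abs_nonneg (v t i), abs_nonneg (w t j)]
  have hexp : (fun t => v t ⬝ᵥ M.mulVec (w t))
      = fun t => ∑ i, ∑ j, M i j * (v t i * w t j) := by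
    funext t
    simp only [dotProduct, Matrix.mulVec, Finset.mul_sum]
    exact Finset.sum_congr rfl fun i _ => Finset.sum_congr rfl fun j _ => by ring
  rw [hexp]
  refine summable_sum fun i _ => summable_sum fun j _ => (hij i j).mul_left _

private lemma telescope_Icc (g : ℤ → ℝ) (a : ℤ) :
    ∀ b, a ≤ b → ∑ t ∈ Finset.Icc a b, (g t - g (t + 1)) = g a - g (b + 1) := by
  intro b hb
  refine Int.le_induction
    (motive := fun b _ => ∑ t ∈ Finset.Icc a b, (g t - g (t + 1)) = g a - g (b + 1)) ?_ ?_ b hb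
  · simp
  · intro b hab ih
    have hins : Finset.Icc a (b + 1) = insert (b + 1) (Finset.Icc a b) := by
      ext x; simp only [Finset.mem_Icc, Finset.mem_insert]; omega
    rw [hins, Finset.sum_insert (by simp only [Finset.mem_Icc]; omega), ih]
    ring

private lemma pointwise_key (n q : ℕ)
    (Ah : Matrix (Fin n) (Fin n) ℝ) (Bh : Matrix (Fin n) (Fin q) ℝ)
    (Qh : Matrix (Fin n) (Fin n) ℝ)
    (Sh : Matrix (Fin n) (Fin q) ℝ) (Rh : Matrix (Fin q) (Fin q) ℝ)
    (Xh : Matrix (Fin n) (Fin n) ℝ) (hX : Xh.IsSymm)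
    (Hh : Matrix (Fin q) (Fin q) ℝ) (Kx : Matrix (Fin q) (Fin n) ℝ)
    (M : Matrix (Fin n) (Fin q) ℝ) (hM : M = Ahᵀ * Xh * Bh + Sh)
    (hH : Hh = Rh + Bhᵀ * Xh * Bh)
    (hQeq : Qh = Xh - Ahᵀ * Xh * Ah + M * Hh⁻¹ * Mᵀ)
    (hKHK : Kxᵀ * Hh * Kx = M * Hh⁻¹ * Mᵀ)
    (hKH : Kxᵀ * Hh = M) (hHK : Hh * Kx = Mᵀ)
    (u : Fin n → ℝ) (e : Fin q → ℝ) :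
    u ⬝ᵥ Qh.mulVec u + 2 * (u ⬝ᵥ Sh.mulVec e) + e ⬝ᵥ Rh.mulVec e
      = (Kx.mulVec u + e) ⬝ᵥ Hh.mulVec (Kx.mulVec u + e)
        + (u ⬝ᵥ Xh.mulVec u
           - (Ah.mulVec u + Bh.mulVec e) ⬝ᵥ Xh.mulVec (Ah.mulVec u + Bh.mulVec e)) := by
  have e1 : Kx *ᵥ u ⬝ᵥ Hh *ᵥ (Kx *ᵥ u) = u ⬝ᵥ (M * Hh⁻¹ * Mᵀ) *ᵥ u := by
    rw [dotProduct_mulVec_flip, mulVec_mulVec, mulVec_mulVec, hKHK]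
  have e2 : Kx *ᵥ u ⬝ᵥ Hh *ᵥ e = u ⬝ᵥ M *ᵥ e := by
    rw [dotProduct_mulVec_flip, mulVec_mulVec, hKH]
  have e3 : e ⬝ᵥ Hh *ᵥ (Kx *ᵥ u) = u ⬝ᵥ M *ᵥ e := by
    rw [mulVec_mulVec, hHK, dotProduct_comm, dotProduct_mulVec_flip, transpose_transpose]
  have f1 : Ah *ᵥ u ⬝ᵥ Xh *ᵥ (Ah *ᵥ u) = u ⬝ᵥ (Ahᵀ * Xh * Ah) *ᵥ u := by
    rw [dotProduct_mulVec_flip, mulVec_mulVec, mulVec_mulVec]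
  have f2 : Ah *ᵥ u ⬝ᵥ Xh *ᵥ (Bh *ᵥ e) = u ⬝ᵥ (Ahᵀ * Xh * Bh) *ᵥ e := by
    rw [dotProduct_mulVec_flip, mulVec_mulVec, mulVec_mulVec]
  have f3 : Bh *ᵥ e ⬝ᵥ Xh *ᵥ (Ah *ᵥ u) = u ⬝ᵥ (Ahᵀ * Xh * Bh) *ᵥ e := by
    rw [dotProduct_mulVec_flip, mulVec_mulVec, mulVec_mulVec,
      dotProduct_comm, dotProduct_mulVec_flip, transpose_mul, transpose_mul,
      transpose_transpose, hX.eq, Matrix.mul_assoc]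
  have f4 : Bh *ᵥ e ⬝ᵥ Xh *ᵥ (Bh *ᵥ e) = e ⬝ᵥ (Bhᵀ * Xh * Bh) *ᵥ e := by
    rw [dotProduct_mulVec_flip, mulVec_mulVec, mulVec_mulVec]
  have g1 : u ⬝ᵥ Qh *ᵥ u
      = u ⬝ᵥ Xh *ᵥ u - u ⬝ᵥ (Ahᵀ * Xh * Ah) *ᵥ u + u ⬝ᵥ (M * Hh⁻¹ * Mᵀ) *ᵥ u := by
    rw [hQeq]; simp [sub_mulVec, add_mulVec, dotProduct_sub, dotProduct_add]
  have g2 : u ⬝ᵥ M *ᵥ e = u ⬝ᵥ (Ahᵀ * Xh * Bh) *ᵥ e + u ⬝ᵥ Sh *ᵥ e := by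
    rw [hM]; simp [add_mulVec, dotProduct_add]
  have g3 : e ⬝ᵥ Hh *ᵥ e = e ⬝ᵥ Rh *ᵥ e + e ⬝ᵥ (Bhᵀ * Xh * Bh) *ᵥ e := by
    rw [hH]; simp [add_mulVec, dotProduct_add]
  simp only [mulVec_add, dotProduct_add, add_dotProduct]
  rw [e1, e2, e3, f1, f2, f3, f4, g1, g2, g3]
  ring

/-- The quadratic cost along the system `x̂_{t+1} = Âx̂_t + B̂d_t` equals the
cost of the intermediate spectral factor output `Ĥ^{1/2}(K̂ₓx̂_t + d_t)`. -/
theorem intermediate_spectral_factor_cost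
    (n q : ℕ)
    (Ah : Matrix (Fin n) (Fin n) ℝ) (Bh : Matrix (Fin n) (Fin q) ℝ)
    (Qh : Matrix (Fin n) (Fin n) ℝ) (hQ : Qh.IsSymm)
    (Sh : Matrix (Fin n) (Fin q) ℝ)
    (Rh : Matrix (Fin q) (Fin q) ℝ) (hR : Rh.IsSymm)
    (Xh : Matrix (Fin n) (Fin n) ℝ) (hX : Xh.IsSymm)
    (Hh : Matrix (Fin q) (Fin q) ℝ) (hH : Hh = Rh + Bhᵀ * Xh * Bh) (hHinv : IsUnit Hh)
    (hDARE : 0 = Xh - Ahᵀ * Xh * Ah - Qh +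
      (Ahᵀ * Xh * Bh + Sh) * Hh⁻¹ * (Ahᵀ * Xh * Bh + Sh)ᵀ)
    (Kx : Matrix (Fin q) (Fin n) ℝ) (hKx : Kx = Hh⁻¹ * (Ahᵀ * Xh * Bh + Sh)ᵀ)
    (xh : ℤ → Fin n → ℝ) (d : ℤ → Fin q → ℝ)
    (hxsq : Summable fun t : ℤ => xh t ⬝ᵥ xh t)
    (hdsq : Summable fun t : ℤ => d t ⬝ᵥ d t)
    (hdyn : ∀ t : ℤ, xh (t + 1) = Ah.mulVec (xh t) + Bh.mulVec (d t)) :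
    Summable (fun t : ℤ =>
      xh t ⬝ᵥ Qh.mulVec (xh t) + 2 * (xh t ⬝ᵥ Sh.mulVec (d t)) + d t ⬝ᵥ Rh.mulVec (d t)) ∧
    Summable (fun t : ℤ =>
      (Kx.mulVec (xh t) + d t) ⬝ᵥ Hh.mulVec (Kx.mulVec (xh t) + d t)) ∧
    (∑' t : ℤ,
      (xh t ⬝ᵥ Qh.mulVec (xh t) + 2 * (xh t ⬝ᵥ Sh.mulVec (d t)) + d t ⬝ᵥ Rh.mulVec (d t))) =
    (∑' t : ℤ,
      ((Kx.mulVec (xh t) + d t) ⬝ᵥ Hh.mulVec (Kx.mulVec (xh t) + d t))) := by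
  -- notation
  set M : Matrix (Fin n) (Fin q) ℝ := Ahᵀ * Xh * Bh + Sh with hM
  -- basic matrix facts
  have hdet : IsUnit Hh.det := (Matrix.isUnit_iff_isUnit_det Hh).mp hHinv
  have hHs : Hhᵀ = Hh := by
    rw [hH]
    simp [transpose_add, transpose_mul, transpose_transpose, hR.eq, hX.eq, Matrix.mul_assoc]
  have hKT : Kxᵀ = M * Hh⁻¹ := by
    rw [hKx, transpose_mul, transpose_transpose, Matrix.transpose_nonsing_inv, hHs]
  have hKH : Kxᵀ * Hh = M := by
    rw [hKT, Matrix.mul_assoc, Matrix.nonsing_inv_mul _ hdet, Matrix.mul_one]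
  have hKHK : Kxᵀ * Hh * Kx = M * Hh⁻¹ * Mᵀ := by
    rw [hKH, hKx, ← Matrix.mul_assoc]
  have hHK : Hh * Kx = Mᵀ := by
    rw [hKx, ← Matrix.mul_assoc, Matrix.mul_nonsing_inv _ hdet, Matrix.one_mul]
  have hQeq : Qh = Xh - Ahᵀ * Xh * Ah + M * Hh⁻¹ * Mᵀ := by
    have h0 : Xh - Ahᵀ * Xh * Ah + M * Hh⁻¹ * Mᵀ - Qh = 0 := by
      rw [show Xh - Ahᵀ * Xh * Ah + M * Hh⁻¹ * Mᵀ - Qh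
          = Xh - Ahᵀ * Xh * Ah - Qh + M * Hh⁻¹ * Mᵀ from by abel, ← hDARE]
    exact (sub_eq_zero.mp h0).symm
  -- the three sequences
  set c : ℤ → ℝ := fun t =>
    xh t ⬝ᵥ Qh.mulVec (xh t) + 2 * (xh t ⬝ᵥ Sh.mulVec (d t)) + d t ⬝ᵥ Rh.mulVec (d t) with hc
  set f : ℤ → ℝ := fun t =>
    (Kx.mulVec (xh t) + d t) ⬝ᵥ Hh.mulVec (Kx.mulVec (xh t) + d t) with hf
  set g : ℤ → ℝ := fun t => xh t ⬝ᵥ Xh.mulVec (xh t) with hg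
  -- pointwise key identity
  have key : ∀ t : ℤ, c t = f t + (g t - g (t + 1)) := by
    intro t
    have h := pointwise_key n q Ah Bh Qh Sh Rh Xh hX Hh Kx M hM hH hQeq hKHK hKH hHK
      (xh t) (d t)
    simp only [hc, hf, hg, hdyn t]
    exact h
  -- summability
  have hsum_c : Summable c :=
    ((summable_bilin_s8 Qh xh xh hxsq hxsq).add
      ((summable_bilin_s8 Sh xh d hxsq hdsq).mul_left 2)).add
      (summable_bilin_s8 Rh d d hdsq hdsq)
  have hfexp : ∀ t : ℤ, f t
      = xh t ⬝ᵥ (Kxᵀ * Hh * Kx) *ᵥ xh t + xh t ⬝ᵥ (Kxᵀ * Hh) *ᵥ d t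
        + d t ⬝ᵥ (Hh * Kx) *ᵥ xh t + d t ⬝ᵥ Hh *ᵥ d t := by
    intro t
    simp only [hf, mulVec_add, dotProduct_add, add_dotProduct, dotProduct_mulVec_flip,
      mulVec_mulVec, Matrix.mul_assoc]
    ring
  have hsum_f : Summable f := by
    refine Summable.congr ?_ (fun t => (hfexp t).symm)
    exact (((summable_bilin_s8 _ xh xh hxsq hxsq).add
      (summable_bilin_s8 _ xh d hxsq hdsq)).add
      (summable_bilin_s8 _ d xh hdsq hxsq)).add (summable_bilin_s8 _ d d hdsq hdsq)
  -- the telescoping part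
  set h : ℤ → ℝ := fun t => g t - g (t + 1) with hh
  have hsum_h : Summable h := by
    refine Summable.congr (hsum_c.sub hsum_f) (fun t => ?_)
    rw [key t]; ring
  -- g tends to zero at cofinite
  have hg0 : Filter.Tendsto g Filter.cofinite (nhds 0) := by
    set C : ℝ := ∑ i, ∑ j, |Xh i j| with hC
    have hbound : ∀ t, |g t| ≤ C * (xh t ⬝ᵥ xh t) := by
      intro t
      have hsq : ∀ k, xh t k ^ 2 ≤ xh t ⬝ᵥ xh t := by
        intro k
        have : xh t k ^ 2 = xh t k * xh t k := by ring
        rw [this]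
        exact Finset.single_le_sum (f := fun k => xh t k * xh t k)
          (fun k _ => mul_self_nonneg _) (Finset.mem_univ k)
      have hxx : ∀ i j, |xh t i * xh t j| ≤ xh t ⬝ᵥ xh t := by
        intro i j
        rw [abs_mul]
        nlinarith [sq_nonneg (|xh t i| - |xh t j|), sq_abs (xh t i), sq_abs (xh t j),
          abs_nonneg (xh t i), abs_nonneg (xh t j), hsq i, hsq j]
      have hgt : g t = ∑ i, ∑ j, Xh i j * (xh t i * xh t j) := by
        simp only [hg, dotProduct, Matrix.mulVec, Finset.mul_sum]
        exact Finset.sum_congr rfl fun i _ => Finset.sum_congr rfl fun j _ => by ring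
      rw [hgt, hC, Finset.sum_mul]
      refine (Finset.abs_sum_le_sum_abs _ _).trans (Finset.sum_le_sum fun i _ => ?_)
      rw [Finset.sum_mul]
      refine (Finset.abs_sum_le_sum_abs _ _).trans (Finset.sum_le_sum fun j _ => ?_)
      rw [abs_mul]
      exact mul_le_mul_of_nonneg_left (hxx i j) (abs_nonneg _)
    have hlim : Filter.Tendsto (fun t => C * (xh t ⬝ᵥ xh t)) Filter.cofinite (nhds 0) := by
      simpa using (hxsq.tendsto_cofinite_zero.const_mul C)
    exact squeeze_zero_norm (fun t => by simpa [Real.norm_eq_abs] using hbound t) hlim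
  -- the two boundary sequences tend to zero
  have hneg : Filter.Tendsto (fun N : ℕ => (-(N : ℤ))) Filter.atTop Filter.cofinite := by
    rw [← Nat.cofinite_eq_atTop]
    exact Function.Injective.tendsto_cofinite (fun a b hab => by omega)
  have hsucc : Filter.Tendsto (fun N : ℕ => ((N : ℤ) + 1)) Filter.atTop Filter.cofinite := by
    rw [← Nat.cofinite_eq_atTop]
    exact Function.Injective.tendsto_cofinite (fun a b hab => by omega)
  have h2 : Filter.Tendsto (fun N : ℕ => g (-(N : ℤ)) - g ((N : ℤ) + 1))
      Filter.atTop (nhds 0) := by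
    simpa using (hg0.comp hneg).sub (hg0.comp hsucc)
  -- partial sums over Icc converge to the tsum
  have hIcc : Filter.Tendsto (fun N : ℕ => Finset.Icc (-(N : ℤ)) (N : ℤ))
      Filter.atTop Filter.atTop := by
    refine Filter.tendsto_atTop_finset_of_monotone ?_ ?_
    · intro a b hab x hx
      simp only [Finset.mem_Icc] at *
      omega
    · intro a
      exact ⟨a.natAbs, by simp only [Finset.mem_Icc]; omega⟩
  have h1 : Filter.Tendsto (fun N : ℕ => ∑ t ∈ Finset.Icc (-(N : ℤ)) (N : ℤ), h t)
      Filter.atTop (nhds (∑' t, h t)) := hsum_h.hasSum.comp hIcc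
  have h1' : Filter.Tendsto (fun N : ℕ => g (-(N : ℤ)) - g ((N : ℤ) + 1))
      Filter.atTop (nhds (∑' t, h t)) := by
    refine h1.congr (fun N => ?_)
    exact telescope_Icc g (-(N : ℤ)) (N : ℤ) (by omega)
  have hS0 : (∑' t, h t) = 0 := tendsto_nhds_unique h1' h2
  -- conclude
  refine ⟨hsum_c, hsum_f, ?_⟩
  have hsub : (∑' t, (c t - f t)) = (∑' t, c t) - (∑' t, f t) := Summable.tsum_sub hsum_c hsum_f
  have hcf : (∑' t, (c t - f t)) = 0 := by
    rw [tsum_congr (fun t => by rw [key t]; ring : ∀ t : ℤ, c t - f t = h t)]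
    exact hS0
  have := hsub.symm.trans hcf
  linarith [this]
end
end

section
/- (Discrete-time spectral factorization, transfer-function form.) Let Â ∈ ℝ^{n×n} be invertible, B̂ ∈ ℝ^{n×q}, Ĉ ∈ ℝ^{p×n}, D̂ ∈ ℝ^{p×q}, and set Q̂ := ĈᵀĈ, Ŝ := ĈᵀD̂, R̂ := D̂ᵀD̂. Suppose X̂ is a symmetric matrix with Ĥ := R̂ + B̂ᵀX̂B̂ positive definite satisfying the DARE 0 = X̂ − ÂᵀX̂Â − Q̂ + (ÂᵀX̂B̂ + Ŝ)Ĥ⁻¹(ÂᵀX̂B̂ + Ŝ)ᵀ, with gain K̂_x := Ĥ⁻¹(ÂᵀX̂B̂ + Ŝ)ᵀ. Suppose Ŷ is a symmetric matrix with Ŵ := Ĥ⁻¹ + K̂_xŶK̂_xᵀ positive definite satisfying the DARE Ŷ = ÂŶÂᵀ − (ÂŶK̂_xᵀ)Ŵ⁻¹(ÂŶK̂_xᵀ)ᵀ, with gain K̂_y := Ŵ⁻¹K̂_xŶÂᵀ. Define A_F := Â − K̂_yᵀK̂_x, B_F := B̂ − K̂_yᵀ, C_F := Ŵ^{−1/2}K̂_x,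 D_F := Ŵ^{−1/2}, where Ŵ^{−1/2} is the inverse of the symmetric positive definite square root of Ŵ. Then: (1) A_F − B_FD_F⁻¹C_F = Â − B̂K̂_x; and (2) for every nonzero z ∈ ℂ such that neither z nor z⁻¹ is an eigenvalue of Â or of A_F, the transfer functions P̂(z) := Ĉ(zI − Â)⁻¹B̂ + D̂ and F(z) := C_F(zI − A_F)⁻¹B_F + D_F (viewed as complex matrices) satisfy P̂(z⁻¹)ᵀP̂(z) = F(z⁻¹)ᵀF(z). -/
open Matrix

noncomputable section


set_option maxHeartbeats 1000000 in
theorem aux_spec {n q p : ℕ} (z : ℂ) (hz : z ≠ 0)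
    (A : Matrix (Fin n) (Fin n) ℂ) (B : Matrix (Fin n) (Fin q) ℂ)
    (C : Matrix (Fin p) (Fin n) ℂ) (D : Matrix (Fin p) (Fin q) ℂ)
    (X Y : Matrix (Fin n) (Fin n) ℂ) (hX : Xᵀ = X) (hY : Yᵀ = Y)
    (H Hi : Matrix (Fin q) (Fin q) ℂ)
    (hH : H = Dᵀ * D + Bᵀ * X * B) (hHHi : H * Hi = 1) (hHiH : Hi * H = 1)
    (hHit : Hiᵀ = Hi)
    (hQ : Cᵀ * C = X - Aᵀ * X * A +
      (Aᵀ * X * B + Cᵀ * D) * Hi * (Aᵀ * X * B + Cᵀ * D)ᵀ)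
    (K : Matrix (Fin q) (Fin n) ℂ) (hK : K = Hi * (Aᵀ * X * B + Cᵀ * D)ᵀ)
    (W Wi : Matrix (Fin q) (Fin q) ℂ)
    (hW : W = Hi + K * Y * Kᵀ) (hWWi : W * Wi = 1) (hWiW : Wi * W = 1)
    (hDAREY : Y = A * Y * Aᵀ - A * Y * Kᵀ * Wi * (A * Y * Kᵀ)ᵀ)
    (Ky : Matrix (Fin q) (Fin n) ℂ) (hKy : Ky = Wi * (A * Y * Kᵀ)ᵀ)
    (Rt Ri : Matrix (Fin q) (Fin q) ℂ)
    (hRt2 : Rt * Rt = W) (hRtt : Rtᵀ = Rt) (hRtRi : Rt * Ri = 1) (hRiRt : Ri * Rt = 1)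
    (AF : Matrix (Fin n) (Fin n) ℂ) (hAF : AF = A - Kyᵀ * K)
    (BF : Matrix (Fin n) (Fin q) ℂ) (hBF : BF = B - Kyᵀ)
    (hu1 : IsUnit (z • (1 : Matrix (Fin n) (Fin n) ℂ) - A).det)
    (hu2 : IsUnit (z⁻¹ • (1 : Matrix (Fin n) (Fin n) ℂ) - A).det)
    (hu3 : IsUnit (z • (1 : Matrix (Fin n) (Fin n) ℂ) - AF).det)
    (hu4 : IsUnit (z⁻¹ • (1 : Matrix (Fin n) (Fin n) ℂ) - AF).det) :
    (C * (z⁻¹ • (1 : Matrix (Fin n) (Fin n) ℂ) - A)⁻¹ * B + D)ᵀ *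
      (C * (z • (1 : Matrix (Fin n) (Fin n) ℂ) - A)⁻¹ * B + D) =
    (Ri * K * (z⁻¹ • (1 : Matrix (Fin n) (Fin n) ℂ) - AF)⁻¹ * BF + Ri)ᵀ *
      (Ri * K * (z • (1 : Matrix (Fin n) (Fin n) ℂ) - AF)⁻¹ * BF + Ri) := by
  have hzz : z⁻¹ * z = 1 := inv_mul_cancel₀ hz
  have hzz2 : z * z⁻¹ = 1 := mul_inv_cancel₀ hz
  set Zp := z • (1 : Matrix (Fin n) (Fin n) ℂ) - A with hZp
  set Zm := z⁻¹ • (1 : Matrix (Fin n) (Fin n) ℂ) - A with hZm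
  set Fp := z • (1 : Matrix (Fin n) (Fin n) ℂ) - AF with hFp
  set Fm := z⁻¹ • (1 : Matrix (Fin n) (Fin n) ℂ) - AF with hFm
  have hZmT : Zmᵀ = z⁻¹ • (1 : Matrix (Fin n) (Fin n) ℂ) - Aᵀ := by
    rw [hZm]; simp [Matrix.transpose_sub, Matrix.transpose_smul, Matrix.transpose_one]
  have hFmT : Fmᵀ = z⁻¹ • (1 : Matrix (Fin n) (Fin n) ℂ) - AFᵀ := by
    rw [hFm]; simp [Matrix.transpose_sub, Matrix.transpose_smul, Matrix.transpose_one]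
  have dZmT : IsUnit Zmᵀ.det := by rwa [Matrix.det_transpose]
  have dFmT : IsUnit Fmᵀ.det := by rwa [Matrix.det_transpose]
  -- cancellation helpers
  have cZp1 : ∀ (M : Matrix (Fin n) (Fin q) ℂ), Zp * (Zp⁻¹ * M) = M :=
    fun M => Matrix.mul_nonsing_inv_cancel_left _ M hu1
  have cZp2 : ∀ (M : Matrix (Fin n) (Fin q) ℂ), Zp⁻¹ * (Zp * M) = M :=
    fun M => Matrix.nonsing_inv_mul_cancel_left _ M hu1
  have cZmT1 : ∀ (M : Matrix (Fin n) (Fin q) ℂ), Zmᵀ * (Zmᵀ⁻¹ * M) = M :=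
    fun M => Matrix.mul_nonsing_inv_cancel_left _ M dZmT
  have cZmT2 : ∀ (M : Matrix (Fin n) (Fin q) ℂ), Zmᵀ⁻¹ * (Zmᵀ * M) = M :=
    fun M => Matrix.nonsing_inv_mul_cancel_left _ M dZmT
  have cFp1 : ∀ (M : Matrix (Fin n) (Fin q) ℂ), Fp * (Fp⁻¹ * M) = M :=
    fun M => Matrix.mul_nonsing_inv_cancel_left _ M hu3
  have cFp2 : ∀ (M : Matrix (Fin n) (Fin q) ℂ), Fp⁻¹ * (Fp * M) = M :=
    fun M => Matrix.nonsing_inv_mul_cancel_left _ M hu3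
  have cFmT1 : ∀ (M : Matrix (Fin n) (Fin q) ℂ), Fmᵀ * (Fmᵀ⁻¹ * M) = M :=
    fun M => Matrix.mul_nonsing_inv_cancel_left _ M dFmT
  have cFmT2 : ∀ (M : Matrix (Fin n) (Fin q) ℂ), Fmᵀ⁻¹ * (Fmᵀ * M) = M :=
    fun M => Matrix.nonsing_inv_mul_cancel_left _ M dFmT
  have cW : ∀ {m : Type} (M : Matrix (Fin q) m ℂ), W * (Wi * M) = M :=
    fun {m} M => by rw [← Matrix.mul_assoc, hWWi, Matrix.one_mul]
  have cWi : ∀ {m : Type} (M : Matrix (Fin q) m ℂ), Wi * (W * M) = M :=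
    fun {m} M => by rw [← Matrix.mul_assoc, hWiW, Matrix.one_mul]
  -- symmetry of Wi and Ri
  have hWt : Wᵀ = W := by
    rw [hW]; simp only [Matrix.transpose_add, Matrix.transpose_mul,
      Matrix.transpose_transpose, hHit, hY, Matrix.mul_assoc]
  have hWit : Wiᵀ = Wi := by
    have h1 : Wiᵀ * W = 1 := by rw [← hWt, ← Matrix.transpose_mul, hWWi, Matrix.transpose_one]
    calc Wiᵀ = Wiᵀ * (W * Wi) := by rw [hWWi, Matrix.mul_one]
      _ = (Wiᵀ * W) * Wi := by rw [Matrix.mul_assoc]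
      _ = Wi := by rw [h1, Matrix.one_mul]
  have hRit : Riᵀ = Ri := by
    have h1 : Riᵀ * Rt = 1 := by
      calc Riᵀ * Rt = Riᵀ * Rtᵀ := by rw [hRtt]
        _ = (Rt * Ri)ᵀ := by rw [Matrix.transpose_mul]
        _ = 1 := by rw [hRtRi, Matrix.transpose_one]
    calc Riᵀ = Riᵀ * (Rt * Ri) := by rw [hRtRi, Matrix.mul_one]
      _ = (Riᵀ * Rt) * Ri := by rw [Matrix.mul_assoc]
      _ = Ri := by rw [h1, Matrix.one_mul]
  have hRiRi : Ri * Ri = Wi := by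
    have h1 : (Ri * Ri) * W = 1 := by
      rw [← hRt2, Matrix.mul_assoc, ← Matrix.mul_assoc Ri Rt Rt, hRiRt, Matrix.one_mul, hRiRt]
    calc Ri * Ri = ((Ri * Ri) * W) * Wi := by rw [Matrix.mul_assoc, hWWi, Matrix.mul_one]
      _ = Wi := by rw [h1, Matrix.one_mul]
  -- rewrite the transposes in the goal
  have tL : (C * Zm⁻¹ * B + D)ᵀ = Bᵀ * (Zmᵀ⁻¹ * Cᵀ) + Dᵀ := by
    simp [Matrix.transpose_add, Matrix.transpose_mul, Matrix.transpose_nonsing_inv,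
      Matrix.mul_assoc]
  have tR : (Ri * K * Fm⁻¹ * BF + Ri)ᵀ = BFᵀ * (Fmᵀ⁻¹ * (Kᵀ * Ri)) + Ri := by
    simp [Matrix.transpose_add, Matrix.transpose_mul, Matrix.transpose_nonsing_inv,
      hRit, Matrix.mul_assoc]
  rw [tL, tR]
  set L := Aᵀ * X * B + Cᵀ * D with hL
  -- basic facts about K, H, L
  have hKt : Kᵀ = L * Hi := by
    rw [hK, Matrix.transpose_mul, Matrix.transpose_transpose, hHit]
  have hHK : H * K = Lᵀ := by rw [hK, ← Matrix.mul_assoc, hHHi, Matrix.one_mul]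
  have hKtH : Kᵀ * H = L := by rw [hKt, Matrix.mul_assoc, hHiH, Matrix.mul_one]
  ------------------------------------------------------------------
  -- STEP A : P~ P = M~ H M
  ------------------------------------------------------------------
  have splitX : X - Aᵀ * X * A =
      Zmᵀ * (X * Zp) + Zmᵀ * (X * A) + Aᵀ * (X * Zp) := by
    rw [hZmT, hZp]
    simp only [Matrix.sub_mul, Matrix.mul_sub, smul_mul_assoc, mul_smul_comm, one_mul,
      mul_one, smul_smul, smul_add, smul_sub, smul_neg, hzz, hzz2, one_smul,
      Matrix.mul_assoc]
    abel
  have hQ' : Cᵀ * C = Zmᵀ * (X * Zp) + Zmᵀ * (X * A) + Aᵀ * (X * Zp) + L * (Hi * Lᵀ) := by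
    rw [hQ, splitX, Matrix.mul_assoc]
  have e1 : Cᵀ * (C * (Zp⁻¹ * B)) =
      Zmᵀ * (X * B) + Zmᵀ * (X * (A * (Zp⁻¹ * B))) + Aᵀ * (X * B) +
        L * (Hi * (Lᵀ * (Zp⁻¹ * B))) := by
    calc Cᵀ * (C * (Zp⁻¹ * B)) = (Cᵀ * C) * (Zp⁻¹ * B) := by rw [Matrix.mul_assoc]
      _ = _ := by rw [hQ']; simp only [Matrix.add_mul, Matrix.mul_assoc, cZp1]
  have e2 : Cᵀ * D = L - Aᵀ * (X * B) := by
    rw [hL]; simp only [Matrix.mul_assoc]; abel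
  have e3 : Dᵀ * (C * (Zp⁻¹ * B)) = Lᵀ * (Zp⁻¹ * B) - Bᵀ * (X * (A * (Zp⁻¹ * B))) := by
    have hDC : Dᵀ * C = Lᵀ - Bᵀ * (X * A) := by
      rw [hL]; simp only [Matrix.transpose_add, Matrix.transpose_mul,
        Matrix.transpose_transpose, hX, Matrix.mul_assoc]; abel
    rw [← Matrix.mul_assoc, hDC, Matrix.sub_mul]
    simp only [Matrix.mul_assoc]
  have e4 : H * (K * (Zp⁻¹ * B)) = Lᵀ * (Zp⁻¹ * B) := by
    rw [← Matrix.mul_assoc, hHK]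
  have e6 : Kᵀ * (Lᵀ * (Zp⁻¹ * B)) = L * (Hi * (Lᵀ * (Zp⁻¹ * B))) := by
    rw [hKt, Matrix.mul_assoc]
  have stepA : (Bᵀ * (Zmᵀ⁻¹ * Cᵀ) + Dᵀ) * (C * Zp⁻¹ * B + D)
      = (1 + Bᵀ * (Zmᵀ⁻¹ * Kᵀ)) * (H * (1 + K * (Zp⁻¹ * B))) := by
    simp only [Matrix.add_mul, Matrix.mul_add, Matrix.mul_one, Matrix.one_mul,
      Matrix.mul_assoc]
    rw [e1, e2, e3]
    simp only [e4]
    rw [e6, hKtH, hH]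
    simp only [Matrix.mul_add, Matrix.add_mul, Matrix.mul_sub, Matrix.sub_mul,
      Matrix.mul_assoc, cZmT2]
    abel
  ------------------------------------------------------------------
  -- facts about Ky, W, Y
  ------------------------------------------------------------------
  have hKyt : Kyᵀ = A * (Y * (Kᵀ * Wi)) := by
    rw [hKy, Matrix.transpose_mul, Matrix.transpose_transpose, hWit]
    simp only [Matrix.mul_assoc]
  have hKytW0 : Kyᵀ * W = A * (Y * Kᵀ) := by
    rw [hKyt]
    calc A * (Y * (Kᵀ * Wi)) * W = A * (Y * (Kᵀ * (Wi * W))) := by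
          simp only [Matrix.mul_assoc]
      _ = A * (Y * Kᵀ) := by rw [hWiW, Matrix.mul_one]
  have hKytW : ∀ (M : Matrix (Fin q) (Fin q) ℂ), Kyᵀ * (W * M) = A * (Y * (Kᵀ * M)) := by
    intro M
    calc Kyᵀ * (W * M) = (Kyᵀ * W) * M := by rw [Matrix.mul_assoc]
      _ = A * (Y * Kᵀ) * M := by rw [hKytW0]
      _ = _ := by simp only [Matrix.mul_assoc]
  have hWKy : ∀ (M : Matrix (Fin n) (Fin q) ℂ), W * (Ky * M) = K * (Y * (Aᵀ * M)) := by
    intro M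
    have hKy' : Ky = Wi * (K * (Y * Aᵀ)) := by
      rw [hKy, Matrix.transpose_mul, Matrix.transpose_mul, Matrix.transpose_transpose,
        hY]
    rw [hKy']
    calc W * (Wi * (K * (Y * Aᵀ)) * M) = W * (Wi * (K * (Y * Aᵀ) * M)) := by
          simp only [Matrix.mul_assoc]
      _ = K * (Y * Aᵀ) * M := cW _
      _ = _ := by simp only [Matrix.mul_assoc]
  have base0 : A * Y * Aᵀ - Y = A * Y * Kᵀ * Wi * (A * Y * Kᵀ)ᵀ := by
    nth_rewrite 2 [hDAREY]
    abel
  have hAYKK : A * Y * Kᵀ * Ky = A * Y * Aᵀ - Y := by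
    rw [hKy, ← Matrix.mul_assoc, ← base0]
  have keyY : ∀ (M : Matrix (Fin n) (Fin q) ℂ),
      A * (Y * (Kᵀ * (Ky * M))) = A * (Y * (Aᵀ * M)) - Y * M := by
    intro M
    calc A * (Y * (Kᵀ * (Ky * M))) = (A * Y * Kᵀ * Ky) * M := by
          simp only [Matrix.mul_assoc]
      _ = (A * Y * Aᵀ - Y) * M := by rw [hAYKK]
      _ = _ := by simp only [Matrix.sub_mul, Matrix.mul_assoc]
  ------------------------------------------------------------------
  -- STEP C1 : U W U~ = Hi
  ------------------------------------------------------------------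
  have split2 : A * (Y * Aᵀ) - Y =
      -(Zp * (Y * Zmᵀ)) - Zp * (Y * Aᵀ) - A * (Y * Zmᵀ) := by
    rw [hZmT, hZp]
    simp only [Matrix.sub_mul, Matrix.mul_sub, smul_mul_assoc, mul_smul_comm, one_mul,
      mul_one, smul_smul, smul_add, smul_sub, smul_neg, hzz, hzz2, one_smul,
      Matrix.mul_assoc]
    abel
  have zmid : Y * Kᵀ + (Y * (Aᵀ * (Zmᵀ⁻¹ * Kᵀ)) + (Zp⁻¹ * (A * (Y * Kᵀ)) +
      Zp⁻¹ * ((A * (Y * Aᵀ) - Y) * (Zmᵀ⁻¹ * Kᵀ)))) = 0 := by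
    rw [split2]
    simp only [Matrix.sub_mul, Matrix.neg_mul, Matrix.mul_sub, Matrix.mul_neg,
      Matrix.mul_assoc, cZp2, cZmT1]
    abel
  have r4 : Kyᵀ * (W * (Ky * (Zmᵀ⁻¹ * Kᵀ))) =
      A * (Y * (Aᵀ * (Zmᵀ⁻¹ * Kᵀ))) - Y * (Zmᵀ⁻¹ * Kᵀ) := by
    rw [hKytW, keyY]
  have c1 : (1 + K * (Zp⁻¹ * Kyᵀ)) * (W * (1 + Ky * (Zmᵀ⁻¹ * Kᵀ))) = Hi := by
    have expand : (1 + K * (Zp⁻¹ * Kyᵀ)) * (W * (1 + Ky * (Zmᵀ⁻¹ * Kᵀ))) =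
        Hi + K * (Y * Kᵀ + (Y * (Aᵀ * (Zmᵀ⁻¹ * Kᵀ)) + (Zp⁻¹ * (A * (Y * Kᵀ)) +
          Zp⁻¹ * ((A * (Y * Aᵀ) - Y) * (Zmᵀ⁻¹ * Kᵀ))))) := by
      simp only [Matrix.mul_add, Matrix.add_mul, Matrix.mul_one, Matrix.one_mul,
        Matrix.mul_assoc]
      rw [r4]
      rw [hWKy, hKytW0, hW]
      simp only [Matrix.mul_add, Matrix.add_mul, Matrix.mul_sub, Matrix.sub_mul,
        Matrix.mul_assoc]
      abel
    rw [expand, zmid, Matrix.mul_zero, add_zero]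
  ------------------------------------------------------------------
  -- Resolvent identities
  ------------------------------------------------------------------
  have hFpZK : Kyᵀ * K = Fp - Zp := by rw [hFp, hZp, hAF]; abel
  have hFmZK : Kᵀ * Ky = Fmᵀ - Zmᵀ := by
    rw [hFmT, hZmT, hAF]
    simp only [Matrix.transpose_sub, Matrix.transpose_mul, Matrix.transpose_transpose]
    abel
  have R1 : Zp⁻¹ - Fp⁻¹ = Zp⁻¹ * ((Kyᵀ * K) * Fp⁻¹) := by
    rw [hFpZK, Matrix.sub_mul, Matrix.mul_sub, Matrix.mul_nonsing_inv _ hu3,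
      Matrix.mul_one, Matrix.nonsing_inv_mul_cancel_left _ _ hu1]
  have R1' : Zp⁻¹ - Fp⁻¹ = Fp⁻¹ * ((Kyᵀ * K) * Zp⁻¹) := by
    rw [hFpZK, Matrix.sub_mul, Matrix.mul_sub, Matrix.mul_nonsing_inv _ hu1,
      Matrix.mul_one, Matrix.nonsing_inv_mul_cancel_left _ _ hu3]
  have R2 : Zmᵀ⁻¹ - Fmᵀ⁻¹ = Zmᵀ⁻¹ * ((Kᵀ * Ky) * Fmᵀ⁻¹) := by
    rw [hFmZK, Matrix.sub_mul, Matrix.mul_sub, Matrix.mul_nonsing_inv _ dFmT,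
      Matrix.mul_one, Matrix.nonsing_inv_mul_cancel_left _ _ dZmT]
  have R2' : Zmᵀ⁻¹ - Fmᵀ⁻¹ = Fmᵀ⁻¹ * ((Kᵀ * Ky) * Zmᵀ⁻¹) := by
    rw [hFmZK, Matrix.sub_mul, Matrix.mul_sub, Matrix.mul_nonsing_inv _ dZmT,
      Matrix.mul_one, Matrix.nonsing_inv_mul_cancel_left _ _ dFmT]
  -- instantiated resolvent rewrites
  have q1 : K * (Zp⁻¹ * (Kyᵀ * (K * (Fp⁻¹ * Kyᵀ)))) =
      K * (Zp⁻¹ * Kyᵀ) - K * (Fp⁻¹ * Kyᵀ) := by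
    have h := congrArg (fun M => K * (M * Kyᵀ)) R1
    simp only [Matrix.sub_mul, Matrix.mul_sub, Matrix.mul_assoc] at h
    exact h.symm
  have q2 : K * (Fp⁻¹ * (Kyᵀ * (K * (Zp⁻¹ * Kyᵀ)))) =
      K * (Zp⁻¹ * Kyᵀ) - K * (Fp⁻¹ * Kyᵀ) := by
    have h := congrArg (fun M => K * (M * Kyᵀ)) R1'
    simp only [Matrix.sub_mul, Matrix.mul_sub, Matrix.mul_assoc] at h
    exact h.symm
  have q3 : Ky * (Zmᵀ⁻¹ * (Kᵀ * (Ky * (Fmᵀ⁻¹ * Kᵀ)))) =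
      Ky * (Zmᵀ⁻¹ * Kᵀ) - Ky * (Fmᵀ⁻¹ * Kᵀ) := by
    have h := congrArg (fun M => Ky * (M * Kᵀ)) R2
    simp only [Matrix.sub_mul, Matrix.mul_sub, Matrix.mul_assoc] at h
    exact h.symm
  have q4 : Ky * (Fmᵀ⁻¹ * (Kᵀ * (Ky * (Zmᵀ⁻¹ * Kᵀ)))) =
      Ky * (Zmᵀ⁻¹ * Kᵀ) - Ky * (Fmᵀ⁻¹ * Kᵀ) := by
    have h := congrArg (fun M => Ky * (M * Kᵀ)) R2'
    simp only [Matrix.sub_mul, Matrix.mul_sub, Matrix.mul_assoc] at h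
    exact h.symm
  have q5 : K * (Fp⁻¹ * (Kyᵀ * (K * (Zp⁻¹ * B)))) =
      K * (Zp⁻¹ * B) - K * (Fp⁻¹ * B) := by
    have h := congrArg (fun M => K * (M * B)) R1'
    simp only [Matrix.sub_mul, Matrix.mul_sub, Matrix.mul_assoc] at h
    exact h.symm
  have q6 : Bᵀ * (Zmᵀ⁻¹ * (Kᵀ * (Ky * (Fmᵀ⁻¹ * Kᵀ)))) =
      Bᵀ * (Zmᵀ⁻¹ * Kᵀ) - Bᵀ * (Fmᵀ⁻¹ * Kᵀ) := by
    have h := congrArg (fun M => Bᵀ * (M * Kᵀ)) R2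
    simp only [Matrix.sub_mul, Matrix.mul_sub, Matrix.mul_assoc] at h
    exact h.symm
  -- U V = 1 etc.
  have vu : (1 - K * (Fp⁻¹ * Kyᵀ)) * (1 + K * (Zp⁻¹ * Kyᵀ)) = 1 := by
    simp only [Matrix.mul_add, Matrix.add_mul, Matrix.mul_sub, Matrix.sub_mul,
      Matrix.mul_one, Matrix.one_mul, Matrix.mul_assoc]
    rw [q2]
    abel
  have u'v' : (1 + Ky * (Zmᵀ⁻¹ * Kᵀ)) * (1 - Ky * (Fmᵀ⁻¹ * Kᵀ)) = 1 := by
    simp only [Matrix.mul_add, Matrix.add_mul, Matrix.mul_sub, Matrix.sub_mul,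
      Matrix.mul_one, Matrix.one_mul, Matrix.mul_assoc]
    rw [q3]
    abel
  have v'u' : (1 - Ky * (Fmᵀ⁻¹ * Kᵀ)) * (1 + Ky * (Zmᵀ⁻¹ * Kᵀ)) = 1 := by
    simp only [Matrix.mul_add, Matrix.add_mul, Matrix.mul_sub, Matrix.sub_mul,
      Matrix.mul_one, Matrix.one_mul, Matrix.mul_assoc]
    rw [q4]
    abel
  -- b1, b2
  have b1 : (1 - K * (Fp⁻¹ * Kyᵀ)) * (1 + K * (Zp⁻¹ * B)) = 1 + K * (Fp⁻¹ * BF) := by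
    rw [hBF]
    simp only [Matrix.mul_add, Matrix.add_mul, Matrix.mul_sub, Matrix.sub_mul,
      Matrix.mul_one, Matrix.one_mul, Matrix.mul_assoc]
    rw [q5]
    abel
  have b2 : (1 + Bᵀ * (Zmᵀ⁻¹ * Kᵀ)) * (1 - Ky * (Fmᵀ⁻¹ * Kᵀ)) =
      1 + BFᵀ * (Fmᵀ⁻¹ * Kᵀ) := by
    have hBFt : BFᵀ = Bᵀ - Ky := by
      rw [hBF]; simp [Matrix.transpose_sub, Matrix.transpose_transpose]
    rw [hBFt]
    simp only [Matrix.mul_add, Matrix.add_mul, Matrix.mul_sub, Matrix.sub_mul,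
      Matrix.mul_one, Matrix.one_mul, Matrix.mul_assoc]
    rw [q6]
    abel
  -- c2 : V~ Wi V = H
  have c2 : (1 - Ky * (Fmᵀ⁻¹ * Kᵀ)) * (Wi * (1 - K * (Fp⁻¹ * Kyᵀ))) = H := by
    have e1' : (1 - K * (Fp⁻¹ * Kyᵀ)) * Hi = W * (1 + Ky * (Zmᵀ⁻¹ * Kᵀ)) := by
      rw [← c1, ← Matrix.mul_assoc, vu, Matrix.one_mul]
    have e2' : Wi * ((1 - K * (Fp⁻¹ * Kyᵀ)) * Hi) = 1 + Ky * (Zmᵀ⁻¹ * Kᵀ) := by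
      rw [e1', ← Matrix.mul_assoc, hWiW, Matrix.one_mul]
    have e3' : (1 - Ky * (Fmᵀ⁻¹ * Kᵀ)) * (Wi * ((1 - K * (Fp⁻¹ * Kyᵀ)) * Hi)) = 1 := by
      rw [e2', v'u']
    calc (1 - Ky * (Fmᵀ⁻¹ * Kᵀ)) * (Wi * (1 - K * (Fp⁻¹ * Kyᵀ)))
        = (1 - Ky * (Fmᵀ⁻¹ * Kᵀ)) * (Wi * (1 - K * (Fp⁻¹ * Kyᵀ))) * (Hi * H) := by
          rw [hHiH, Matrix.mul_one]
      _ = ((1 - Ky * (Fmᵀ⁻¹ * Kᵀ)) * (Wi * ((1 - K * (Fp⁻¹ * Kyᵀ)) * Hi))) * H := by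
          simp only [Matrix.mul_assoc]
      _ = H := by rw [e3', Matrix.one_mul]
  ------------------------------------------------------------------
  -- final assembly
  ------------------------------------------------------------------
  have rhsEq : (BFᵀ * (Fmᵀ⁻¹ * (Kᵀ * Ri)) + Ri) * (Ri * K * Fp⁻¹ * BF + Ri) =
      (1 + BFᵀ * (Fmᵀ⁻¹ * Kᵀ)) * (Wi * (1 + K * (Fp⁻¹ * BF))) := by
    have cRiRi : ∀ {m : Type} (M : Matrix (Fin q) m ℂ), Ri * (Ri * M) = Wi * M :=
      fun {m} M => by rw [← Matrix.mul_assoc, hRiRi]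
    simp only [Matrix.mul_add, Matrix.add_mul, Matrix.mul_one, Matrix.one_mul,
      Matrix.mul_assoc, cRiRi, hRiRi]
    abel
  rw [rhsEq, stepA, ← b1, ← b2, ← c2]
  simp only [Matrix.mul_assoc]

/-- Discrete-time spectral factorization in transfer-function form
(Lemma A.2 of the paper): `P̂∼(z)P̂(z) = F∼(z)F(z)` and
`A_F − B_F D_F⁻¹ C_F = Â − B̂K̂ₓ`. -/
theorem spectral_factorization_transfer
    (n q p : ℕ)
    (Ah : Matrix (Fin n) (Fin n) ℝ) (hAinv : IsUnit Ah)
    (Bh : Matrix (Fin n) (Fin q) ℝ)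
    (Ch : Matrix (Fin p) (Fin n) ℝ) (Dh : Matrix (Fin p) (Fin q) ℝ)
    (Qh : Matrix (Fin n) (Fin n) ℝ) (Sh : Matrix (Fin n) (Fin q) ℝ)
    (Rh : Matrix (Fin q) (Fin q) ℝ)
    (hQ : Qh = Chᵀ * Ch) (hS : Sh = Chᵀ * Dh) (hR : Rh = Dhᵀ * Dh)
    (Xh : Matrix (Fin n) (Fin n) ℝ) (hXsymm : Xh.IsSymm)
    (Hh : Matrix (Fin q) (Fin q) ℝ) (hHdef : Hh = Rh + Bhᵀ * Xh * Bh)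
    (hHpd : Hh.PosDef)
    (hDAREX : 0 = Xh - Ahᵀ * Xh * Ah - Qh +
      (Ahᵀ * Xh * Bh + Sh) * Hh⁻¹ * (Ahᵀ * Xh * Bh + Sh)ᵀ)
    (Kx : Matrix (Fin q) (Fin n) ℝ) (hKx : Kx = Hh⁻¹ * (Ahᵀ * Xh * Bh + Sh)ᵀ)
    (Yh : Matrix (Fin n) (Fin n) ℝ) (hYsymm : Yh.IsSymm)
    (Wh : Matrix (Fin q) (Fin q) ℝ) (hWdef : Wh = Hh⁻¹ + Kx * Yh * Kxᵀ)
    (hWpd : Wh.PosDef)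
    (hDAREY : Yh = Ah * Yh * Ahᵀ - (Ah * Yh * Kxᵀ) * Wh⁻¹ * (Ah * Yh * Kxᵀ)ᵀ)
    (Ky : Matrix (Fin q) (Fin n) ℝ) (hKy : Ky = Wh⁻¹ * (Ah * Yh * Kxᵀ)ᵀ)
    (Whalf : Matrix (Fin q) (Fin q) ℝ) (hWhalf : Whalf =
      (hWpd.posSemidef.1.eigenvectorUnitary : Matrix (Fin q) (Fin q) ℝ) *
        diagonal (Real.sqrt ∘ hWpd.posSemidef.1.eigenvalues) *
        (star hWpd.posSemidef.1.eigenvectorUnitary : Matrix (Fin q) (Fin q) ℝ))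
    (AF : Matrix (Fin n) (Fin n) ℝ) (hAF : AF = Ah - Kyᵀ * Kx)
    (BF : Matrix (Fin n) (Fin q) ℝ) (hBF : BF = Bh - Kyᵀ)
    (CF : Matrix (Fin q) (Fin n) ℝ) (hCF : CF = Whalf⁻¹ * Kx)
    (DF : Matrix (Fin q) (Fin q) ℝ) (hDF : DF = Whalf⁻¹) :
    (AF - BF * DF⁻¹ * CF = Ah - Bh * Kx) ∧
    (∀ z : ℂ, z ≠ 0 →
      z ∉ spectrum ℂ (Ah.map (algebraMap ℝ ℂ)) →
      z⁻¹ ∉ spectrum ℂ (Ah.map (algebraMap ℝ ℂ)) →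
      z ∉ spectrum ℂ (AF.map (algebraMap ℝ ℂ)) →
      z⁻¹ ∉ spectrum ℂ (AF.map (algebraMap ℝ ℂ)) →
      (Ch.map (algebraMap ℝ ℂ) *
          (z⁻¹ • (1 : Matrix (Fin n) (Fin n) ℂ) - Ah.map (algebraMap ℝ ℂ))⁻¹ *
          Bh.map (algebraMap ℝ ℂ) + Dh.map (algebraMap ℝ ℂ))ᵀ *
        (Ch.map (algebraMap ℝ ℂ) *
          (z • (1 : Matrix (Fin n) (Fin n) ℂ) - Ah.map (algebraMap ℝ ℂ))⁻¹ *
          Bh.map (algebraMap ℝ ℂ) + Dh.map (algebraMap ℝ ℂ)) =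
      (CF.map (algebraMap ℝ ℂ) *
          (z⁻¹ • (1 : Matrix (Fin n) (Fin n) ℂ) - AF.map (algebraMap ℝ ℂ))⁻¹ *
          BF.map (algebraMap ℝ ℂ) + DF.map (algebraMap ℝ ℂ))ᵀ *
        (CF.map (algebraMap ℝ ℂ) *
          (z • (1 : Matrix (Fin n) (Fin n) ℂ) - AF.map (algebraMap ℝ ℂ))⁻¹ *
          BF.map (algebraMap ℝ ℂ) + DF.map (algebraMap ℝ ℂ))) := by
  have hXs : Xhᵀ = Xh := hXsymm.eq
  have hYs : Yhᵀ = Yh := hYsymm.eq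
  have hHdet : IsUnit Hh.det := (Matrix.isUnit_iff_isUnit_det Hh).mp hHpd.isUnit
  have hWdet : IsUnit Wh.det := (Matrix.isUnit_iff_isUnit_det Wh).mp hWpd.isUnit
  have hHsym : Hhᵀ = Hh := by
    rw [hHdef, hR]
    simp [Matrix.transpose_add, Matrix.transpose_mul, Matrix.transpose_transpose,
      hXs, Matrix.mul_assoc]
  have hHisym : (Hh⁻¹)ᵀ = Hh⁻¹ := by rw [Matrix.transpose_nonsing_inv, hHsym]
  have hWsym : Whᵀ = Wh := by
    rw [hWdef]
    simp [Matrix.transpose_add, Matrix.transpose_mul, Matrix.transpose_transpose,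
      hYs, hHisym, Matrix.mul_assoc]
  have hWhalfsym : Whalfᵀ = Whalf := by
    rw [hWhalf, ← Matrix.conjTranspose_eq_transpose_of_trivial]
    rw [conjTranspose_mul, conjTranspose_mul, star_eq_conjTranspose, conjTranspose_conjTranspose,
      diagonal_conjTranspose, star_trivial, ← star_eq_conjTranspose, Matrix.mul_assoc]
  have hWhalfmul : Whalf * Whalf = Wh := by
    rw [hWhalf]
    set U := hWpd.posSemidef.1.eigenvectorUnitary
    have hu : (star U : Matrix (Fin q) (Fin q) ℝ) * (U : Matrix (Fin q) (Fin q) ℝ) = 1 :=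
      Matrix.UnitaryGroup.star_mul_self U
    have hd : diagonal (Real.sqrt ∘ hWpd.posSemidef.1.eigenvalues) *
        diagonal (Real.sqrt ∘ hWpd.posSemidef.1.eigenvalues) =
        diagonal (RCLike.ofReal ∘ hWpd.posSemidef.1.eigenvalues) := by
      rw [diagonal_mul_diagonal]
      congr 1; funext i
      simp [Real.mul_self_sqrt (hWpd.posSemidef.eigenvalues_nonneg i)]
    conv_rhs => rw [hWpd.posSemidef.1.spectral_theorem, Unitary.conjStarAlgAut_apply]
    calc _ = (U : Matrix (Fin q) (Fin q) ℝ) * (diagonal (Real.sqrt ∘ hWpd.posSemidef.1.eigenvalues) *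
        ((star U : Matrix (Fin q) (Fin q) ℝ) * (U : Matrix (Fin q) (Fin q) ℝ)) *
        diagonal (Real.sqrt ∘ hWpd.posSemidef.1.eigenvalues)) * (star U : Matrix (Fin q) (Fin q) ℝ) := by
          simp only [Matrix.mul_assoc]
      _ = _ := by rw [hu, Matrix.mul_one, hd]
  have hWhalfdet : IsUnit Whalf.det := by
    have h : IsUnit (Whalf.det * Whalf.det) := by
      rw [← Matrix.det_mul, hWhalfmul]; exact hWdet
    exact isUnit_of_mul_isUnit_left h
  constructor
  · rw [hAF, hBF, hDF, hCF, Matrix.nonsing_inv_nonsing_inv _ hWhalfdet,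
      Matrix.mul_assoc, Matrix.mul_nonsing_inv_cancel_left _ _ hWhalfdet,
      Matrix.sub_mul]
    abel
  intro z hz h1 h2 h3 h4
  set f := algebraMap ℝ ℂ with hf
  have spec : ∀ (w : ℂ) (M : Matrix (Fin n) (Fin n) ℝ),
      w ∉ spectrum ℂ (M.map f) →
      IsUnit (w • (1 : Matrix (Fin n) (Fin n) ℂ) - M.map f).det := by
    intro w M hw
    have h := spectrum.notMem_iff.mp hw
    rw [Algebra.algebraMap_eq_smul_one] at h
    exact (Matrix.isUnit_iff_isUnit_det _).mp h
  have hu1 := spec z Ah h1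
  have hu2 := spec z⁻¹ Ah h2
  have hu3 := spec z AF h3
  have hu4 := spec z⁻¹ AF h4
  -- mapping helpers
  have mMul : ∀ {a b c : ℕ} (M : Matrix (Fin a) (Fin b) ℝ) (N : Matrix (Fin b) (Fin c) ℝ),
      (M * N).map f = M.map f * N.map f := fun M N => Matrix.map_mul
  have mAdd : ∀ {a b : ℕ} (M N : Matrix (Fin a) (Fin b) ℝ),
      (M + N).map f = M.map f + N.map f := fun M N => Matrix.map_add f (map_add f) M N
  have mSub : ∀ {a b : ℕ} (M N : Matrix (Fin a) (Fin b) ℝ),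
      (M - N).map f = M.map f - N.map f := fun M N => Matrix.map_sub f (map_sub f) M N
  have mT : ∀ {a b : ℕ} (M : Matrix (Fin a) (Fin b) ℝ),
      (Mᵀ).map f = (M.map f)ᵀ := fun M => Matrix.transpose_map
  have m1n : (1 : Matrix (Fin n) (Fin n) ℝ).map f = 1 :=
    Matrix.map_one f (map_zero f) (map_one f)
  have m1q : (1 : Matrix (Fin q) (Fin q) ℝ).map f = 1 :=
    Matrix.map_one f (map_zero f) (map_one f)
  -- real-side equalities
  have rH : Hh = Dhᵀ * Dh + Bhᵀ * Xh * Bh := by rw [hHdef, hR]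
  have rHHi : Hh * Hh⁻¹ = 1 := Matrix.mul_nonsing_inv _ hHdet
  have rHiH : Hh⁻¹ * Hh = 1 := Matrix.nonsing_inv_mul _ hHdet
  have rWWi : Wh * Wh⁻¹ = 1 := Matrix.mul_nonsing_inv _ hWdet
  have rWiW : Wh⁻¹ * Wh = 1 := Matrix.nonsing_inv_mul _ hWdet
  have rRtRi : Whalf * Whalf⁻¹ = 1 := Matrix.mul_nonsing_inv _ hWhalfdet
  have rRiRt : Whalf⁻¹ * Whalf = 1 := Matrix.nonsing_inv_mul _ hWhalfdet
  have rQ : Chᵀ * Ch = Xh - Ahᵀ * Xh * Ah +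
      (Ahᵀ * Xh * Bh + Chᵀ * Dh) * Hh⁻¹ * (Ahᵀ * Xh * Bh + Chᵀ * Dh)ᵀ := by
    have h0 := hDAREX
    rw [hQ, hS] at h0
    rw [← sub_eq_zero]
    rw [show Chᵀ * Ch - (Xh - Ahᵀ * Xh * Ah +
      (Ahᵀ * Xh * Bh + Chᵀ * Dh) * Hh⁻¹ * (Ahᵀ * Xh * Bh + Chᵀ * Dh)ᵀ) =
      -(Xh - Ahᵀ * Xh * Ah - Chᵀ * Ch +
      (Ahᵀ * Xh * Bh + Chᵀ * Dh) * Hh⁻¹ * (Ahᵀ * Xh * Bh + Chᵀ * Dh)ᵀ) from by abel,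
      ← h0, neg_zero]
  have rK : Kx = Hh⁻¹ * (Ahᵀ * Xh * Bh + Chᵀ * Dh)ᵀ := by rw [hKx, hS]
  -- mapped equalities
  have cX : (Xh.map f)ᵀ = Xh.map f := by rw [← Matrix.transpose_map, hXs]
  have cY : (Yh.map f)ᵀ = Yh.map f := by rw [← Matrix.transpose_map, hYs]
  have cH := congrArg (Matrix.map · f) rH
  simp only [mMul, mAdd, mSub, mT, m1n, m1q] at cH
  have cHHi := congrArg (Matrix.map · f) rHHi
  simp only [mMul, mAdd, mSub, mT, m1n, m1q] at cHHi
  have cHiH := congrArg (Matrix.map · f) rHiH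
  simp only [mMul, mAdd, mSub, mT, m1n, m1q] at cHiH
  have cHit : ((Hh⁻¹).map f)ᵀ = (Hh⁻¹).map f := by rw [← Matrix.transpose_map, hHisym]
  have cQ := congrArg (Matrix.map · f) rQ
  simp only [mMul, mAdd, mSub, mT, m1n, m1q] at cQ
  have cK := congrArg (Matrix.map · f) rK
  simp only [mMul, mAdd, mSub, mT, m1n, m1q] at cK
  have cW := congrArg (Matrix.map · f) hWdef
  simp only [mMul, mAdd, mSub, mT, m1n, m1q] at cW
  have cWWi := congrArg (Matrix.map · f) rWWi
  simp only [mMul, mAdd, mSub, mT, m1n, m1q] at cWWi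
  have cWiW := congrArg (Matrix.map · f) rWiW
  simp only [mMul, mAdd, mSub, mT, m1n, m1q] at cWiW
  have cDAREY := congrArg (Matrix.map · f) hDAREY
  simp only [mMul, mAdd, mSub, mT, m1n, m1q] at cDAREY
  have cKy := congrArg (Matrix.map · f) hKy
  simp only [mMul, mAdd, mSub, mT, m1n, m1q] at cKy
  have cRt2 := congrArg (Matrix.map · f) hWhalfmul
  simp only [mMul, mAdd, mSub, mT, m1n, m1q] at cRt2
  have cRtt : (Whalf.map f)ᵀ = Whalf.map f := by rw [← Matrix.transpose_map, hWhalfsym]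
  have cRtRi := congrArg (Matrix.map · f) rRtRi
  simp only [mMul, mAdd, mSub, mT, m1n, m1q] at cRtRi
  have cRiRt := congrArg (Matrix.map · f) rRiRt
  simp only [mMul, mAdd, mSub, mT, m1n, m1q] at cRiRt
  have cAF := congrArg (Matrix.map · f) hAF
  simp only [mMul, mAdd, mSub, mT, m1n, m1q] at cAF
  have cBF := congrArg (Matrix.map · f) hBF
  simp only [mMul, mAdd, mSub, mT, m1n, m1q] at cBF
  rw [hCF, hDF]
  simp only [mMul]
  exact aux_spec z hz (Ah.map f) (Bh.map f) (Ch.map f) (Dh.map f) (Xh.map f) (Yh.map f)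
    cX cY (Hh.map f) ((Hh⁻¹).map f) cH cHHi cHiH cHit cQ (Kx.map f) cK
    (Wh.map f) ((Wh⁻¹).map f) cW cWWi cWiW cDAREY (Ky.map f) cKy
    (Whalf.map f) ((Whalf⁻¹).map f) cRt2 cRtt cRtRi cRiRt
    (AF.map f) cAF (BF.map f) cBF hu1 hu2 hu3 hu4
end
end

section
/- Let A ∈ ℝ^{n×n}, B_u ∈ ℝ^{n×m}, B_d ∈ ℝ^{n×q}, Q ∈ ℝ^{n×n} symmetric, S ∈ ℝ^{n×m}, and R ∈ ℝ^{m×m} symmetric positive definite with [[Q,S],[Sᵀ,R]] positive semidefinite. Let X be a symmetric positive semidefinite matrix with H := R + B_uᵀXB_u invertible satisfying the DARE 0 = X − AᵀXA − Q + (AᵀXB_u + S)H⁻¹(AᵀXB_u + S)ᵀ, and suppose A − B_uK_x is Schur stable and nonsingular, where K_x := H⁻¹(AᵀXB_u + S)ᵀ. If the pair ((A − B_uK_x)^{−⊤}, XB_d) is stabilizable (for every λ ∈ ℂ with |λ| ≥ 1 and every nonzero v ∈ ℂⁿ, it is not the case that v*((A − B_uK_x)^{−⊤} − λI) = 0 and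 v*XB_d = 0), then X is positive definite. -/
open Matrix

noncomputable section

/-- A real square matrix is Schur stable if every complex eigenvalue has modulus `< 1`. -/
def SchurStable {k : Type*} [Fintype k] [DecidableEq k] (A : Matrix k k ℝ) : Prop :=
  ∀ μ ∈ spectrum ℂ (A.map (algebraMap ℝ ℂ)), ‖μ‖ < 1

lemma realMap_mulVec {n : ℕ} (M : Matrix (Fin n) (Fin n) ℝ) (w : Fin n → ℂ) (j : Fin n) :
    ((M.map (algebraMap ℝ ℂ)) *ᵥ w) j =
      (((M *ᵥ fun i => (w i).re) j : ℝ) : ℂ) + (((M *ᵥ fun i => (w i).im) j : ℝ) : ℂ) * Complex.I := by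
  apply Complex.ext <;>
    simp [Matrix.mulVec, dotProduct, Complex.re_sum, Complex.im_sum, Matrix.map_apply,
      Complex.mul_re, Complex.mul_im, Finset.sum_sub_distrib, Finset.sum_add_distrib]

lemma realMap_mulVec_eq_zero_iff {n : ℕ} (M : Matrix (Fin n) (Fin n) ℝ) (w : Fin n → ℂ) :
    (M.map (algebraMap ℝ ℂ)) *ᵥ w = 0 ↔
      (M *ᵥ fun i => (w i).re) = 0 ∧ (M *ᵥ fun i => (w i).im) = 0 := by
  constructor
  · intro h
    have h' : ∀ j, (M *ᵥ fun i => (w i).re) j = 0 ∧ (M *ᵥ fun i => (w i).im) j = 0 := by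
      intro j
      have hj := congrFun h j
      rw [realMap_mulVec] at hj
      simpa [Complex.ext_iff] using hj
    exact ⟨funext fun j => (h' j).1, funext fun j => (h' j).2⟩
  · rintro ⟨h1, h2⟩
    funext j
    rw [realMap_mulVec, congrFun h1 j, congrFun h2 j]
    simp

/-- PBH contradiction core: if the kernel of `X` is nonzero and invariant under a Schur stable
invertible matrix `Acl`, then the PBH condition for `((Acl)⁻ᵀ, X Bd)` fails. -/
lemma pbh_core (n q : ℕ) (Acl X : Matrix (Fin n) (Fin n) ℝ)
    (Bd : Matrix (Fin n) (Fin q) ℝ)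
    (hXs : Xᵀ = X)
    (hker : ∀ v : Fin n → ℝ, X *ᵥ v = 0 → X *ᵥ (Acl *ᵥ v) = 0)
    (hschur : ∀ μ ∈ spectrum ℂ (Acl.map (algebraMap ℝ ℂ)), ‖μ‖ < 1)
    (hclinv : IsUnit Acl)
    (v : Fin n → ℝ) (hvne : v ≠ 0) (hXv : X *ᵥ v = 0)
    (hPBH : ∀ lam : ℂ, 1 ≤ ‖lam‖ → ∀ u : Fin n → ℂ, u ≠ 0 →
      ¬ (Matrix.vecMul (star u)
            (((Acl⁻¹)ᵀ).map (algebraMap ℝ ℂ) - lam • (1 : Matrix (Fin n) (Fin n) ℂ)) = 0 ∧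
         Matrix.vecMul (star u) ((X * Bd).map (algebraMap ℝ ℂ)) = 0)) : False := by
  classical
  set Xc := X.map (algebraMap ℝ ℂ) with hXc
  set Ac := Acl.map (algebraMap ℝ ℂ) with hAc
  -- complexified kernel invariance
  have hkerC : ∀ w : Fin n → ℂ, Xc *ᵥ w = 0 → Xc *ᵥ (Ac *ᵥ w) = 0 := by
    intro w hw
    obtain ⟨h1, h2⟩ := (realMap_mulVec_eq_zero_iff X w).mp hw
    rw [realMap_mulVec_eq_zero_iff]
    have hre : (fun i => ((Ac *ᵥ w) i).re) = Acl *ᵥ fun i => (w i).re := by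
      funext i; rw [hAc, realMap_mulVec]; simp
    have him : (fun i => ((Ac *ᵥ w) i).im) = Acl *ᵥ fun i => (w i).im := by
      funext i; rw [hAc, realMap_mulVec]; simp
    rw [hre, him]
    exact ⟨hker _ h1, hker _ h2⟩
  -- the kernel as a submodule
  set E : Submodule ℂ (Fin n → ℂ) := LinearMap.ker Xc.mulVecLin with hE
  have hst : ∀ x ∈ E, Ac.mulVecLin x ∈ E := by
    intro x hx
    simp only [hE, LinearMap.mem_ker, Matrix.mulVecLin_apply] at hx ⊢
    exact hkerC x hx
  set g : E →ₗ[ℂ] E := (Ac.mulVecLin).restrict hst with hg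
  have hvC : (fun i => ((v i : ℂ))) ∈ E := by
    simp only [hE, LinearMap.mem_ker, Matrix.mulVecLin_apply]
    rw [realMap_mulVec_eq_zero_iff]
    constructor
    · simpa using hXv
    · exact Matrix.mulVec_zero X
  have hvCne : (fun i => ((v i : ℂ))) ≠ 0 := by
    intro h
    apply hvne
    funext i
    have := congrFun h i
    simpa using this
  have : Nontrivial E := by
    refine ⟨⟨⟨_, hvC⟩, 0, ?_⟩⟩
    simp only [ne_eq, Submodule.mk_eq_zero]
    exact hvCne
  obtain ⟨μ, hμ⟩ := Module.End.exists_eigenvalue g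
  obtain ⟨w, hw⟩ := hμ.exists_hasEigenvector
  set w0 : Fin n → ℂ := (w : Fin n → ℂ) with hw0
  have hw0ne : w0 ≠ 0 := by
    intro h
    exact hw.2 (by exact_mod_cast Subtype.ext h)
  have hXw : Xc *ᵥ w0 = 0 := w.2
  have hAw : Ac *ᵥ w0 = μ • w0 := by
    have := hw.apply_eq_smul
    have h2 := congrArg (Subtype.val) this
    rw [LinearMap.restrict_coe_apply] at h2
    rw [Matrix.mulVecLin_apply] at h2
    rw [h2]
    rfl
  -- μ is in the spectrum of Ac
  have hdetAc : Ac.det ≠ 0 := by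
    have : IsUnit Acl.det := (Matrix.isUnit_iff_isUnit_det Acl).mp hclinv
    have h2 : Ac.det = algebraMap ℝ ℂ Acl.det := (RingHom.map_det (algebraMap ℝ ℂ) Acl).symm
    rw [h2]
    simpa using this.ne_zero
  have hμne : μ ≠ 0 := by
    rintro rfl
    rw [zero_smul] at hAw
    exact hdetAc (Matrix.exists_mulVec_eq_zero_iff.mp ⟨w0, hw0ne, hAw⟩)
  have hμspec : μ ∈ spectrum ℂ Ac := by
    rw [spectrum.mem_iff]
    intro hu
    have hdet : IsUnit (algebraMap ℂ (Matrix (Fin n) (Fin n) ℂ) μ - Ac).det :=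
      (Matrix.isUnit_iff_isUnit_det _).mp hu
    have : (algebraMap ℂ (Matrix (Fin n) (Fin n) ℂ) μ - Ac) *ᵥ w0 = 0 := by
      rw [Matrix.sub_mulVec, hAw]
      have : (algebraMap ℂ (Matrix (Fin n) (Fin n) ℂ) μ) *ᵥ w0 = μ • w0 := by
        rw [Algebra.algebraMap_eq_smul_one, Matrix.smul_mulVec, Matrix.one_mulVec]
      rw [this, sub_self]
    exact hdet.ne_zero (Matrix.exists_mulVec_eq_zero_iff.mp ⟨w0, hw0ne, this⟩) |>.elim
  have hμlt : ‖μ‖ < 1 := hschur μ hμspec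
  -- inverse action
  have hdetAcl : IsUnit Acl.det := (Matrix.isUnit_iff_isUnit_det Acl).mp hclinv
  have hinvmul : (Acl⁻¹).map (algebraMap ℝ ℂ) * Ac = 1 := by
    rw [hAc, ← Matrix.map_mul, Matrix.nonsing_inv_mul Acl hdetAcl]
    exact Matrix.map_one _ (map_zero _) (map_one _)
  have hinvw : (Acl⁻¹).map (algebraMap ℝ ℂ) *ᵥ w0 = μ⁻¹ • w0 := by
    have h1 : (Acl⁻¹).map (algebraMap ℝ ℂ) *ᵥ (Ac *ᵥ w0) = w0 := by
      rw [Matrix.mulVec_mulVec, hinvmul, Matrix.one_mulVec]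
    rw [hAw, Matrix.mulVec_smul] at h1
    exact (eq_inv_smul_iff₀ hμne).mpr h1
  have hnorm : 1 ≤ ‖μ⁻¹‖ := by
    rw [norm_inv]
    rw [one_le_inv_iff₀]
    constructor
    · exact norm_pos_iff.mpr hμne
    · exact hμlt.le
  refine hPBH μ⁻¹ hnorm (star w0) (by simpa using hw0ne) ⟨?_, ?_⟩
  · rw [star_star, Matrix.vecMul_sub]
    rw [Matrix.transpose_map]
    rw [Matrix.vecMul_transpose, hinvw]
    have : w0 ᵥ* (μ⁻¹ • (1 : Matrix (Fin n) (Fin n) ℂ)) = μ⁻¹ • w0 := by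
      funext j
      simp [Matrix.vecMul, dotProduct, Matrix.smul_apply, Matrix.one_apply,
        mul_comm, Finset.sum_ite_eq]
    rw [this, sub_self]
  · rw [star_star, Matrix.map_mul, ← Matrix.vecMul_vecMul]
    have hXcs : Xcᵀ = Xc := by rw [hXc, ← Matrix.transpose_map, hXs]
    have : w0 ᵥ* Xc = 0 := by
      conv_lhs => rw [← hXcs]
      rw [Matrix.vecMul_transpose, hXw]
    rw [this, Matrix.zero_vecMul]

/-- If the pair `((A − BuKx)^{−⊤}, XB_d)` is stabilizable (PBH test), then
the stabilizing DARE solution `X` is positive definite. -/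
theorem dare_solution_posdef_of_pbh
    (n m q : ℕ)
    (A : Matrix (Fin n) (Fin n) ℝ) (Bu : Matrix (Fin n) (Fin m) ℝ)
    (Bd : Matrix (Fin n) (Fin q) ℝ)
    (Q : Matrix (Fin n) (Fin n) ℝ) (hQ : Q.IsSymm)
    (S : Matrix (Fin n) (Fin m) ℝ)
    (R : Matrix (Fin m) (Fin m) ℝ) (hRsymm : R.IsSymm) (hRpd : R.PosDef)
    (hblk : (Matrix.fromBlocks Q S Sᵀ R).PosSemidef)
    (X : Matrix (Fin n) (Fin n) ℝ) (hX : X.PosSemidef)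
    (H : Matrix (Fin m) (Fin m) ℝ) (hH : H = R + Buᵀ * X * Bu) (hHinv : IsUnit H)
    (hDARE : 0 = X - Aᵀ * X * A - Q +
      (Aᵀ * X * Bu + S) * H⁻¹ * (Aᵀ * X * Bu + S)ᵀ)
    (Kx : Matrix (Fin m) (Fin n) ℝ) (hKx : Kx = H⁻¹ * (Aᵀ * X * Bu + S)ᵀ)
    (hschur : SchurStable (A - Bu * Kx))
    (hclinv : IsUnit (A - Bu * Kx))
    -- PBH stabilizability of ((A − BuKx)^{−⊤}, XB_d)
    (hPBH : ∀ lam : ℂ, 1 ≤ ‖lam‖ → ∀ v : Fin n → ℂ, v ≠ 0 →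
      ¬ (Matrix.vecMul (star v)
            ((((A - Bu * Kx)⁻¹)ᵀ).map (algebraMap ℝ ℂ) -
              lam • (1 : Matrix (Fin n) (Fin n) ℂ)) = 0 ∧
         Matrix.vecMul (star v) ((X * Bd).map (algebraMap ℝ ℂ)) = 0)) :
    X.PosDef := by
  classical
  have hXs : Xᵀ = X := by
    rw [← X.conjTranspose_eq_transpose_of_trivial]; exact hX.1
  -- the closed-loop Lyapunov identity
  have hLyap : X = (A - Bu * Kx)ᵀ * X * (A - Bu * Kx) +
      (Q - S * Kx - Kxᵀ * Sᵀ + Kxᵀ * R * Kx) := by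
    have hHdet : IsUnit H.det := (Matrix.isUnit_iff_isUnit_det H).mp hHinv
    set L := Aᵀ * X * Bu + S with hL
    set T := L * H⁻¹ * Lᵀ with hT
    have hHs : Hᵀ = H := by
      rw [hH]; simp [transpose_add, transpose_mul, Matrix.mul_assoc, hXs, hRsymm.eq]
    have hKxT : Kxᵀ = L * H⁻¹ := by
      rw [hKx, transpose_mul, transpose_transpose, transpose_nonsing_inv, hHs]
    have e1 : L * Kx = T := by rw [hKx, hT, Matrix.mul_assoc]
    have e2 : Kxᵀ * Lᵀ = T := by rw [hKxT]
    have e3 : Kxᵀ * H * Kx = T := by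
      rw [hKxT, hKx, hT]
      simp only [Matrix.mul_assoc]
      rw [← Matrix.mul_assoc H H⁻¹ Lᵀ, mul_nonsing_inv H hHdet, Matrix.one_mul]
    have h1 : X = Aᵀ * X * A + Q - T := by
      calc X = X - 0 := by rw [sub_zero]
      _ = X - (X - Aᵀ * X * A - Q + T) := by rw [hDARE]
      _ = Aᵀ * X * A + Q - T := by abel
    have exp1 : (A - Bu * Kx)ᵀ * X * (A - Bu * Kx) =
        Aᵀ * (X * A) - Aᵀ * (X * (Bu * Kx)) - Kxᵀ * (Buᵀ * (X * A))
          + Kxᵀ * (Buᵀ * (X * (Bu * Kx))) := by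
      simp only [transpose_sub, transpose_mul, Matrix.sub_mul, Matrix.mul_sub, Matrix.mul_assoc]
      abel
    have g1 : Aᵀ * (X * (Bu * Kx)) = T - S * Kx := by
      have hAXB : L - S = Aᵀ * X * Bu := by rw [hL]; abel
      calc Aᵀ * (X * (Bu * Kx)) = (L - S) * Kx := by
            rw [hAXB]; simp only [Matrix.mul_assoc]
      _ = T - S * Kx := by rw [Matrix.sub_mul, e1]
    have g2 : Kxᵀ * (Buᵀ * (X * A)) = T - Kxᵀ * Sᵀ := by
      have hBXA : Buᵀ * (X * A) = Lᵀ - Sᵀ := by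
        rw [hL]
        simp [transpose_add, transpose_mul, transpose_transpose, hXs, Matrix.mul_assoc]
      rw [hBXA, Matrix.mul_sub, e2]
    have g3 : Kxᵀ * (Buᵀ * (X * (Bu * Kx))) = T - Kxᵀ * R * Kx := by
      have hBXB : Buᵀ * (X * Bu) = H - R := by
        rw [hH, ← Matrix.mul_assoc]; abel
      calc Kxᵀ * (Buᵀ * (X * (Bu * Kx))) = (Kxᵀ * (H - R)) * Kx := by
            rw [← hBXB]; simp only [Matrix.mul_assoc]
      _ = T - Kxᵀ * R * Kx := by
            rw [Matrix.mul_sub, Matrix.sub_mul, e3]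
    rw [exp1, g1, g2, g3]
    conv_lhs => rw [h1]
    simp only [Matrix.mul_assoc]
    abel
  -- the cost term has nonnegative quadratic form
  have hM : ∀ v : Fin n → ℝ, 0 ≤ v ⬝ᵥ ((Q - S * Kx - Kxᵀ * Sᵀ + Kxᵀ * R * Kx) *ᵥ v) := by
    intro v
    have h := hblk.dotProduct_mulVec_nonneg (Sum.elim v (-(Kx *ᵥ v)))
    rw [star_trivial, fromBlocks_mulVec, sumElim_dotProduct_sumElim] at h
    have e1 : v ⬝ᵥ ((Kxᵀ * Sᵀ) *ᵥ v) = (Kx *ᵥ v) ⬝ᵥ (Sᵀ *ᵥ v) := by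
      rw [← Matrix.mulVec_mulVec, Matrix.dotProduct_mulVec v Kxᵀ, Matrix.vecMul_transpose]
    have e2 : v ⬝ᵥ ((Kxᵀ * R * Kx) *ᵥ v) = (Kx *ᵥ v) ⬝ᵥ (R *ᵥ (Kx *ᵥ v)) := by
      rw [Matrix.mul_assoc, ← Matrix.mulVec_mulVec, ← Matrix.mulVec_mulVec,
        Matrix.dotProduct_mulVec v Kxᵀ, Matrix.vecMul_transpose]
    have e3 : v ⬝ᵥ ((S * Kx) *ᵥ v) = v ⬝ᵥ (S *ᵥ (Kx *ᵥ v)) := by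
      rw [← Matrix.mulVec_mulVec]
    simp only [Matrix.sub_mulVec, Matrix.add_mulVec, dotProduct_sub, dotProduct_add,
      Matrix.mulVec_neg, dotProduct_neg, neg_dotProduct, Matrix.mulVec_add, mulVec_neg,
      Sum.elim_comp_inl, Sum.elim_comp_inr] at h ⊢
    rw [e1, e2, e3]
    linarith
  -- the kernel of X is invariant under the closed loop
  have hker : ∀ v : Fin n → ℝ, X *ᵥ v = 0 → X *ᵥ ((A - Bu * Kx) *ᵥ v) = 0 := by
    intro v hv
    set Acl := A - Bu * Kx with hAcl
    have hq : v ⬝ᵥ ((Aclᵀ * X * Acl) *ᵥ v) + v ⬝ᵥ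
        ((Q - S * Kx - Kxᵀ * Sᵀ + Kxᵀ * R * Kx) *ᵥ v) = 0 := by
      have h := congrArg (fun Y => v ⬝ᵥ (Y *ᵥ v)) hLyap
      rw [hv, dotProduct_zero, Matrix.add_mulVec, dotProduct_add] at h
      exact h.symm
    have hqq : v ⬝ᵥ ((Aclᵀ * X * Acl) *ᵥ v) = (Acl *ᵥ v) ⬝ᵥ (X *ᵥ (Acl *ᵥ v)) := by
      rw [Matrix.mul_assoc, ← Matrix.mulVec_mulVec, ← Matrix.mulVec_mulVec,
        Matrix.dotProduct_mulVec v Aclᵀ, Matrix.vecMul_transpose]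
    have h1 : 0 ≤ (Acl *ᵥ v) ⬝ᵥ (X *ᵥ (Acl *ᵥ v)) := by simpa using hX.dotProduct_mulVec_nonneg (Acl *ᵥ v)
    have h2 := hM v
    have h3 : (Acl *ᵥ v) ⬝ᵥ (X *ᵥ (Acl *ᵥ v)) = 0 := by rw [← hqq]; linarith [hqq ▸ h1]
    exact (hX.dotProduct_mulVec_zero_iff (Acl *ᵥ v)).mp (by simpa using h3)
  -- positive definiteness
  refine Matrix.PosDef.of_dotProduct_mulVec_pos hX.1 (fun v hv => ?_)
  rcases (hX.dotProduct_mulVec_nonneg v).lt_or_eq with hlt | heq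
  · exact hlt
  · exfalso
    have hXv : X *ᵥ v = 0 := (hX.dotProduct_mulVec_zero_iff v).mp heq.symm
    exact pbh_core n q (A - Bu * Kx) X Bd hXs hker hschur hclinv v hv hXv hPBH
end
end

section
/- Let X ∈ ℝ^{n×n} be symmetric positive definite, and let Â₁₁ ∈ ℝ^{n×n} be nonsingular, B_u ∈ ℝ^{n×m}, B_d ∈ ℝ^{n×q}, C_e ∈ ℝ^{p×n}, D_eu ∈ ℝ^{p×m}, K_x ∈ ℝ^{m×n}, H ∈ ℝ^{m×m} symmetric invertible, K_v := H⁻¹B_uᵀ, and γ_d > 0, γ_J ∈ ℝ. Define the block matrices Â := [[Â₁₁, −B_uK_vÂ₁₁^{−⊤}],[0, Â₁₁^{−⊤}]] ∈ ℝ^{2n×2n}, B̂ := [B_d; −XB_d] ∈ ℝ^{2n×q}, Ĉ := γ_J[[C_e − D_euK_x, −D_euK_vÂ₁₁^{−⊤}],[0,0]], Q̂ := ĈᵀĈ, and Q̃ := γ_J²Â₁₁⁻¹(X⁻¹ − Â₁₁X⁻¹Â₁₁ᵀ − B_uH⁻¹B_uᵀ)Â₁₁^{−⊤}. Suppose V ∈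 ℝ^{n×n} is symmetric positive semidefinite and satisfies the DARE 0 = V − Â₁₁⁻¹VÂ₁₁^{−⊤} − Q̃ + (Â₁₁⁻¹VXB_d)(γ_d²I + B_dᵀXVXB_d)⁻¹(Â₁₁⁻¹VXB_d)ᵀ. Then the matrix X̂ := γ_J²[[X, I],[I, X⁻¹]] + [[0,0],[0,V]] is symmetric positive semidefinite and satisfies the DARE 0 = X̂ − ÂᵀX̂Â − Q̂ + ÂᵀX̂B̂(γ_d²I + B̂ᵀX̂B̂)⁻¹B̂ᵀX̂Â, provided additionally Â₁₁ = A − B_uK_x, H = D_euᵀD_eu + B_uᵀXB_u, K_x = H⁻¹(AᵀXB_u + C_eᵀD_eu)ᵀ, and X satisfies the DARE 0 = X − AᵀXA − C_eᵀC_e + (AᵀXB_u + C_eᵀD_eu)H⁻¹(AᵀXB_u + C_eᵀD_eu)ᵀ for some A ∈ ℝ^{n×n}. -/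
open Matrix

noncomputable section

/-- The structured solution `X̂` of the augmented DARE (used to show that the
spectral factor has a minimal realization of state dimension `n`). -/
theorem augmented_dare_structured_solution
    (n m q p : ℕ)
    (X : Matrix (Fin n) (Fin n) ℝ) (hXpd : X.PosDef)
    (A11 : Matrix (Fin n) (Fin n) ℝ) (hA11inv : IsUnit A11)
    (Bu : Matrix (Fin n) (Fin m) ℝ) (Bd : Matrix (Fin n) (Fin q) ℝ)
    (Ce : Matrix (Fin p) (Fin n) ℝ) (Deu : Matrix (Fin p) (Fin m) ℝ)
    (Kx : Matrix (Fin m) (Fin n) ℝ)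
    (H : Matrix (Fin m) (Fin m) ℝ) (hHsymm : H.IsSymm) (hHinv : IsUnit H)
    (Kv : Matrix (Fin m) (Fin n) ℝ) (hKv : Kv = H⁻¹ * Buᵀ)
    (γd γJ : ℝ) (hγd : 0 < γd)
    (Ah : Matrix ((Fin n) ⊕ (Fin n)) ((Fin n) ⊕ (Fin n)) ℝ)
    (hAh : Ah = Matrix.fromBlocks A11 (-(Bu * Kv * (A11⁻¹)ᵀ)) 0 ((A11⁻¹)ᵀ))
    (Bh : Matrix ((Fin n) ⊕ (Fin n)) (Fin q) ℝ)
    (hBh : Bh = Matrix.fromRows Bd (-(X * Bd)))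
    (Chm : Matrix ((Fin p) ⊕ (Fin q)) ((Fin n) ⊕ (Fin n)) ℝ)
    (hCh : Chm = γJ • Matrix.fromBlocks (Ce - Deu * Kx) (-(Deu * Kv * (A11⁻¹)ᵀ)) 0 0)
    (Qh : Matrix ((Fin n) ⊕ (Fin n)) ((Fin n) ⊕ (Fin n)) ℝ) (hQh : Qh = Chmᵀ * Chm)
    (Qt : Matrix (Fin n) (Fin n) ℝ)
    (hQt : Qt = γJ ^ 2 •
      (A11⁻¹ * (X⁻¹ - A11 * X⁻¹ * A11ᵀ - Bu * H⁻¹ * Buᵀ) * (A11⁻¹)ᵀ))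
    (V : Matrix (Fin n) (Fin n) ℝ) (hV : V.PosSemidef)
    (hVdare : 0 = V - A11⁻¹ * V * (A11⁻¹)ᵀ - Qt +
      (A11⁻¹ * V * X * Bd) *
        (γd ^ 2 • (1 : Matrix (Fin q) (Fin q) ℝ) + Bdᵀ * X * V * X * Bd)⁻¹ *
        (A11⁻¹ * V * X * Bd)ᵀ)
    -- relations to the original DARE data
    (A : Matrix (Fin n) (Fin n) ℝ)
    (hA11def : A11 = A - Bu * Kx)
    (hHdef : H = Deuᵀ * Deu + Buᵀ * X * Bu)
    (hKxdef : Kx = H⁻¹ * (Aᵀ * X * Bu + Ceᵀ * Deu)ᵀ)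
    (hXdare : 0 = X - Aᵀ * X * A - Ceᵀ * Ce +
      (Aᵀ * X * Bu + Ceᵀ * Deu) * H⁻¹ * (Aᵀ * X * Bu + Ceᵀ * Deu)ᵀ)
    (Xh : Matrix ((Fin n) ⊕ (Fin n)) ((Fin n) ⊕ (Fin n)) ℝ)
    (hXh : Xh = γJ ^ 2 • Matrix.fromBlocks X 1 1 X⁻¹ + Matrix.fromBlocks 0 0 0 V) :
    Xh.PosSemidef ∧
    0 = Xh - Ahᵀ * Xh * Ah - Qh +
      Ahᵀ * Xh * Bh *
        (γd ^ 2 • (1 : Matrix (Fin q) (Fin q) ℝ) + Bhᵀ * Xh * Bh)⁻¹ *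
        Bhᵀ * Xh * Ah := by
  -- determinant / inverse facts
  have hXdet : IsUnit X.det := isUnit_iff_ne_zero.mpr (ne_of_gt hXpd.det_pos)
  have hAdet : IsUnit A11.det := (Matrix.isUnit_iff_isUnit_det A11).mp hA11inv
  have hHdet : IsUnit H.det := (Matrix.isUnit_iff_isUnit_det H).mp hHinv
  have hXs : Xᵀ = X := by
    have := hXpd.isHermitian.eq
    rwa [Matrix.conjTranspose_eq_transpose_of_trivial] at this
  have hVs : Vᵀ = V := by
    have := hV.isHermitian.eq
    rwa [Matrix.conjTranspose_eq_transpose_of_trivial] at this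
  have hXis : (X⁻¹)ᵀ = X⁻¹ := by rw [Matrix.transpose_nonsing_inv, hXs]
  have hHs : Hᵀ = H := hHsymm
  have hHis : (H⁻¹)ᵀ = H⁻¹ := by rw [Matrix.transpose_nonsing_inv, hHs]
  have hXX : X * X⁻¹ = 1 := Matrix.mul_nonsing_inv X hXdet
  have hXiX : X⁻¹ * X = 1 := Matrix.nonsing_inv_mul X hXdet
  have hAAi : A11 * A11⁻¹ = 1 := Matrix.mul_nonsing_inv A11 hAdet
  have hAiA : A11⁻¹ * A11 = 1 := Matrix.nonsing_inv_mul A11 hAdet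
  have hHHi : H * H⁻¹ = 1 := Matrix.mul_nonsing_inv H hHdet
  have hHiH : H⁻¹ * H = 1 := Matrix.nonsing_inv_mul H hHdet
  have hAT : A11ᵀ * (A11⁻¹)ᵀ = 1 := by
    rw [← Matrix.transpose_mul, hAiA, Matrix.transpose_one]
  have hTA : (A11⁻¹)ᵀ * A11ᵀ = 1 := by
    rw [← Matrix.transpose_mul, hAAi, Matrix.transpose_one]
  have hKvT : Kvᵀ = Bu * H⁻¹ := by
    rw [hKv, Matrix.transpose_mul, Matrix.transpose_transpose, hHis]
  -- original DARE consequences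
  have hKxT : Kxᵀ = (Aᵀ * X * Bu + Ceᵀ * Deu) * H⁻¹ := by
    rw [hKxdef, Matrix.transpose_mul, Matrix.transpose_transpose, hHis]
  have hKxH : Kxᵀ * H = Aᵀ * X * Bu + Ceᵀ * Deu := by
    rw [hKxT, Matrix.mul_assoc, hHiH, Matrix.mul_one]
  have hHdef' : H = Deuᵀ * Deu + Buᵀ * (X * Bu) := by rw [hHdef, Matrix.mul_assoc]
  have hL0 : A11ᵀ * X * Bu + (Ce - Deu * Kx)ᵀ * Deu = 0 := by
    have h1 : A11ᵀ * X * Bu + (Ce - Deu * Kx)ᵀ * Deu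
        = (Aᵀ * X * Bu + Ceᵀ * Deu) - Kxᵀ * (Deuᵀ * Deu + Buᵀ * (X * Bu)) := by
      rw [hA11def]
      simp only [Matrix.transpose_sub, Matrix.transpose_mul, Matrix.sub_mul,
        Matrix.mul_add, Matrix.mul_sub, Matrix.add_mul, Matrix.mul_assoc]
      abel
    rw [h1, ← hHdef', hKxH, sub_self]
  have hL0T : Buᵀ * (X * A11) + Deuᵀ * (Ce - Deu * Kx) = 0 := by
    have h := congrArg Matrix.transpose hL0
    simpa [Matrix.transpose_add, Matrix.transpose_mul, Matrix.transpose_transpose,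
      hXs, Matrix.mul_assoc] using h
  have hXcl : A11ᵀ * (X * A11) + (Ce - Deu * Kx)ᵀ * (Ce - Deu * Kx) = X := by
    have hexp : A11ᵀ * (X * A11) + (Ce - Deu * Kx)ᵀ * (Ce - Deu * Kx)
        = (Aᵀ * (X * A) + Ceᵀ * Ce)
          - Kxᵀ * (Buᵀ * (X * A) + Deuᵀ * Ce)
          - (Aᵀ * (X * Bu) + Ceᵀ * Deu) * Kx
          + Kxᵀ * (Deuᵀ * Deu + Buᵀ * (X * Bu)) * Kx := by
      rw [hA11def]
      simp only [Matrix.transpose_sub, Matrix.transpose_mul, Matrix.sub_mul,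
        Matrix.mul_add, Matrix.mul_sub, Matrix.add_mul, Matrix.mul_assoc]
      abel
    have hKxH' : Kxᵀ * (Deuᵀ * Deu + Buᵀ * (X * Bu)) = Aᵀ * X * Bu + Ceᵀ * Deu := by
      rw [← hHdef', hKxH]
    have hLT : Buᵀ * (X * A) + Deuᵀ * Ce = (Aᵀ * X * Bu + Ceᵀ * Deu)ᵀ := by
      simp [Matrix.transpose_add, Matrix.transpose_mul, hXs, Matrix.mul_assoc]
    rw [hexp, hKxH', hLT, hKxT]
    calc (Aᵀ * (X * A) + Ceᵀ * Ce)
          - (Aᵀ * X * Bu + Ceᵀ * Deu) * H⁻¹ * (Aᵀ * X * Bu + Ceᵀ * Deu)ᵀ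
          - (Aᵀ * (X * Bu) + Ceᵀ * Deu) * Kx + (Aᵀ * X * Bu + Ceᵀ * Deu) * Kx
        = (Aᵀ * (X * A) + Ceᵀ * Ce)
          - (Aᵀ * X * Bu + Ceᵀ * Deu) * H⁻¹ * (Aᵀ * X * Bu + Ceᵀ * Deu)ᵀ := by
          rw [Matrix.mul_assoc Aᵀ X Bu]; abel
      _ = X := by
          rw [← sub_eq_zero]
          have hrearr : Aᵀ * (X * A) + Ceᵀ * Ce -
              (Aᵀ * X * Bu + Ceᵀ * Deu) * H⁻¹ * (Aᵀ * X * Bu + Ceᵀ * Deu)ᵀ - X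
              = -(X - Aᵀ * X * A - Ceᵀ * Ce +
                (Aᵀ * X * Bu + Ceᵀ * Deu) * H⁻¹ * (Aᵀ * X * Bu + Ceᵀ * Deu)ᵀ) := by
            rw [Matrix.mul_assoc Aᵀ X A]; abel
          rw [hrearr, ← hXdare, neg_zero]
  -- symmetry of Xh
  have hXhs : Xhᵀ = Xh := by
    rw [hXh]
    simp [Matrix.transpose_add, Matrix.transpose_smul, Matrix.fromBlocks_transpose,
      hXs, hXis, hVs]
  -- transposes of Ah, Bh
  have cAt : Ahᵀ = Matrix.fromBlocks A11ᵀ 0 (-(A11⁻¹ * (Kvᵀ * Buᵀ))) A11⁻¹ := by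
    rw [hAh, Matrix.fromBlocks_transpose]
    simp [Matrix.transpose_mul, Matrix.transpose_transpose, Matrix.mul_assoc]
  have cBt : Bhᵀ = Matrix.fromCols Bdᵀ (-(Bdᵀ * X)) := by
    rw [hBh, Matrix.transpose_fromRows]
    simp [Matrix.transpose_mul, hXs]
  -- Xh * Bh
  have c1 : Xh * Bh = Matrix.fromRows (0 : Matrix (Fin n) (Fin q) ℝ) (-(V * (X * Bd))) := by
    rw [hXh, hBh, Matrix.add_mul, Matrix.smul_mul, Matrix.fromBlocks_mul_fromRows,
      Matrix.fromBlocks_mul_fromRows]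
    have e2 : (1 : Matrix (Fin n) (Fin n) ℝ) * Bd + X⁻¹ * -(X * Bd) = 0 := by
      rw [Matrix.one_mul, Matrix.mul_neg, ← Matrix.mul_assoc, hXiX, Matrix.one_mul,
        add_neg_cancel]
    rw [e2]
    simp [Matrix.mul_assoc]
  have hR : Bhᵀ * Xh * Bh = Bdᵀ * X * V * X * Bd := by
    rw [Matrix.mul_assoc, c1, cBt, Matrix.fromCols_mul_fromRows]
    simp [Matrix.mul_assoc]
  have hABh : Ahᵀ * Xh * Bh = Matrix.fromRows (0 : Matrix (Fin n) (Fin q) ℝ)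
      (-(A11⁻¹ * V * X * Bd)) := by
    rw [Matrix.mul_assoc, c1, cAt, Matrix.fromBlocks_mul_fromRows]
    simp [Matrix.mul_assoc]
  have hBXA : Bhᵀ * Xh * Ah = Matrix.fromCols (0 : Matrix (Fin q) (Fin n) ℝ)
      (-((A11⁻¹ * V * X * Bd)ᵀ)) := by
    have h1 : Bhᵀ * Xh * Ah = (Ahᵀ * Xh * Bh)ᵀ := by
      rw [Matrix.transpose_mul, Matrix.transpose_mul, Matrix.transpose_transpose, hXhs,
        Matrix.mul_assoc]
    rw [h1, hABh, Matrix.transpose_fromRows]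
    simp
  -- the gain term
  have hWRW : A11⁻¹ * V * X * Bd *
      (γd ^ 2 • (1 : Matrix (Fin q) (Fin q) ℝ) + Bdᵀ * X * V * X * Bd)⁻¹ *
      (A11⁻¹ * V * X * Bd)ᵀ = A11⁻¹ * V * (A11⁻¹)ᵀ + Qt - V := by
    rw [← sub_eq_zero]
    calc A11⁻¹ * V * X * Bd *
          (γd ^ 2 • (1 : Matrix (Fin q) (Fin q) ℝ) + Bdᵀ * X * V * X * Bd)⁻¹ *
          (A11⁻¹ * V * X * Bd)ᵀ - (A11⁻¹ * V * (A11⁻¹)ᵀ + Qt - V)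
        = V - A11⁻¹ * V * (A11⁻¹)ᵀ - Qt +
          (A11⁻¹ * V * X * Bd) *
            (γd ^ 2 • (1 : Matrix (Fin q) (Fin q) ℝ) + Bdᵀ * X * V * X * Bd)⁻¹ *
            (A11⁻¹ * V * X * Bd)ᵀ := by abel
      _ = 0 := hVdare.symm
  have hgain : Ahᵀ * Xh * Bh *
      (γd ^ 2 • (1 : Matrix (Fin q) (Fin q) ℝ) + Bdᵀ * X * V * X * Bd)⁻¹ *
      Bhᵀ * Xh * Ah = Matrix.fromBlocks 0 0 0 (A11⁻¹ * V * (A11⁻¹)ᵀ + Qt - V) := by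
    have hsplit : Ahᵀ * Xh * Bh *
        (γd ^ 2 • (1 : Matrix (Fin q) (Fin q) ℝ) + Bdᵀ * X * V * X * Bd)⁻¹ *
        Bhᵀ * Xh * Ah =
        (Ahᵀ * Xh * Bh) *
        (γd ^ 2 • (1 : Matrix (Fin q) (Fin q) ℝ) + Bdᵀ * X * V * X * Bd)⁻¹ *
        (Bhᵀ * Xh * Ah) := by
      simp only [Matrix.mul_assoc]
    rw [hsplit, hABh, hBXA, Matrix.fromRows_mul, Matrix.fromRows_mul_fromCols, ← hWRW]
    simp [Matrix.mul_assoc]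
  -- positive semidefiniteness
  have hpsd : Xh.PosSemidef := by
    rw [hXh]
    have h1 : γJ ^ 2 • Matrix.fromBlocks X 1 1 X⁻¹
        = (γJ • Matrix.fromCols (1 : Matrix (Fin n) (Fin n) ℝ) X⁻¹)ᴴ * X *
          (γJ • Matrix.fromCols (1 : Matrix (Fin n) (Fin n) ℝ) X⁻¹) := by
      rw [Matrix.conjTranspose_eq_transpose_of_trivial, Matrix.transpose_smul,
        Matrix.transpose_fromCols, Matrix.transpose_one, hXis,
        Matrix.smul_mul, Matrix.smul_mul, Matrix.mul_smul, smul_smul,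
        Matrix.fromRows_mul, Matrix.fromRows_mul_fromCols, ← pow_two]
      simp [hXX, hXiX, ← Matrix.mul_assoc]
    have h2 : Matrix.fromBlocks (0 : Matrix (Fin n) (Fin n) ℝ) 0 0 V
        = (Matrix.fromCols (0 : Matrix (Fin n) (Fin n) ℝ) 1)ᴴ * V *
          (Matrix.fromCols (0 : Matrix (Fin n) (Fin n) ℝ) 1) := by
      rw [Matrix.conjTranspose_eq_transpose_of_trivial, Matrix.transpose_fromCols,
        Matrix.transpose_one, Matrix.transpose_zero, Matrix.fromRows_mul,
        Matrix.fromRows_mul_fromCols]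
      simp
    rw [h1, h2]
    exact (hXpd.posSemidef.conjTranspose_mul_mul_same _).add
      (hV.conjTranspose_mul_mul_same _)
  refine ⟨hpsd, ?_⟩
  rw [hR, hgain, hQh, hCh, hAh, hXh, hQt]
  symm
  simp only [Matrix.fromBlocks_transpose, Matrix.transpose_smul, Matrix.transpose_neg,
    Matrix.transpose_add, Matrix.transpose_sub,
    Matrix.transpose_mul, Matrix.transpose_transpose, Matrix.transpose_zero,
    Matrix.transpose_one, Matrix.smul_mul, Matrix.mul_smul, smul_smul, smul_neg,
    Matrix.fromBlocks_multiply, Matrix.add_mul, Matrix.mul_add, smul_add, smul_sub,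
    Matrix.sub_mul, Matrix.mul_sub, Matrix.mul_assoc,
    sub_eq_add_neg, neg_add_rev, Matrix.fromBlocks_neg, Matrix.fromBlocks_add,
    Matrix.fromBlocks_smul, Matrix.neg_mul, Matrix.mul_neg, neg_neg,
    Matrix.mul_one, Matrix.one_mul, Matrix.mul_zero, Matrix.zero_mul,
    add_zero, zero_add, neg_zero, smul_zero, ← pow_two]
  rw [← Matrix.fromBlocks_zero, Matrix.fromBlocks_inj]
  refine ⟨?_, ?_, ?_, ?_⟩
  · -- (1,1) block
    have h1 : A11ᵀ * (X * A11) + (Ceᵀ * Ce - Ceᵀ * (Deu * Kx) - Kxᵀ * (Deuᵀ * Ce)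
        + Kxᵀ * (Deuᵀ * (Deu * Kx))) = X := by
      calc A11ᵀ * (X * A11) + (Ceᵀ * Ce - Ceᵀ * (Deu * Kx) - Kxᵀ * (Deuᵀ * Ce)
            + Kxᵀ * (Deuᵀ * (Deu * Kx)))
          = A11ᵀ * (X * A11) + (Ce - Deu * Kx)ᵀ * (Ce - Deu * Kx) := by
            simp only [Matrix.transpose_sub, Matrix.transpose_mul, Matrix.sub_mul,
              Matrix.mul_sub, Matrix.mul_assoc]
            abel
        _ = X := hXcl
    linear_combination (norm := module) (-(γJ ^ 2) : ℝ) • h1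
  · -- (1,2) block
    have h2 : A11ᵀ * (X * (Bu * (Kv * (A11⁻¹)ᵀ))) + Ceᵀ * (Deu * (Kv * (A11⁻¹)ᵀ))
        - Kxᵀ * (Deuᵀ * (Deu * (Kv * (A11⁻¹)ᵀ))) = 0 := by
      have h := congrArg (fun M => M * (Kv * (A11⁻¹)ᵀ)) hL0
      simp only [Matrix.add_mul, Matrix.sub_mul, Matrix.transpose_sub, Matrix.transpose_mul,
        Matrix.mul_assoc, Matrix.zero_mul] at h
      linear_combination (norm := module) h
    linear_combination (norm := module) (γJ ^ 2 : ℝ) • h2 - (γJ ^ 2 : ℝ) • hAT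
  · -- (2,1) block
    have h3 : A11⁻¹ * (Kvᵀ * (Buᵀ * (X * A11))) + A11⁻¹ * (Kvᵀ * (Deuᵀ * Ce))
        - A11⁻¹ * (Kvᵀ * (Deuᵀ * (Deu * Kx))) = 0 := by
      have h := congrArg (fun M => A11⁻¹ * (Kvᵀ * M)) hL0T
      simp only [Matrix.mul_add, Matrix.mul_sub, Matrix.mul_zero, Matrix.mul_assoc] at h
      linear_combination (norm := module) h
    linear_combination (norm := module) (γJ ^ 2 : ℝ) • h3 - (γJ ^ 2 : ℝ) • hAiA
  · -- (2,2) block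
    have i1 : A11⁻¹ * (A11 * (X⁻¹ * (A11ᵀ * (A11⁻¹)ᵀ))) = X⁻¹ := by
      rw [hAT, Matrix.mul_one, ← Matrix.mul_assoc, hAiA, Matrix.one_mul]
    have i2 : A11⁻¹ * (Kvᵀ * (Buᵀ * (A11⁻¹)ᵀ))
        = A11⁻¹ * (Bu * (H⁻¹ * (Buᵀ * (A11⁻¹)ᵀ))) := by
      rw [hKvT, Matrix.mul_assoc]
    have i3 : A11⁻¹ * (Bu * (Kv * (A11⁻¹)ᵀ))
        = A11⁻¹ * (Bu * (H⁻¹ * (Buᵀ * (A11⁻¹)ᵀ))) := by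
      rw [hKv, Matrix.mul_assoc]
    have i4 : A11⁻¹ * (Kvᵀ * (Buᵀ * (X * (Bu * (Kv * (A11⁻¹)ᵀ)))))
        + A11⁻¹ * (Kvᵀ * (Deuᵀ * (Deu * (Kv * (A11⁻¹)ᵀ))))
        = A11⁻¹ * (Bu * (H⁻¹ * (Buᵀ * (A11⁻¹)ᵀ))) := by
      calc A11⁻¹ * (Kvᵀ * (Buᵀ * (X * (Bu * (Kv * (A11⁻¹)ᵀ)))))
            + A11⁻¹ * (Kvᵀ * (Deuᵀ * (Deu * (Kv * (A11⁻¹)ᵀ))))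
          = A11⁻¹ * (Kvᵀ * ((Deuᵀ * Deu + Buᵀ * (X * Bu)) * (Kv * (A11⁻¹)ᵀ))) := by
            simp only [Matrix.add_mul, Matrix.mul_add, Matrix.mul_assoc]
            abel
        _ = A11⁻¹ * (Kvᵀ * (H * (Kv * (A11⁻¹)ᵀ))) := by rw [← hHdef']
        _ = A11⁻¹ * (Bu * (H⁻¹ * (Buᵀ * (A11⁻¹)ᵀ))) := by
            rw [hKvT, hKv, Matrix.mul_assoc H⁻¹ Buᵀ, ← Matrix.mul_assoc H H⁻¹, hHHi,
              Matrix.one_mul, Matrix.mul_assoc Bu H⁻¹]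
    linear_combination (norm := module) (γJ ^ 2 : ℝ) • i2 + (γJ ^ 2 : ℝ) • i3
      - (γJ ^ 2 : ℝ) • i4 - (γJ ^ 2 : ℝ) • i1
end
end

section
/- Let Â ∈ ℝ^{n×n} be invertible, let Ĥ ∈ ℝ^{q×q} be symmetric positive definite, let K̂_x ∈ ℝ^{q×n}, and let Ŷ ∈ ℝ^{n×n} be symmetric with Ŵ := Ĥ⁻¹ + K̂_xŶK̂_xᵀ invertible, satisfying the DARE Ŷ = ÂŶÂᵀ − (ÂŶK̂_xᵀ)Ŵ⁻¹(ÂŶK̂_xᵀ)ᵀ. Define K̂_y := Ŵ⁻¹K̂_xŶÂᵀ. Then ŶÂ^{−⊤}K̂_xᵀĤ = K̂_yᵀ. -/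
open Matrix

noncomputable section

/-- The key algebraic identity relating the two Riccati solutions in the
construction of the discrete-time spectral factor:
`Ŷ Â^{−⊤} K̂ₓᵀ Ĥ = K̂_yᵀ`. -/
theorem riccati_gain_identity
    (n q : ℕ)
    (Ah : Matrix (Fin n) (Fin n) ℝ) (hAinv : IsUnit Ah)
    (Hh : Matrix (Fin q) (Fin q) ℝ) (hHpd : Hh.PosDef)
    (Kx : Matrix (Fin q) (Fin n) ℝ)
    (Yh : Matrix (Fin n) (Fin n) ℝ) (hYsymm : Yh.IsSymm)
    (Wh : Matrix (Fin q) (Fin q) ℝ) (hWdef : Wh = Hh⁻¹ + Kx * Yh * Kxᵀ)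
    (hWinv : IsUnit Wh)
    (hDAREY : Yh = Ah * Yh * Ahᵀ - (Ah * Yh * Kxᵀ) * Wh⁻¹ * (Ah * Yh * Kxᵀ)ᵀ)
    (Ky : Matrix (Fin q) (Fin n) ℝ) (hKy : Ky = Wh⁻¹ * Kx * Yh * Ahᵀ) :
    Yh * (Ah⁻¹)ᵀ * Kxᵀ * Hh = Kyᵀ := by
  have hAdet : IsUnit Ah.det := (Matrix.isUnit_iff_isUnit_det Ah).mp hAinv
  have hWdet : IsUnit Wh.det := (Matrix.isUnit_iff_isUnit_det Wh).mp hWinv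
  have hHdet : IsUnit Hh.det := isUnit_iff_ne_zero.mpr (ne_of_gt hHpd.det_pos)
  have hYt : Yhᵀ = Yh := hYsymm
  have hHt : Hhᵀ = Hh := by
    have := hHpd.isHermitian
    simpa [Matrix.IsHermitian, Matrix.conjTranspose_eq_transpose_of_trivial] using this
  have hWt : Whᵀ = Wh := by
    rw [hWdef]
    simp [Matrix.transpose_add, Matrix.transpose_mul, Matrix.transpose_nonsing_inv,
      hYt, hHt, Matrix.mul_assoc]
  have hWinvT : (Wh⁻¹)ᵀ = Wh⁻¹ := by
    rw [Matrix.transpose_nonsing_inv, hWt]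
  have hHinvH : Hh⁻¹ * Hh = 1 := Matrix.nonsing_inv_mul _ hHdet
  have hWinvW : Wh⁻¹ * Wh = 1 := Matrix.nonsing_inv_mul _ hWdet
  have hAt : Ahᵀ * (Ahᵀ)⁻¹ = 1 := Matrix.mul_nonsing_inv _ (by rwa [Matrix.det_transpose])
  have h1 : Yh * (Ahᵀ)⁻¹ = Ah * Yh - Ah * Yh * Kxᵀ * Wh⁻¹ * (Kx * Yh) := by
    conv_lhs => rw [hDAREY]
    rw [Matrix.sub_mul]
    congr 1
    · rw [Matrix.mul_assoc, hAt, Matrix.mul_one]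
    · rw [Matrix.transpose_mul, Matrix.transpose_mul, Matrix.transpose_transpose, hYt]
      simp only [Matrix.mul_assoc]
      rw [hAt, Matrix.mul_one]
  have hKYK : Kx * Yh * Kxᵀ = Wh - Hh⁻¹ := by rw [hWdef]; abel
  have key : Yh * (Ah⁻¹)ᵀ * Kxᵀ * Hh = Ah * Yh * Kxᵀ * Wh⁻¹ := by
    rw [Matrix.transpose_nonsing_inv]
    calc Yh * (Ahᵀ)⁻¹ * Kxᵀ * Hh
        = (Ah * Yh - Ah * Yh * Kxᵀ * Wh⁻¹ * (Kx * Yh)) * Kxᵀ * Hh := by rw [h1]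
      _ = Ah * Yh * Kxᵀ * Hh - Ah * Yh * Kxᵀ * (Wh⁻¹ * (Kx * Yh * Kxᵀ) * Hh) := by
          rw [Matrix.sub_mul, Matrix.sub_mul]; simp only [Matrix.mul_assoc]
      _ = Ah * Yh * Kxᵀ * Hh - Ah * Yh * Kxᵀ * (Hh - Wh⁻¹) := by
          have hsub : Wh⁻¹ * (Kx * Yh * Kxᵀ) * Hh = Hh - Wh⁻¹ := by
            rw [hKYK, Matrix.mul_sub, Matrix.sub_mul, hWinvW, Matrix.one_mul,
              Matrix.mul_assoc Wh⁻¹, hHinvH, Matrix.mul_one]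
          rw [hsub]
      _ = Ah * Yh * Kxᵀ * Wh⁻¹ := by rw [Matrix.mul_sub]; abel
  rw [key, hKy]
  simp only [Matrix.transpose_mul, hWinvT, hYt, Matrix.transpose_transpose]
  simp only [Matrix.mul_assoc]
end
end

section
/- Let M ∈ ℂ^{p×q} be nonzero. Then there exists a rank-one matrix Δ ∈ ℂ^{q×p} with σ̄(Δ) = σ̄(M)⁻¹ such that I_p − MΔ is singular. Explicitly, if u ∈ ℂ^p and v ∈ ℂ^q are unit singular vectors with Mv = σ̄(M)u, then Δ := σ̄(M)⁻¹ v u* satisfies (I − MΔ)u = 0 and σ̄(Δ) = σ̄(M)⁻¹. In particular, if σ̄(M) ≥ 1 then there exists Δ with σ̄(Δ) ≤ 1 and det(I − MΔ) = 0. -/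
open Matrix

noncomputable section

/-- Largest singular value (operator 2-norm) of a complex matrix. -/
def sigmaMax {k l : Type*} [Fintype k] [Fintype l] [DecidableEq k] [DecidableEq l]
    (M : Matrix k l ℂ) : ℝ :=
  ‖LinearMap.toContinuousLinearMap (Matrix.toEuclideanLin M)‖

namespace RankOneAux
lemma vecMulVec_mulVec {k l : Type*} [Fintype l] (v : k → ℂ) (w : l → ℂ) (x : l → ℂ) :
    (Matrix.vecMulVec v w) *ᵥ x = (w ⬝ᵥ x) • v := by
  funext i
  simp [Matrix.mulVec, dotProduct, Matrix.vecMulVec_apply, Finset.mul_sum,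
    Finset.sum_mul, mul_comm, mul_assoc, mul_left_comm]

lemma sigmaMax_pos {k l : Type*} [Fintype k] [Fintype l] [DecidableEq k] [DecidableEq l]
    {M : Matrix k l ℂ} (hM : M ≠ 0) : 0 < sigmaMax M := by
  rw [sigmaMax, norm_pos_iff]
  exact fun h => hM (by simpa using h)

lemma dot_eq_inner {p : ℕ} (a : Fin p → ℂ) (x : EuclideanSpace ℂ (Fin p)) :
    star a ⬝ᵥ (WithLp.equiv 2 (Fin p → ℂ) x) =
      (inner ℂ ((WithLp.equiv 2 (Fin p → ℂ)).symm a) x : ℂ) := by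
  simp [dotProduct, PiLp.inner_apply, RCLike.inner_apply, mul_comm]

lemma norm_eq_one_of_dot {p : ℕ} {u : Fin p → ℂ} (hu : star u ⬝ᵥ u = 1) :
    ‖(WithLp.equiv 2 (Fin p → ℂ)).symm u‖ = 1 := by
  set U := (WithLp.equiv 2 (Fin p → ℂ)).symm u
  have h1 : (inner ℂ U U : ℂ) = 1 := by
    rw [← dot_eq_inner]; exact hu
  have h2 : ‖U‖ * ‖U‖ = 1 := by
    have h3 := inner_self_eq_norm_mul_norm (𝕜 := ℂ) U
    rw [h1] at h3
    simpa using h3.symm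
  nlinarith [norm_nonneg U]

lemma rank_smul_vecMulVec {p q : ℕ} {c : ℂ} (hc : c ≠ 0) {u : Fin p → ℂ} {v : Fin q → ℂ}
    (hu : star u ⬝ᵥ u = 1) (hv : v ≠ 0) :
    (c • Matrix.vecMulVec v (star u)).rank = 1 := by
  have hrange : LinearMap.range (c • Matrix.vecMulVec v (star u)).mulVecLin = ℂ ∙ v := by
    apply le_antisymm
    · rintro _ ⟨x, rfl⟩
      rw [Matrix.mulVecLin_apply, Matrix.smul_mulVec, vecMulVec_mulVec]
      exact Submodule.smul_mem _ _ (Submodule.smul_mem _ _ (Submodule.mem_span_singleton_self v))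
    · rw [Submodule.span_le, Set.singleton_subset_iff]
      refine ⟨c⁻¹ • u, ?_⟩
      rw [Matrix.mulVecLin_apply, Matrix.smul_mulVec, vecMulVec_mulVec,
        dotProduct_smul, hu]
      simp [smul_smul, mul_inv_cancel₀ hc]
  rw [Matrix.rank, hrange, finrank_span_singleton hv]

lemma sigmaMax_smul_vecMulVec {p q : ℕ} {c : ℝ} (hc : 0 ≤ c) {u : Fin p → ℂ} {v : Fin q → ℂ}
    (hu : star u ⬝ᵥ u = 1) (hv : star v ⬝ᵥ v = 1) :
    sigmaMax ((c : ℂ) • Matrix.vecMulVec v (star u)) = c := by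
  set U : EuclideanSpace ℂ (Fin p) := (WithLp.equiv 2 (Fin p → ℂ)).symm u with hU
  set V : EuclideanSpace ℂ (Fin q) := (WithLp.equiv 2 (Fin q → ℂ)).symm v with hV
  have hU1 : ‖U‖ = 1 := norm_eq_one_of_dot hu
  have hV1 : ‖V‖ = 1 := norm_eq_one_of_dot hv
  set g := LinearMap.toContinuousLinearMap
    (Matrix.toEuclideanLin ((c : ℂ) • Matrix.vecMulVec v (star u))) with hg
  have happ : ∀ x : EuclideanSpace ℂ (Fin p),
      g x = ((c : ℂ) * (inner ℂ U x : ℂ)) • V := by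
    intro x
    have : g x = (WithLp.equiv 2 (Fin q → ℂ)).symm
        (((c : ℂ) • Matrix.vecMulVec v (star u)) *ᵥ (WithLp.equiv 2 (Fin p → ℂ) x)) := rfl
    rw [this, Matrix.smul_mulVec, vecMulVec_mulVec, dot_eq_inner]
    rw [← smul_smul]
    rfl
  have hinnerUU : (inner ℂ U U : ℂ) = 1 := by rw [← dot_eq_inner]; exact hu
  rw [sigmaMax]
  apply le_antisymm
  · apply ContinuousLinearMap.opNorm_le_bound _ hc
    intro x
    rw [happ, norm_smul, hV1, mul_one, norm_mul]
    have h1 : ‖(c : ℂ)‖ = c := by simp [abs_of_nonneg hc]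
    rw [h1]
    have h2 : ‖(inner ℂ U x : ℂ)‖ ≤ ‖x‖ := by
      simpa [hU1] using norm_inner_le_norm (𝕜 := ℂ) U x
    exact mul_le_mul_of_nonneg_left h2 hc
  · have h3 := ContinuousLinearMap.le_opNorm g U
    rw [happ, hinnerUU, hU1, mul_one, mul_one, norm_smul, hV1, mul_one] at h3
    simp [abs_of_nonneg hc] at h3
    exact h3

lemma dot_eq_one_of_norm {p : ℕ} {u : Fin p → ℂ}
    (h : ‖(WithLp.equiv 2 (Fin p → ℂ)).symm u‖ = 1) : star u ⬝ᵥ u = 1 := by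
  have h1 := dot_eq_inner u ((WithLp.equiv 2 (Fin p → ℂ)).symm u)
  rw [Equiv.apply_symm_apply] at h1
  rw [h1, inner_self_eq_norm_sq_to_K, h]
  norm_num

lemma key {p q : ℕ} {M : Matrix (Fin p) (Fin q) ℂ} (hM : M ≠ 0)
    (u : Fin p → ℂ) (v : Fin q → ℂ)
    (hu : star u ⬝ᵥ u = 1) (hv : star v ⬝ᵥ v = 1)
    (huv : M.mulVec v = ((sigmaMax M : ℝ) : ℂ) • u) :
    ((1 : Matrix (Fin p) (Fin p) ℂ) -
        M * ((((sigmaMax M : ℝ) : ℂ))⁻¹ • Matrix.vecMulVec v (star u))).mulVec u = 0 ∧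
      sigmaMax ((((sigmaMax M : ℝ) : ℂ))⁻¹ • Matrix.vecMulVec v (star u)) =
        (sigmaMax M)⁻¹ := by
  have hσ := sigmaMax_pos hM
  have hσC : ((sigmaMax M : ℝ) : ℂ) ≠ 0 := by exact_mod_cast hσ.ne'
  constructor
  · rw [Matrix.sub_mulVec, Matrix.one_mulVec, ← Matrix.mulVec_mulVec,
      Matrix.smul_mulVec, vecMulVec_mulVec, hu, one_smul, Matrix.mulVec_smul, huv,
      smul_smul, inv_mul_cancel₀ hσC, one_smul, sub_self]
  · have hcast : (((sigmaMax M : ℝ) : ℂ))⁻¹ = (((sigmaMax M)⁻¹ : ℝ) : ℂ) := by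
      push_cast
      ring
    rw [hcast]
    exact sigmaMax_smul_vecMulVec (inv_nonneg.2 hσ.le) hu hv

end RankOneAux

open RankOneAux

/-- Rank-one destabilizing perturbation: for any nonzero `M` there is a
rank-one `Δ` with `σ̄(Δ) = σ̄(M)⁻¹` making `I − MΔ` singular; explicitly
`Δ = σ̄(M)⁻¹ v u*` for unit singular vectors `u, v` with `Mv = σ̄(M)u`.
In particular, if `σ̄(M) ≥ 1` there is `Δ` with `σ̄(Δ) ≤ 1` and
`det(I − MΔ) = 0`. -/

theorem rank_one_destabilizing
    (p q : ℕ) (M : Matrix (Fin p) (Fin q) ℂ) (hM : M ≠ 0) :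
    (∃ Δ : Matrix (Fin q) (Fin p) ℂ,
        Δ.rank = 1 ∧ sigmaMax Δ = (sigmaMax M)⁻¹ ∧
        ((1 : Matrix (Fin p) (Fin p) ℂ) - M * Δ).det = 0) ∧
    (∀ (u : Fin p → ℂ) (v : Fin q → ℂ),
        star u ⬝ᵥ u = 1 → star v ⬝ᵥ v = 1 →
        M.mulVec v = ((sigmaMax M : ℝ) : ℂ) • u →
        (((1 : Matrix (Fin p) (Fin p) ℂ) -
            M * ((((sigmaMax M : ℝ) : ℂ))⁻¹ • Matrix.vecMulVec v (star u))).mulVec u = 0 ∧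
          sigmaMax ((((sigmaMax M : ℝ) : ℂ))⁻¹ • Matrix.vecMulVec v (star u)) =
            (sigmaMax M)⁻¹)) ∧
    (1 ≤ sigmaMax M →
      ∃ Δ : Matrix (Fin q) (Fin p) ℂ,
        sigmaMax Δ ≤ 1 ∧ ((1 : Matrix (Fin p) (Fin p) ℂ) - M * Δ).det = 0) := by
  have hσ := sigmaMax_pos hM
  have hσC : ((sigmaMax M : ℝ) : ℂ) ≠ 0 := by exact_mod_cast hσ.ne'
  -- nonemptiness
  have hne : ∃ i j, M i j ≠ 0 := by
    by_contra h
    push_neg at h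
    exact hM (Matrix.ext fun i j => h i j)
  obtain ⟨i0, j0, -⟩ := hne
  haveI : Nonempty (Fin p) := ⟨i0⟩
  haveI : Nonempty (Fin q) := ⟨j0⟩
  -- existence of singular vectors
  set f := LinearMap.toContinuousLinearMap (Matrix.toEuclideanLin M) with hf
  obtain ⟨V, hVmem, hVmax⟩ := (isCompact_sphere (0 : EuclideanSpace ℂ (Fin q)) 1).exists_isMaxOn
    (NormedSpace.sphere_nonempty.2 zero_le_one) f.continuous.norm.continuousOn
  have hVn : ‖V‖ = 1 := mem_sphere_zero_iff_norm.mp hVmem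
  have hfV : ‖f V‖ = sigmaMax M := by
    refine le_antisymm (f.unit_le_opNorm V hVn.le) ?_
    apply ContinuousLinearMap.opNorm_le_bound _ (norm_nonneg _)
    intro x
    rcases eq_or_ne x 0 with rfl | hx
    · simp
    · have hx' : ‖x‖ ≠ 0 := norm_ne_zero_iff.2 hx
      have h1 : ‖(‖x‖⁻¹ : ℝ) • x‖ = 1 := by
        rw [norm_smul, Real.norm_eq_abs, abs_of_nonneg (inv_nonneg.2 (norm_nonneg x)),
          inv_mul_cancel₀ hx']
      have h2 : ‖f ((‖x‖⁻¹ : ℝ) • x)‖ ≤ ‖f V‖ := hVmax (mem_sphere_zero_iff_norm.mpr h1)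
      rw [ContinuousLinearMap.map_smul_of_tower, norm_smul, Real.norm_eq_abs,
        abs_of_nonneg (inv_nonneg.2 (norm_nonneg x))] at h2
      have h3 := mul_le_mul_of_nonneg_right h2 (norm_nonneg x)
      rwa [mul_comm (‖x‖⁻¹) _, mul_assoc, inv_mul_cancel₀ hx', mul_one] at h3
  set v : Fin q → ℂ := WithLp.equiv 2 (Fin q → ℂ) V with hvdef
  set u : Fin p → ℂ := (((sigmaMax M : ℝ) : ℂ))⁻¹ • M *ᵥ v with hudef
  have hUeq : (WithLp.equiv 2 (Fin p → ℂ)).symm u = (((sigmaMax M : ℝ) : ℂ))⁻¹ • f V := rfl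
  have hUnorm : ‖(WithLp.equiv 2 (Fin p → ℂ)).symm u‖ = 1 := by
    rw [hUeq, norm_smul, hfV]
    simp [abs_of_nonneg hσ.le, inv_mul_cancel₀ hσ.ne']
  have hu : star u ⬝ᵥ u = 1 := dot_eq_one_of_norm hUnorm
  have hv : star v ⬝ᵥ v = 1 := by
    apply dot_eq_one_of_norm
    rw [hvdef]
    simpa using hVn
  have huv : M.mulVec v = ((sigmaMax M : ℝ) : ℂ) • u := by
    rw [hudef, smul_smul, mul_inv_cancel₀ hσC, one_smul]
  have hu0 : u ≠ 0 := by
    intro h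
    rw [h] at hu
    simp at hu
  have hv0 : v ≠ 0 := by
    intro h
    rw [h] at hv
    simp at hv
  have hkey := key hM u v hu hv huv
  have hdet : ((1 : Matrix (Fin p) (Fin p) ℂ) -
      M * ((((sigmaMax M : ℝ) : ℂ))⁻¹ • Matrix.vecMulVec v (star u))).det = 0 :=
    (Matrix.exists_mulVec_eq_zero_iff).mp ⟨u, hu0, hkey.1⟩
  refine ⟨⟨(((sigmaMax M : ℝ) : ℂ))⁻¹ • Matrix.vecMulVec v (star u),
      rank_smul_vecMulVec (inv_ne_zero hσC) hu hv0, hkey.2, hdet⟩,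
    fun u' v' hu' hv' huv' => key hM u' v' hu' hv' huv', fun h1 => ?_⟩
  exact ⟨(((sigmaMax M : ℝ) : ℂ))⁻¹ • Matrix.vecMulVec v (star u),
    by rw [hkey.2]; exact inv_le_one_of_one_le₀ h1, hdet⟩
end
end
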